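/- arXiv:0904.0441 — 8 statements merged into one kernel-verified Lean document; each statement's English description precedes it below -/
import Mathlib

section
/- Let B be a non-degenerate bilinear form on F_q^d with d ≥ 2, and λ ∈ F_q*. The product graph with vertex set F_q^d \ {0}, where vertices a, b are adjacent iff B(a,b) = λ, is q^{d-1}-regular on q^d - 1 vertices, and every eigenvalue of its adjacency matrix other than q^{d-1} has absolute value less than √(2 q^{d-1}). -/
open Finset

lemma aux_fiber {F M : Type*} [Field F] [Fintype F] [AddCommGroup M] [Module F M] [Finite M]
    (f : M →ₗ[F] F) (hf : f ≠ 0) (μ : F) :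
    Fintype.card F * Nat.card {c : M // f c = μ} = Nat.card M := by
  have hsurj : Function.Surjective f := LinearMap.surjective_of_ne_zero hf
  obtain ⟨c0, hc0⟩ := hsurj μ
  have e1 : {c : M // f c = μ} ≃ LinearMap.ker f := by
    refine ⟨fun c => ⟨c.1 - c0, by simp [LinearMap.mem_ker, c.2, hc0]⟩,
      fun k => ⟨c0 + k.1, by have := k.2; simp [LinearMap.mem_ker] at this; simp [this, hc0]⟩,
      fun c => by simp, fun k => by simp⟩
  rw [Nat.card_congr e1, Submodule.card_eq_card_quotient_mul_card (LinearMap.ker f),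
    Nat.card_congr (f.quotKerEquivOfSurjective hsurj).toEquiv,
    Nat.card_eq_fintype_card (α := F), mul_comm]

lemma aux_pair {F M : Type*} [Field F] [Fintype F] [AddCommGroup M] [Module F M] [Finite M]
    (B : LinearMap.BilinForm F M) (hB : B.Nondegenerate)
    (a b : M) (ha : a ≠ 0) (hb : ∀ t : F, b ≠ t • a) (μ ν : F) :
    Fintype.card F * (Fintype.card F * Nat.card {c : M // B a c = μ ∧ B b c = ν})
      = Nat.card M := by
  have hBa : B a ≠ 0 := by
    intro h
    exact ha (hB.1 a (fun n => by rw [h]; rfl))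
  set K := LinearMap.ker (B a) with hK
  set g : K →ₗ[F] F := (B b).comp K.subtype with hg
  have hgne : g ≠ 0 := by
    intro h
    -- then b is a multiple of a
    obtain ⟨x, hx⟩ := LinearMap.surjective_of_ne_zero hBa 1
    have key : ∀ n, B b n = B b x * B a n := by
      intro n
      have hk : n - (B a n) • x ∈ K := by
        simp [hK, LinearMap.mem_ker, hx, mul_comm]
      have : g ⟨n - (B a n) • x, hk⟩ = 0 := by rw [h]; rfl
      simp only [hg, LinearMap.comp_apply, Submodule.subtype_apply, map_sub, map_smul,
        smul_eq_mul] at this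
      linear_combination this
    have h0 : b - (B b x) • a = 0 := by
      apply hB.1
      intro n
      simp only [map_sub, map_smul, LinearMap.sub_apply, LinearMap.smul_apply, smul_eq_mul]
      rw [key n]; ring
    exact hb (B b x) (by rwa [sub_eq_zero] at h0)
  obtain ⟨c0, hc0⟩ := LinearMap.surjective_of_ne_zero hBa μ
  have e1 : {c : M // B a c = μ ∧ B b c = ν} ≃ {k : K // g k = ν - B b c0} := by
    refine ⟨fun c => ⟨⟨c.1 - c0, by simp [hK, LinearMap.mem_ker, c.2.1, hc0]⟩,
        by simp [hg, c.2.2]⟩,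
      fun k => ⟨c0 + k.1.1, ?_, ?_⟩, fun c => Subtype.ext (by simp),
      fun k => Subtype.ext (Subtype.ext (by simp))⟩
    · have := k.1.2
      simp [hK, LinearMap.mem_ker] at this
      simp [this, hc0]
    · have := k.2
      simp [hg] at this
      simp [this]
  have e2 : (K : Type _) ≃ {c : M // B a c = 0} :=
    Equiv.subtypeEquivRight (fun c => by simp [hK, LinearMap.mem_ker])
  rw [Nat.card_congr e1, aux_fiber g hgne, Nat.card_congr e2, aux_fiber (B a) hBa 0]

set_option maxHeartbeats 1000000 in
theorem stmt5 (F : Type) [Field F] [Fintype F] [DecidableEq F]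
    (hodd : Odd (Fintype.card F))
    (d : ℕ) (hd : 2 ≤ d)
    (B : LinearMap.BilinForm F (Fin d → F))
    (hB : B.Nondegenerate)
    (hsymm : ∀ x y, B x y = B y x)
    (lam : F) (hlam : lam ≠ 0) :
    Fintype.card {v : Fin d → F // v ≠ 0} = Fintype.card F ^ d - 1 ∧
    (∀ a : {v : Fin d → F // v ≠ 0},
      (Finset.univ.filter
          (fun b : {v : Fin d → F // v ≠ 0} => B a.1 b.1 = lam)).card
        = Fintype.card F ^ (d - 1)) ∧
    ∀ μ : ℝ, Module.End.HasEigenvalue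
        (Matrix.toLin' (Matrix.of (fun a b : {v : Fin d → F // v ≠ 0} =>
          if B a.1 b.1 = lam then (1 : ℝ) else 0))) μ →
      μ ≠ (Fintype.card F : ℝ) ^ (d - 1) →
      |μ| < Real.sqrt (2 * (Fintype.card F : ℝ) ^ (d - 1)) := by
  obtain ⟨e, rfl⟩ : ∃ e, d = e + 2 := ⟨d - 2, by omega⟩
  set q := Fintype.card F with hq
  have hq3 : 3 ≤ q := by
    obtain ⟨k, hk⟩ := hodd
    have h2 : 1 < q := Fintype.one_lt_card
    omega
  have hq0 : 0 < q := by omega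
  have hMcard : Nat.card (Fin (e + 2) → F) = q ^ (e + 2) := by
    simp [Nat.card_eq_fintype_card, hq]
  -- count for a single nonzero vector and arbitrary target value
  have count1 : ∀ a : Fin (e + 2) → F, a ≠ 0 → ∀ ν : F,
      q * Nat.card {c : Fin (e + 2) → F // B a c = ν} = q ^ (e + 2) := by
    intro a ha ν
    rw [← hMcard]
    apply aux_fiber
    intro h
    exact ha (hB.1 a (fun n => by rw [h]; rfl))
  have count2 : ∀ a b : Fin (e + 2) → F, a ≠ 0 → (∀ t : F, b ≠ t • a) → ∀ μ ν : F,
      q * (q * Nat.card {c : Fin (e + 2) → F // B a c = μ ∧ B b c = ν}) = q ^ (e + 2) := by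
    intro a b ha hb μ ν
    rw [← hMcard]
    exact aux_pair B hB a b ha hb μ ν
  -- part 1
  have part1 : Fintype.card {v : Fin (e + 2) → F // v ≠ 0} = q ^ (e + 2) - 1 := by
    have : Fintype.card {v : Fin (e + 2) → F // v ≠ 0}
        = Fintype.card (Fin (e + 2) → F) - 1 := Set.card_ne_eq 0
    simpa [hq] using this
  -- part 2
  have hVeq : ∀ (a : Fin (e + 2) → F), ∀ ν : F, ν ≠ 0 →
      Nat.card {b : {v : Fin (e + 2) → F // v ≠ 0} // B a b.1 = ν}
        = Nat.card {c : Fin (e + 2) → F // B a c = ν} := by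
    intro a ν hν
    apply Nat.card_congr
    refine ⟨fun b => ⟨b.1.1, b.2⟩, fun c => ⟨⟨c.1, ?_⟩, c.2⟩, fun b => rfl, fun c => rfl⟩
    intro h0
    apply hν
    rw [← c.2, h0, map_zero]
  have part2 : ∀ a : {v : Fin (e + 2) → F // v ≠ 0},
      (Finset.univ.filter
          (fun b : {v : Fin (e + 2) → F // v ≠ 0} => B a.1 b.1 = lam)).card
        = q ^ (e + 1) := by
    intro a
    have h1 : (Finset.univ.filter
          (fun b : {v : Fin (e + 2) → F // v ≠ 0} => B a.1 b.1 = lam)).card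
        = Nat.card {b : {v : Fin (e + 2) → F // v ≠ 0} // B a.1 b.1 = lam} := by
      rw [Nat.card_eq_fintype_card, Fintype.card_subtype]
    rw [h1, hVeq a.1 lam hlam]
    have h2 := count1 a.1 a.2 lam
    have h3 : q * q ^ (e + 1) = q ^ (e + 2) := by ring
    exact Nat.eq_of_mul_eq_mul_left hq0 (h2.trans h3.symm)
  refine ⟨part1, part2, ?_⟩
  -- part 3
  intro μ hμ hne
  set V := {v : Fin (e + 2) → F // v ≠ 0}
  set A : Matrix V V ℝ := Matrix.of (fun a b : V =>
          if B a.1 b.1 = lam then (1 : ℝ) else 0) with hA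
  obtain ⟨v, hv⟩ := hμ.exists_hasEigenvector
  have hv0 : v ≠ 0 := hv.right
  have hAv : ∀ x : V, ∑ b : V, A x b * v b = μ * v x := by
    intro x
    have h := congrFun hv.apply_eq_smul x
    rw [Matrix.toLin'_apply] at h
    simpa [Matrix.mulVec, dotProduct] using h
  have hsymA : ∀ x y : V, A x y = A y x := by
    intro x y; simp only [hA, Matrix.of_apply, hsymm x.1 y.1]
  have hrow : ∀ x : V, ∑ b : V, A x b = (q : ℝ) ^ (e + 1) := by
    intro x
    rw [show ((q : ℝ)) ^ (e + 1) = ((q ^ (e + 1) : ℕ) : ℝ) by push_cast; ring, ← part2 x]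
    simp [hA, Finset.sum_boole]
    convert rfl
  -- sum of eigenvector entries is zero
  have hrne : μ ≠ (q : ℝ) ^ (e + 1) := by
    intro h; exact hne (by rw [h]; norm_num)
  have hS : ∑ x : V, v x = 0 := by
    have h1 : ∑ x : V, ∑ b : V, A x b * v b = μ * ∑ x : V, v x := by
      rw [Finset.mul_sum]
      exact Finset.sum_congr rfl (fun x _ => hAv x)
    have h2 : ∑ x : V, ∑ b : V, A x b * v b = (q : ℝ) ^ (e + 1) * ∑ x : V, v x := by
      rw [Finset.sum_comm, Finset.mul_sum]
      refine Finset.sum_congr rfl (fun b _ => ?_)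
      rw [← Finset.sum_mul]
      congr 1
      rw [← hrow b]
      exact Finset.sum_congr rfl (fun x _ => hsymA x b)
    have h3 : (μ - (q : ℝ) ^ (e + 1)) * ∑ x : V, v x = 0 := by
      rw [sub_mul, ← h1, ← h2, sub_self]
    rcases mul_eq_zero.1 h3 with h | h
    · exact absurd (by linarith [sub_eq_zero.1 h] : μ = (q : ℝ) ^ (e + 1)) hrne
    · exact h
  -- values of the squared adjacency matrix
  have hWval : ∀ x b : V,
      ∑ c : V, A x c * A c b =
        if ∃ t : F, b.1 = t • x.1 then (if b = x then (q : ℝ) ^ (e + 1) else 0)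
        else (q : ℝ) ^ e := by
    intro x b
    have hstep : ∀ c : V, A x c * A c b
        = if B x.1 c.1 = lam ∧ B b.1 c.1 = lam then (1 : ℝ) else 0 := by
      intro c
      simp only [hA, Matrix.of_apply]
      rw [show (B c.1) b.1 = (B b.1) c.1 from hsymm c.1 b.1]
      by_cases h1 : B x.1 c.1 = lam <;> by_cases h2 : B b.1 c.1 = lam <;> simp [h1, h2]
    rw [Finset.sum_congr rfl (fun c _ => hstep c), Finset.sum_boole]
    by_cases hP : ∃ t : F, b.1 = t • x.1
    · rw [if_pos hP]
      by_cases hbx : b = x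
      · subst hbx
        rw [if_pos rfl]
        have heq : (filter (fun c : V => B b.1 c.1 = lam ∧ B b.1 c.1 = lam) univ)
            = (filter (fun c : V => B b.1 c.1 = lam) univ) := by
          apply Finset.filter_congr
          intro c _
          simp [and_self]
        rw [heq, part2 b]
        push_cast
        ring
      · rw [if_neg hbx]
        obtain ⟨t, ht⟩ := hP
        have ht1 : t ≠ 1 := by
          rintro rfl
          exact hbx (Subtype.ext (by simp [ht]))
        have hemp : (filter (fun c : V => B x.1 c.1 = lam ∧ B b.1 c.1 = lam) univ) = ∅ := by
          rw [Finset.filter_eq_empty_iff]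
          rintro c -
          rintro ⟨h1, h2⟩
          rw [ht] at h2
          have h3 : (B (t • x.1)) c.1 = t * lam := by
            rw [map_smul]
            simp [h1]
          have h4 : t * lam = lam := by rw [← h3, h2]
          exact ht1 (mul_right_cancel₀ hlam (by rw [h4, one_mul]))
        rw [hemp]
        simp
    · rw [if_neg hP]
      push_neg at hP
      have h1 : (filter (fun c : V => B x.1 c.1 = lam ∧ B b.1 c.1 = lam) univ).card
          = Nat.card {c' : V // B x.1 c'.1 = lam ∧ B b.1 c'.1 = lam} := by
        rw [Nat.card_eq_fintype_card, Fintype.card_subtype]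
      have h2 : Nat.card {c' : V // B x.1 c'.1 = lam ∧ B b.1 c'.1 = lam}
          = Nat.card {c : Fin (e + 2) → F // B x.1 c = lam ∧ B b.1 c = lam} := by
        apply Nat.card_congr
        refine ⟨fun c => ⟨c.1.1, c.2⟩, fun c => ⟨⟨c.1, ?_⟩, c.2⟩, fun c => rfl, fun c => rfl⟩
        intro h0
        apply hlam
        rw [← c.2.1, h0, map_zero]
      have h3 := count2 x.1 b.1 x.2 hP lam lam
      have h4 : q * (q * q ^ e) = q ^ (e + 2) := by ring
      have h5 : Nat.card {c : Fin (e + 2) → F // B x.1 c = lam ∧ B b.1 c = lam} = q ^ e :=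
        Nat.eq_of_mul_eq_mul_left hq0 (Nat.eq_of_mul_eq_mul_left hq0 (h3.trans h4.symm))
      rw [h1, h2, h5]
      push_cast
      ring
  -- the squared eigenvalue equation
  have hA2 : ∀ x : V, ∑ b : V, (∑ c : V, A x c * A c b) * v b = μ ^ 2 * v x := by
    intro x
    have h1 : ∑ b : V, (∑ c : V, A x c * A c b) * v b
        = ∑ c : V, A x c * (∑ b : V, A c b * v b) := by
      calc ∑ b : V, (∑ c : V, A x c * A c b) * v b
          = ∑ b : V, ∑ c : V, A x c * A c b * v b :=
            Finset.sum_congr rfl (fun b _ => Finset.sum_mul _ _ _)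
        _ = ∑ c : V, ∑ b : V, A x c * A c b * v b := Finset.sum_comm
        _ = ∑ c : V, A x c * (∑ b : V, A c b * v b) := by
            refine Finset.sum_congr rfl (fun c _ => ?_)
            rw [Finset.mul_sum]
            exact Finset.sum_congr rfl (fun b _ => by ring)
    rw [h1]
    have h2 : ∀ c : V, A x c * (∑ b : V, A c b * v b) = μ * (A x c * v c) := by
      intro c
      rw [hAv c]
      ring
    rw [Finset.sum_congr rfl (fun c _ => h2 c), ← Finset.mul_sum, hAv x]
    ring
  -- pick a coordinate of maximal absolute value
  obtain ⟨x0, hx00⟩ : ∃ x : V, v x ≠ 0 := Function.ne_iff.1 hv0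
  obtain ⟨a0, -, ha0max⟩ := Finset.exists_max_image Finset.univ (fun x : V => |v x|)
    ⟨x0, Finset.mem_univ x0⟩
  have ha0max' : ∀ b : V, |v b| ≤ |v a0| := fun b => ha0max b (Finset.mem_univ b)
  have hva0 : 0 < |v a0| := lt_of_lt_of_le (abs_pos.2 hx00) (ha0max' x0)
  set L : Finset V := Finset.univ.filter (fun b : V => ∃ t : F, b.1 = t • a0.1) with hL
  have ha0L : a0 ∈ L := by
    simp only [hL, Finset.mem_filter, Finset.mem_univ, true_and]
    exact ⟨1, (one_smul F a0.1).symm⟩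
  have hLcard : L.card = q - 1 := by
    have hbij : Function.Bijective (fun t : {t : F // t ≠ 0} =>
        (⟨⟨t.1 • a0.1, smul_ne_zero t.2 a0.2⟩, ⟨t.1, rfl⟩⟩ :
          {b : V // ∃ s : F, b.1 = s • a0.1})) := by
      constructor
      · rintro ⟨t, ht⟩ ⟨s, hs⟩ h
        have h' : t • a0.1 = s • a0.1 := congrArg (fun z => z.1.1) h
        have h0 : (t - s) • a0.1 = 0 := by rw [sub_smul, h', sub_self]
        rcases smul_eq_zero.1 h0 with h0 | h0
        · exact Subtype.ext (sub_eq_zero.1 h0)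
        · exact absurd h0 a0.2
      · rintro ⟨b, t, ht⟩
        have ht0 : t ≠ 0 := by
          rintro rfl
          exact b.2 (by simp [ht])
        exact ⟨⟨t, ht0⟩, Subtype.ext (Subtype.ext ht.symm)⟩
    have h1 : Fintype.card {b : V // ∃ s : F, b.1 = s • a0.1} = L.card :=
      Fintype.card_subtype _
    rw [← h1, ← Fintype.card_of_bijective hbij]
    exact Set.card_ne_eq 0
  set f : V → ℝ := fun b => ((if b = a0 then (q : ℝ) ^ (e + 1) else 0) - (q : ℝ) ^ e) with hf
  have hdecomp : μ ^ 2 * v a0 = ∑ b ∈ L, f b * v b := by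
    rw [← hA2 a0]
    have h1 : ∀ b : V, (∑ c : V, A a0 c * A c b) * v b
        = (q : ℝ) ^ e * v b +
          ((if ∃ t : F, b.1 = t • a0.1 then (if b = a0 then (q : ℝ) ^ (e + 1) else 0)
            else (q : ℝ) ^ e) - (q : ℝ) ^ e) * v b := by
      intro b
      rw [hWval a0 b]
      ring
    rw [Finset.sum_congr rfl (fun b _ => h1 b), Finset.sum_add_distrib, ← Finset.mul_sum,
      hS, mul_zero, zero_add]
    rw [← Finset.sum_subset (Finset.subset_univ L) (fun b _ hbL => ?_)]
    · refine Finset.sum_congr rfl (fun b hbL => ?_)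
      rw [if_pos (Finset.mem_filter.1 hbL).2]
    · have hnb : ¬ ∃ t : F, b.1 = t • a0.1 := by
        intro h
        exact hbL (Finset.mem_filter.2 ⟨Finset.mem_univ b, h⟩)
      rw [if_neg hnb]
      ring
  have hq1 : (1 : ℝ) ≤ (q : ℝ) := by
    have h : (1 : ℕ) ≤ q := by omega
    exact_mod_cast h
  have hqe_pos : (0 : ℝ) < (q : ℝ) ^ e := pow_pos (by linarith) e
  have hqle : (q : ℝ) ^ e ≤ (q : ℝ) ^ (e + 1) := pow_le_pow_right₀ hq1 (by omega)
  have hf_a0 : |f a0| = (q : ℝ) ^ (e + 1) - (q : ℝ) ^ e := by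
    simp only [hf, if_pos rfl, if_true]
    exact abs_of_nonneg (by linarith)
  have hf_b : ∀ b : V, b ≠ a0 → |f b| = (q : ℝ) ^ e := by
    intro b hb
    simp only [hf, if_neg hb, zero_sub, abs_neg]
    exact abs_of_nonneg (le_of_lt hqe_pos)
  have hcarderase : ((L.erase a0).card : ℝ) = (q : ℝ) - 2 := by
    rw [Finset.card_erase_of_mem ha0L, hLcard]
    have : q - 1 - 1 = q - 2 := by omega
    rw [this, Nat.cast_sub (by omega)]
    norm_num
  have hbound : μ ^ 2 * |v a0| ≤ (2 * (q : ℝ) ^ (e + 1) - 3 * (q : ℝ) ^ e) * |v a0| := by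
    have h1 : μ ^ 2 * |v a0| = |μ ^ 2 * v a0| := by
      rw [abs_mul, abs_of_nonneg (sq_nonneg μ)]
    rw [h1, hdecomp]
    calc |∑ b ∈ L, f b * v b| ≤ ∑ b ∈ L, |f b| * |v b| := by
          refine (Finset.abs_sum_le_sum_abs _ _).trans (le_of_eq ?_)
          exact Finset.sum_congr rfl (fun b _ => abs_mul _ _)
      _ = |f a0| * |v a0| + ∑ b ∈ L.erase a0, |f b| * |v b| :=
          (Finset.add_sum_erase L _ ha0L).symm
      _ ≤ |f a0| * |v a0| + ∑ b ∈ L.erase a0, (q : ℝ) ^ e * |v a0| := by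
          refine add_le_add_right (Finset.sum_le_sum (fun b hb => ?_)) _
          rw [hf_b b (Finset.ne_of_mem_erase hb)]
          exact mul_le_mul_of_nonneg_left (ha0max' b) (le_of_lt hqe_pos)
      _ = ((q : ℝ) ^ (e + 1) - (q : ℝ) ^ e) * |v a0|
            + ((q : ℝ) - 2) * ((q : ℝ) ^ e * |v a0|) := by
          rw [hf_a0, Finset.sum_const, nsmul_eq_mul, hcarderase]
      _ = (2 * (q : ℝ) ^ (e + 1) - 3 * (q : ℝ) ^ e) * |v a0| := by
          ring
  have hμ2 : μ ^ 2 ≤ 2 * (q : ℝ) ^ (e + 1) - 3 * (q : ℝ) ^ e :=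
    le_of_mul_le_mul_right hbound hva0
  have hfin : μ ^ 2 < 2 * (q : ℝ) ^ (e + 1) := by linarith
  rw [show e + 2 - 1 = e + 1 from rfl]
  rw [Real.lt_sqrt (abs_nonneg μ), sq_abs]
  exact hfin
end

section
/- Let B be a non-degenerate bilinear form on F_q^d with d ≥ 2. If E, F ⊆ F_q^d satisfy |E||F| ≥ q^{d+1}, then every λ ∈ F_q* can be written as λ = B(x,y) with x ∈ E and y ∈ F; that is, F_q* ⊆ B(E,F). -/
open Finset

section Aux

variable {F : Type} [Field F] [Fintype F] [DecidableEq F]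

/-- A nonempty fiber of a linear map has the cardinality of the kernel. -/
lemma fiber_card_eq_ker {V W : Type} [AddCommGroup V] [Module F V] [Fintype V] [DecidableEq V]
    [AddCommGroup W] [Module F W] [DecidableEq W]
    (g : V →ₗ[F] W) {c : W} {x0 : V} (hx0 : g x0 = c) :
    (Finset.univ.filter fun x => g x = c).card = Nat.card (LinearMap.ker g) := by
  rw [← Fintype.card_subtype, ← Nat.card_eq_fintype_card]
  refine Nat.card_congr ⟨fun x => ⟨x.1 - x0, ?_⟩, fun y => ⟨y.1 + x0, ?_⟩, ?_, ?_⟩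
  · simp [LinearMap.mem_ker, map_sub, x.2, hx0]
  · have := y.2
    simp only [LinearMap.mem_ker] at this
    simp [map_add, this, hx0]
  · intro x; ext; simp
  · intro y; ext; simp

/-- Fibers of a linear map are at most the size of the kernel. -/
lemma fiber_card_le_ker {V W : Type} [AddCommGroup V] [Module F V] [Fintype V] [DecidableEq V]
    [AddCommGroup W] [Module F W] [DecidableEq W]
    (g : V →ₗ[F] W) (c : W) :
    (Finset.univ.filter fun x => g x = c).card ≤ Nat.card (LinearMap.ker g) := by
  rcases (Finset.univ.filter fun x => g x = c).eq_empty_or_nonempty with h | ⟨x0, hx0⟩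
  · simp [h]
  · simp only [Finset.mem_filter] at hx0
    exact le_of_eq (fiber_card_eq_ker g hx0.2)

end Aux

section Aux2
set_option linter.unusedSectionVars false

variable {F : Type} [Field F] [Fintype F] [DecidableEq F] {d : ℕ}

lemma finrank_ker_of_ne_zero (f : (Fin d → F) →ₗ[F] F) (hf : f ≠ 0) :
    Module.finrank F (LinearMap.ker f) = d - 1 := by
  have hrange : LinearMap.range f = ⊤ := by
    rcases (DFunLike.ne_iff.1 hf) with ⟨x1, hx1⟩
    simp only [LinearMap.zero_apply] at hx1
    rw [LinearMap.range_eq_top]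
    intro c
    exact ⟨(c * (f x1)⁻¹) • x1, by
      simp [map_smul, smul_eq_mul, mul_assoc, inv_mul_cancel₀ hx1]⟩
  have hr : Module.finrank F (LinearMap.range f) = 1 := by
    rw [hrange, finrank_top, Module.finrank_self]
  have hsum := LinearMap.finrank_range_add_finrank_ker f
  rw [hr, Module.finrank_fin_fun] at hsum
  omega

lemma ker_card_of_ne_zero (f : (Fin d → F) →ₗ[F] F) (hf : f ≠ 0) :
    Nat.card (LinearMap.ker f) = Fintype.card F ^ (d - 1) := by
  haveI : Fintype (LinearMap.ker f) := Fintype.ofFinite _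
  rw [Nat.card_eq_fintype_card, Module.card_eq_pow_finrank (K := F), finrank_ker_of_ne_zero f hf]

lemma functional_fiber_card (f : (Fin d → F) →ₗ[F] F) (hf : f ≠ 0) (c : F) :
    (Finset.univ.filter fun x => f x = c).card = Fintype.card F ^ (d - 1) := by
  rcases (DFunLike.ne_iff.1 hf) with ⟨x1, hx1⟩
  simp only [LinearMap.zero_apply] at hx1
  have hx0 : f ((c * (f x1)⁻¹) • x1) = c := by
    simp [map_smul, smul_eq_mul, mul_assoc, inv_mul_cancel₀ hx1]
  rw [fiber_card_eq_ker f hx0, ker_card_of_ne_zero f hf]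

end Aux2

section Aux3
set_option linter.unusedSectionVars false

variable {F : Type} [Field F] [Fintype F] [DecidableEq F] {d : ℕ}

lemma pair_fiber_card_le (f f' : (Fin d → F) →ₗ[F] F)
    (hf : f ≠ 0) (hff' : f ≠ f') {lam : F} (hlam : lam ≠ 0) :
    (Finset.univ.filter fun x => f x = lam ∧ f' x = lam).card ≤ Fintype.card F ^ (d - 2) := by
  rcases (Finset.univ.filter fun x : Fin d → F => f x = lam ∧ f' x = lam).eq_empty_or_nonempty
    with h | ⟨x0, hx0⟩
  · simp [h]
  simp only [Finset.mem_filter, Finset.mem_univ, true_and] at hx0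
  -- the kernel of f is not contained in the kernel of f'
  have hker : ¬ (LinearMap.ker f ≤ LinearMap.ker f') := by
    intro hle
    rcases (DFunLike.ne_iff.1 hf) with ⟨x1, hx1⟩
    simp only [LinearMap.zero_apply] at hx1
    set u : Fin d → F := (f x1)⁻¹ • x1 with hu
    have hfu : f u = 1 := by simp [hu, map_smul, smul_eq_mul, inv_mul_cancel₀ hx1]
    have hsmul : f' = (f' u) • f := by
      refine LinearMap.ext fun x => ?_
      have hmem : x - (f x) • u ∈ LinearMap.ker f := by
        simp [LinearMap.mem_ker, map_sub, map_smul, hfu, smul_eq_mul]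
      have := hle hmem
      simp only [LinearMap.mem_ker, map_sub, map_smul, smul_eq_mul, sub_eq_zero] at this
      simp [this, smul_eq_mul, mul_comm]
    have hc : f' u = 1 := by
      have h1 : f' x0 = (f' u) * f x0 := by
        conv_lhs => rw [hsmul]
        simp [smul_eq_mul]
      rw [hx0.1, hx0.2] at h1
      have h2 : (f' u) * lam = 1 * lam := by rw [← h1, one_mul]
      exact mul_right_cancel₀ hlam h2
    rw [hc, one_smul] at hsmul
    exact hff' hsmul.symm
  -- hence ker f ⊓ ker f' is a proper subspace of ker f
  have hlt : LinearMap.ker f ⊓ LinearMap.ker f' < LinearMap.ker f :=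
    lt_of_le_of_ne inf_le_left (fun h => hker (by rw [← h]; exact inf_le_right))
  have hfr : Module.finrank F ↥(LinearMap.ker f ⊓ LinearMap.ker f') ≤ d - 2 := by
    have h1 := Submodule.finrank_lt_finrank_of_lt hlt
    have h2 := finrank_ker_of_ne_zero f hf
    omega
  -- bound the fiber via an injection into the kernel intersection
  have hle : (Finset.univ.filter fun x => f x = lam ∧ f' x = lam).card
      ≤ Nat.card ↥(LinearMap.ker f ⊓ LinearMap.ker f') := by
    rw [← Fintype.card_subtype, ← Nat.card_eq_fintype_card]
    refine Nat.card_le_card_of_injective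
      (fun x => (⟨x.1 - x0, ?_⟩ : ↥(LinearMap.ker f ⊓ LinearMap.ker f'))) ?_
    · have := x.2
      simp [Submodule.mem_inf, LinearMap.mem_ker, map_sub, this.1, this.2, hx0.1, hx0.2]
    · intro x y hxy
      simp only [Subtype.mk.injEq, sub_left_injective.eq_iff] at hxy
      exact Subtype.ext (by exact_mod_cast hxy)
  refine hle.trans ?_
  haveI : Fintype ↥(LinearMap.ker f ⊓ LinearMap.ker f') := Fintype.ofFinite _
  rw [Nat.card_eq_fintype_card, Module.card_eq_pow_finrank (K := F)]
  exact Nat.pow_le_pow_right Fintype.card_pos hfr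

end Aux3

section Key
set_option linter.unusedSectionVars false
set_option maxHeartbeats 1000000

variable {F : Type} [Field F] [Fintype F] [DecidableEq F]

lemma key_count {d : ℕ} (hd : 2 ≤ d)
    (B : LinearMap.BilinForm F (Fin d → F))
    (hBf : ∀ y : Fin d → F, (∀ x, B x y = 0) → y = 0)
    {lam : F} (hlam : lam ≠ 0)
    (E F' : Finset (Fin d → F))
    (hno : ∀ x ∈ E, ∀ y ∈ F', B x y ≠ lam) :
    E.card * (F'.erase 0).card ≤ Fintype.card F ^ d * (Fintype.card F - 1) := by
  obtain ⟨e, rfl⟩ : ∃ e, d = e + 2 := ⟨d - 2, by omega⟩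
  set q := Fintype.card F with hq
  have hq2 : 2 ≤ q := Fintype.one_lt_card
  set F'' := F'.erase 0 with hF''
  set b := F''.card with hb
  rcases Nat.eq_zero_or_pos b with hb0 | hbpos
  · rw [hb0, Nat.mul_zero]; exact Nat.zero_le _
  set S : (Fin (e+2) → F) → ℕ := fun x => (F''.filter fun y => B x y = lam).card with hS
  have hcardS : ∀ x, S x = ∑ y ∈ F'', if B x y = lam then 1 else 0 := fun x =>
    Finset.card_filter _ _
  -- each functional B · y is nonzero for y ∈ F''
  have hfny : ∀ y ∈ F'', B.flip y ≠ 0 := by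
    intro y hy h0
    exact (Finset.mem_erase.1 hy).1 (hBf y fun x => by simpa using DFunLike.congr_fun h0 x)
  -- Step A: total count
  have stepA : ∑ x : Fin (e+2) → F, S x = b * q ^ (e+1) := by
    calc ∑ x : Fin (e+2) → F, S x
        = ∑ x : Fin (e+2) → F, ∑ y ∈ F'', if B x y = lam then 1 else 0 :=
          Finset.sum_congr rfl fun x _ => hcardS x
      _ = ∑ y ∈ F'', ∑ x : Fin (e+2) → F, if B x y = lam then 1 else 0 := Finset.sum_comm
      _ = ∑ y ∈ F'', (Finset.univ.filter fun x => B.flip y x = lam).card := by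
          refine Finset.sum_congr rfl fun y _ => ?_
          rw [Finset.card_filter]
          exact Finset.sum_congr rfl fun x _ => rfl
      _ = ∑ y ∈ F'', q ^ (e+1) := by
          refine Finset.sum_congr rfl fun y hy => ?_
          simpa using functional_fiber_card (B.flip y) (hfny y hy) lam
      _ = b * q ^ (e+1) := by rw [Finset.sum_const, smul_eq_mul]
  -- the pair-counting quantity
  set N : (Fin (e+2) → F) → (Fin (e+2) → F) → ℕ := fun y y' =>
    (Finset.univ.filter fun x => B x y = lam ∧ B x y' = lam).card with hN
  -- Step B: second moment
  have stepB : ∑ x : Fin (e+2) → F, S x * S x = ∑ y ∈ F'', ∑ y' ∈ F'', N y y' := by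
    calc ∑ x : Fin (e+2) → F, S x * S x
        = ∑ x : Fin (e+2) → F, ∑ y ∈ F'', ∑ y' ∈ F'',
            (if B x y = lam then 1 else 0) * (if B x y' = lam then 1 else 0) := by
          refine Finset.sum_congr rfl fun x _ => ?_
          rw [hcardS x, Finset.sum_mul_sum]
      _ = ∑ y ∈ F'', ∑ x : Fin (e+2) → F, ∑ y' ∈ F'',
            (if B x y = lam then 1 else 0) * (if B x y' = lam then 1 else 0) :=
          Finset.sum_comm
      _ = ∑ y ∈ F'', ∑ y' ∈ F'', ∑ x : Fin (e+2) → F,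
            (if B x y = lam then 1 else 0) * (if B x y' = lam then 1 else 0) :=
          Finset.sum_congr rfl fun y _ => Finset.sum_comm
      _ = ∑ y ∈ F'', ∑ y' ∈ F'', N y y' := by
          refine Finset.sum_congr rfl fun y _ => Finset.sum_congr rfl fun y' _ => ?_
          simp only [hN]
          rw [Finset.card_filter]
          refine Finset.sum_congr rfl fun x _ => ?_
          by_cases h1 : B x y = lam <;> by_cases h2 : B x y' = lam <;> simp [h1, h2]
  have hNdiag : ∀ y ∈ F'', N y y ≤ q ^ (e+1) := by
    intro y hy
    have h1 : N y y = (Finset.univ.filter fun x => B.flip y x = lam).card := by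
      rw [hN]
      exact congrArg Finset.card (Finset.filter_congr fun x _ => by
        simp [LinearMap.flip_apply])
    rw [h1]
    simpa using (functional_fiber_card (B.flip y) (hfny y hy) lam).le
  have hNoff : ∀ y ∈ F'', ∀ y' ∈ F'', y' ≠ y → N y y' ≤ q ^ e := by
    intro y hy y' hy' hne
    have hfne : B.flip y ≠ B.flip y' := by
      intro hEq
      apply hne
      have : y' - y = 0 := hBf _ fun x => by
        have h3 : B x y = B x y' := DFunLike.congr_fun hEq x
        rw [map_sub, ← h3, sub_self]
      exact (sub_eq_zero.1 this)
    have h1 : N y y' = (Finset.univ.filter fun x =>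
        B.flip y x = lam ∧ B.flip y' x = lam).card := by
      rw [hN]
      exact congrArg Finset.card (Finset.filter_congr fun x _ => by
        simp [LinearMap.flip_apply])
    rw [h1]
    simpa using pair_fiber_card_le (B.flip y) (B.flip y') (hfny y hy) hfne hlam
  have stepB2 : ∑ x : Fin (e+2) → F, S x * S x ≤ b * q ^ (e+1) + b * ((b-1) * q ^ e) := by
    rw [stepB]
    calc ∑ y ∈ F'', ∑ y' ∈ F'', N y y'
        ≤ ∑ y ∈ F'', (q ^ (e+1) + (b-1) * q ^ e) := by
          refine Finset.sum_le_sum fun y hy => ?_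
          rw [← Finset.add_sum_erase F'' _ hy]
          refine Nat.add_le_add (hNdiag y hy) ?_
          calc ∑ y' ∈ F''.erase y, N y y'
              ≤ (F''.erase y).card • (q ^ e) :=
                Finset.sum_le_card_nsmul _ _ _ fun y' hy' =>
                  hNoff y hy y' (Finset.mem_of_mem_erase hy')
                    (Finset.ne_of_mem_erase hy')
            _ = (b-1) * q ^ e := by rw [Finset.card_erase_of_mem hy, smul_eq_mul]
      _ = b * q ^ (e+1) + b * ((b-1) * q ^ e) := by
          rw [Finset.sum_const, smul_eq_mul, Nat.mul_add]
  -- S vanishes on E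
  have hSE : ∀ x ∈ E, S x = 0 := fun x hx =>
    Finset.card_eq_zero.2 (Finset.filter_eq_empty_iff.2 fun y hy =>
      hno x hx y (Finset.mem_of_mem_erase hy))
  -- pass to ℤ
  have hcardV : Fintype.card (Fin (e+2) → F) = q ^ (e+2) := by
    simp [Fintype.card_fun, hq]
  have big : (E.card : ℤ) * (b:ℤ)^2 ≤
      ∑ x : Fin (e+2) → F, ((q:ℤ) * (S x :ℤ) - (b:ℤ))^2 := by
    have h1 : ∑ x ∈ E, ((q:ℤ)*(S x:ℤ) - (b:ℤ))^2 = (E.card:ℤ) * (b:ℤ)^2 := by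
      rw [Finset.sum_congr rfl (fun x hx => show ((q:ℤ)*(S x:ℤ) - (b:ℤ))^2 = (b:ℤ)^2 from by
        rw [hSE x hx]; push_cast; ring)]
      rw [Finset.sum_const, nsmul_eq_mul]
    rw [← h1]
    exact Finset.sum_le_sum_of_subset_of_nonneg (Finset.subset_univ E)
      (fun x _ _ => sq_nonneg _)
  have expand : ∑ x : Fin (e+2) → F, ((q:ℤ)*(S x:ℤ) - (b:ℤ))^2 =
      (q:ℤ)^2 * (∑ x : Fin (e+2) → F, (S x:ℤ)*(S x:ℤ))
        - 2*(q:ℤ)*(b:ℤ)*(∑ x : Fin (e+2) → F, (S x:ℤ)) + (q:ℤ)^(e+2) * (b:ℤ)^2 := by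
    rw [Finset.sum_congr rfl (fun x _ => show ((q:ℤ)*(S x:ℤ) - (b:ℤ))^2 =
      (q:ℤ)^2*((S x:ℤ)*(S x:ℤ)) - 2*(q:ℤ)*(b:ℤ)*(S x:ℤ) + (b:ℤ)^2 from by ring)]
    rw [Finset.sum_add_distrib, Finset.sum_sub_distrib, ← Finset.mul_sum, ← Finset.mul_sum,
      Finset.sum_const, Finset.card_univ, hcardV, nsmul_eq_mul]
    push_cast
    ring
  have hAz : (∑ x : Fin (e+2) → F, (S x:ℤ)) = (b:ℤ) * (q:ℤ)^(e+1) := by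
    have : ((∑ x : Fin (e+2) → F, S x : ℕ) : ℤ) = ((b * q^(e+1) : ℕ) : ℤ) := by
      exact_mod_cast congrArg (Nat.cast : ℕ → ℤ) stepA
    push_cast at this
    simpa using this
  have hBz : (∑ x : Fin (e+2) → F, (S x:ℤ)*(S x:ℤ)) ≤
      (b:ℤ) * (q:ℤ)^(e+1) + (b:ℤ) * (((b:ℤ)-1) * (q:ℤ)^e) := by
    have := (Nat.cast_le (α := ℤ)).2 stepB2
    push_cast [Nat.cast_sub hbpos] at this
    simpa using this
  -- combine everything
  have hp1 : (q:ℤ)^(e+1) = (q:ℤ)^e * (q:ℤ) := pow_succ _ _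
  have hp2 : (q:ℤ)^(e+2) = (q:ℤ)^e * (q:ℤ) * (q:ℤ) := by
    rw [pow_succ, hp1]
  have hqz : (2:ℤ) ≤ (q:ℤ) := by exact_mod_cast hq2
  have hbz : (1:ℤ) ≤ (b:ℤ) := by exact_mod_cast hbpos
  have hPz : (0:ℤ) < (q:ℤ)^e := pow_pos (by linarith) e
  have key : (E.card:ℤ) * (b:ℤ)^2 ≤ ((q:ℤ)^(e+2) * ((q:ℤ)-1)) * (b:ℤ) := by
    rw [expand, hAz] at big
    rw [hp1] at big hBz
    rw [hp2] at big
    rw [hp2]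
    nlinarith [mul_le_mul_of_nonneg_left hBz (sq_nonneg (q:ℤ))]
  have hfin : (E.card:ℤ) * (b:ℤ) ≤ (q:ℤ)^(e+2) * ((q:ℤ)-1) := by
    refine le_of_mul_le_mul_right ?_ (show (0:ℤ) < (b:ℤ) by linarith)
    calc (E.card:ℤ) * (b:ℤ) * (b:ℤ) = (E.card:ℤ) * (b:ℤ)^2 := by ring
      _ ≤ ((q:ℤ)^(e+2) * ((q:ℤ)-1)) * (b:ℤ) := key
  have : ((E.card * b : ℕ) : ℤ) ≤ ((q^(e+2) * (q-1) : ℕ) : ℤ) := by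
    push_cast [Nat.cast_sub (by omega : 1 ≤ q)]
    linarith
  exact_mod_cast this

end Key

set_option maxHeartbeats 2000000 in
theorem stmt7 (F : Type) [Field F] [Fintype F] [DecidableEq F]
    (hodd : Odd (Fintype.card F))
    (d : ℕ) (hd : 2 ≤ d)
    (B : LinearMap.BilinForm F (Fin d → F))
    (hB : B.Nondegenerate)
    (E F' : Finset (Fin d → F))
    (hEF : Fintype.card F ^ (d + 1) ≤ E.card * F'.card) :
    ∀ lam : F, lam ≠ 0 → ∃ x ∈ E, ∃ y ∈ F', B x y = lam := by
  intro lam hlam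
  by_contra hcon
  push_neg at hcon
  set q := Fintype.card F with hq
  have hq2 : 2 ≤ q := Fintype.one_lt_card
  have hBf1 : ∀ y : Fin d → F, (∀ x, B x y = 0) → y = 0 := fun y h => hB.2 y h
  have h1 := key_count hd B hBf1 hlam E F' hcon
  have h2 := key_count hd B.flip (fun y h => hB.1 y h) hlam F' E (fun y hy x hx => hcon x hx y hy)
  -- pass to ℤ
  have hcast : ∀ n m : ℕ, n ≤ m → (n:ℤ) ≤ m := fun n m h => by exact_mod_cast h
  have hqd : ((q^d * (q-1) : ℕ) : ℤ) = (q:ℤ)^d * ((q:ℤ) - 1) := by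
    push_cast [Nat.cast_sub (by omega : 1 ≤ q)]; ring
  have h1z : (E.card:ℤ) * ((F'.erase 0).card:ℤ) ≤ (q:ℤ)^d * ((q:ℤ)-1) := by
    have := hcast _ _ h1; rw [hqd] at this; push_cast at this; exact this
  have h2z : (F'.card:ℤ) * ((E.erase 0).card:ℤ) ≤ (q:ℤ)^d * ((q:ℤ)-1) := by
    have := hcast _ _ h2; rw [hqd] at this; push_cast at this; exact this
  have hc' : ((F'.card:ℤ)) - 1 ≤ ((F'.erase 0).card : ℤ) := by
    have := Finset.pred_card_le_card_erase (s := F') (a := 0); omega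
  have ha' : ((E.card:ℤ)) - 1 ≤ ((E.erase 0).card : ℤ) := by
    have := Finset.pred_card_le_card_erase (s := E) (a := 0); omega
  have hEFz : (q:ℤ)^d * (q:ℤ) ≤ (E.card:ℤ) * (F'.card:ℤ) := by
    have := hcast _ _ hEF; push_cast at this
    rw [pow_succ] at this; exact this
  have hEle : (E.card:ℤ) ≤ (q:ℤ)^d := by
    have := Finset.card_le_univ E
    rw [Fintype.card_fun, Fintype.card_fin] at this
    exact_mod_cast this
  have hFle : (F'.card:ℤ) ≤ (q:ℤ)^d := by
    have := Finset.card_le_univ F'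
    rw [Fintype.card_fun, Fintype.card_fin] at this
    exact_mod_cast this
  have hqq : (q:ℤ)*(q:ℤ) ≤ (q:ℤ)^d := by
    have : q^2 ≤ q^d := Nat.pow_le_pow_right (by omega) hd
    have h' := hcast _ _ this; push_cast at h'
    nlinarith [h']
  have hqz : (2:ℤ) ≤ (q:ℤ) := by exact_mod_cast hq2
  have haQ : (q:ℤ)^d ≤ (E.card:ℤ) := by
    have step : (E.card:ℤ) * ((F'.card:ℤ) - 1) ≤ (q:ℤ)^d * ((q:ℤ)-1) :=
      le_trans (mul_le_mul_of_nonneg_left hc' (by positivity)) h1z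
    nlinarith [step, hEFz]
  have hcQ : (q:ℤ)^d ≤ (F'.card:ℤ) := by
    have step : (F'.card:ℤ) * ((E.card:ℤ) - 1) ≤ (q:ℤ)^d * ((q:ℤ)-1) :=
      le_trans (mul_le_mul_of_nonneg_left ha' (by positivity)) h2z
    nlinarith [step, hEFz]
  have haeq : (E.card:ℤ) = (q:ℤ)^d := le_antisymm hEle haQ
  have hceq : (F'.card:ℤ) = (q:ℤ)^d := le_antisymm hFle hcQ
  have step2 : (F'.card:ℤ) * ((E.card:ℤ) - 1) ≤ (q:ℤ)^d * ((q:ℤ)-1) :=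
    le_trans (mul_le_mul_of_nonneg_left ha' (by positivity)) h2z
  rw [haeq, hceq] at step2
  have hQpos : (0:ℤ) < (q:ℤ)^d := by positivity
  nlinarith [step2, hqq, hqz, hQpos]
end

section
/- Let B be a non-degenerate bilinear form on F_q^d, d ≥ 1, and fix λ ∈ F_q. Define the sum-product graph on vertex set F_q × F_q^d where (a,b) and (c,d) are adjacent iff a + c + λ = B(b,d). This graph is q^d-regular on q^{d+1} vertices, and every eigenvalue of its adjacency matrix other than q^d has absolute value less than √(2 q^d). -/
open Finset

open Finset

-- count of pairs (x,y) with x = f y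
lemma count_graph' (F : Type) [Field F] [Fintype F] [DecidableEq F] (d : ℕ)
    (f : (Fin d → F) → F) :
    (Finset.univ.filter (fun w : F × (Fin d → F) => w.1 = f w.2)).card
      = Fintype.card F ^ d := by
  have h : (Finset.univ.filter (fun w : F × (Fin d → F) => w.1 = f w.2))
      = Finset.univ.image (fun y : Fin d → F => (f y, y)) := by
    ext w
    simp only [mem_filter, mem_univ, true_and, mem_image]
    constructor
    · intro h; exact ⟨w.2, by rw [← h]⟩
    · rintro ⟨y, rfl⟩; rfl
  rw [h, Finset.card_image_of_injective _ (fun a b hab => congrArg Prod.snd hab),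
    card_univ, Fintype.card_fun, Fintype.card_fin]

-- fibers of a nonzero linear functional
lemma fiber_card' (F : Type) [Field F] [Fintype F] [DecidableEq F] (d : ℕ) (hd : 1 ≤ d)
    (φ : (Fin d → F) →ₗ[F] F) (hφ : φ ≠ 0) (c : F) :
    (Finset.univ.filter (fun y : Fin d → F => φ y = c)).card
      = Fintype.card F ^ (d - 1) := by
  have hsurj : Function.Surjective φ := by
    rw [← LinearMap.range_eq_top]
    rcases Ideal.eq_bot_or_top (LinearMap.range φ) with h | h
    · exact absurd (LinearMap.range_eq_bot.mp h) hφ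
    · exact h
  obtain ⟨y0, hy0⟩ := hsurj c
  have e : {y : Fin d → F // φ y = c} ≃ LinearMap.ker φ :=
    { toFun := fun y => ⟨y.1 - y0, by
        simp [LinearMap.mem_ker, map_sub, y.2, hy0]⟩
      invFun := fun k => ⟨y0 + k.1, by
        have := LinearMap.mem_ker.mp k.2
        simp [map_add, this, hy0]⟩
      left_inv := fun y => by ext; simp
      right_inv := fun k => by ext; simp }
  haveI : Fintype (LinearMap.ker φ) := Fintype.ofFinite _
  have hker : Module.finrank F (LinearMap.ker φ) = d - 1 := by
    have h1 := LinearMap.finrank_range_add_finrank_ker φ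
    rw [LinearMap.range_eq_top.mpr hsurj, finrank_top, Module.finrank_self,
      Module.finrank_fin_fun] at h1
    omega
  calc (Finset.univ.filter (fun y : Fin d → F => φ y = c)).card
      = Fintype.card {y : Fin d → F // φ y = c} := (Fintype.card_subtype _).symm
    _ = Fintype.card (LinearMap.ker φ) := Fintype.card_congr e
    _ = Fintype.card F ^ (d - 1) := by rw [Module.card_eq_pow_finrank (K := F) (V := LinearMap.ker φ), hker]

section
variable (F : Type) [Field F] [Fintype F] [DecidableEq F]
    (d : ℕ)
    (B : LinearMap.BilinForm F (Fin d → F))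
    (lam : F)

lemma count_two_ne (hd : 1 ≤ d) (hB : B.Nondegenerate) (hsymm : ∀ x y, B x y = B y x) (p w : F × (Fin d → F)) (hne : p.2 ≠ w.2) :
    (Finset.univ.filter (fun u : F × (Fin d → F) =>
      (p.1 + u.1 + lam = B p.2 u.2) ∧ (u.1 + w.1 + lam = B u.2 w.2))).card
      = Fintype.card F ^ (d - 1) := by
  have hφ : B (p.2 - w.2) ≠ 0 := by
    intro h
    exact hne (sub_eq_zero.mp (hB.1 _ (fun n => by rw [h]; rfl)))
  have hcond : ∀ u : F × (Fin d → F),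
      ((p.1 + u.1 + lam = B p.2 u.2) ∧ (u.1 + w.1 + lam = B u.2 w.2)) ↔
      (u.1 = B p.2 u.2 - p.1 - lam ∧ B (p.2 - w.2) u.2 = p.1 - w.1) := by
    intro u
    have hs : B u.2 w.2 = B w.2 u.2 := hsymm _ _
    have hm : B (p.2 - w.2) u.2 = B p.2 u.2 - B w.2 u.2 := by
      rw [map_sub]; rfl
    constructor
    · rintro ⟨h1, h2⟩
      refine ⟨by linear_combination h1, ?_⟩
      rw [hm]; linear_combination h2 - h1 + hs
    · rintro ⟨h1, h2⟩
      rw [hm] at h2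
      exact ⟨by linear_combination h1, by linear_combination h1 + h2 - hs⟩
  have himg : (Finset.univ.filter (fun u : F × (Fin d → F) =>
      (p.1 + u.1 + lam = B p.2 u.2) ∧ (u.1 + w.1 + lam = B u.2 w.2)))
      = (Finset.univ.filter (fun y : Fin d → F => B (p.2 - w.2) y = p.1 - w.1)).image
        (fun y => (B p.2 y - p.1 - lam, y)) := by
    ext u
    simp only [mem_filter, mem_univ, true_and, mem_image, hcond]
    constructor
    · rintro ⟨h1, h2⟩
      exact ⟨u.2, h2, by rw [← h1]⟩
    · rintro ⟨y, hy, rfl⟩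
      exact ⟨rfl, hy⟩
  rw [himg, Finset.card_image_of_injective _ (fun a b hab => congrArg Prod.snd hab)]
  exact fiber_card' F d hd (B (p.2 - w.2)) hφ _

lemma count_two_eq (hsymm : ∀ x y, B x y = B y x) (p : F × (Fin d → F)) :
    (Finset.univ.filter (fun u : F × (Fin d → F) =>
      (p.1 + u.1 + lam = B p.2 u.2) ∧ (u.1 + p.1 + lam = B u.2 p.2))).card
      = Fintype.card F ^ d := by
  have hcond : ∀ u : F × (Fin d → F),
      ((p.1 + u.1 + lam = B p.2 u.2) ∧ (u.1 + p.1 + lam = B u.2 p.2)) ↔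
      (u.1 = B p.2 u.2 - p.1 - lam) := by
    intro u
    have hs : B u.2 p.2 = B p.2 u.2 := hsymm _ _
    constructor
    · rintro ⟨h1, _⟩; linear_combination h1
    · intro h1; exact ⟨by linear_combination h1, by rw [hs]; linear_combination h1⟩
  rw [Finset.filter_congr (fun u _ => by rw [hcond u])]
  exact count_graph' F d (fun y => B p.2 y - p.1 - lam)

lemma count_two_zero (hsymm : ∀ x y, B x y = B y x) (p w : F × (Fin d → F)) (h2 : p.2 = w.2) (h1 : p.1 ≠ w.1) :
    (Finset.univ.filter (fun u : F × (Fin d → F) =>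
      (p.1 + u.1 + lam = B p.2 u.2) ∧ (u.1 + w.1 + lam = B u.2 w.2))).card = 0 := by
  rw [Finset.card_eq_zero, Finset.filter_eq_empty_iff]
  rintro u -
  rintro ⟨ha, hb⟩
  apply h1
  have hs : B u.2 w.2 = B w.2 u.2 := hsymm _ _
  rw [h2] at ha
  linear_combination ha - hb - hs

end
theorem stmt8 (F : Type) [Field F] [Fintype F] [DecidableEq F]
    (hodd : Odd (Fintype.card F))
    (d : ℕ) (hd : 1 ≤ d)
    (B : LinearMap.BilinForm F (Fin d → F))
    (hB : B.Nondegenerate)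
    (hsymm : ∀ x y, B x y = B y x)
    (lam : F) :
    Fintype.card (F × (Fin d → F)) = Fintype.card F ^ (d + 1) ∧
    (∀ p : F × (Fin d → F),
      (Finset.univ.filter
          (fun w : F × (Fin d → F) => p.1 + w.1 + lam = B p.2 w.2)).card
        = Fintype.card F ^ d) ∧
    ∀ μ : ℝ, Module.End.HasEigenvalue
        (Matrix.toLin' (Matrix.of (fun p w : F × (Fin d → F) =>
          if p.1 + w.1 + lam = B p.2 w.2 then (1 : ℝ) else 0))) μ →
      μ ≠ (Fintype.card F : ℝ) ^ d →
      |μ| < Real.sqrt (2 * (Fintype.card F : ℝ) ^ d) := by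
  set q := Fintype.card F with hq
  have hq2 : 2 ≤ q := Fintype.one_lt_card
  refine ⟨?_, ?_, ?_⟩
  · rw [Fintype.card_prod, Fintype.card_fun, Fintype.card_fin, pow_succ, mul_comm]
  · intro p
    have : ∀ w : F × (Fin d → F),
        (p.1 + w.1 + lam = B p.2 w.2) ↔ (w.1 = B p.2 w.2 - p.1 - lam) :=
      fun w => ⟨fun h => by linear_combination h, fun h => by linear_combination h⟩
    rw [Finset.filter_congr (fun w _ => by rw [this w])]
    exact count_graph' F d (fun y => B p.2 y - p.1 - lam)
  · intro mu hmu hmune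
    set M : Matrix (F × (Fin d → F)) (F × (Fin d → F)) ℝ :=
      Matrix.of (fun p w => if p.1 + w.1 + lam = B p.2 w.2 then (1:ℝ) else 0) with hM
    obtain ⟨v, hv⟩ := hmu.exists_hasEigenvector
    have hv0 : v ≠ 0 := hv.right
    have hMv : M.mulVec v = mu • v := by
      have h := hv.apply_eq_smul
      rwa [Matrix.toLin'_apply] at h
    have hq0 : (0:ℝ) < (q:ℝ) := by exact_mod_cast lt_of_lt_of_le two_pos hq2
    have hN0 : (0:ℝ) < (q:ℝ)^d := pow_pos hq0 d
    have hA0 : (0:ℝ) ≤ (q:ℝ)^(d-1) := le_of_lt (pow_pos hq0 _)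
    -- column sums
    have hcol : ∀ w, ∑ p, M p w = (q:ℝ)^d := by
      intro w
      have h1 : ∀ p : F × (Fin d → F), M p w
          = if p.1 = B p.2 w.2 - w.1 - lam then (1:ℝ) else 0 := by
        intro p
        simp only [hM, Matrix.of_apply]
        congr 1
        simp only [eq_iff_iff]
        exact ⟨fun h => by linear_combination h, fun h => by linear_combination h⟩
      rw [Finset.sum_congr rfl (fun p _ => h1 p), Finset.sum_boole,
        count_graph' F d (fun y => B y w.2 - w.1 - lam)]
      push_cast
      rfl
    -- sum of eigenvector entries is zero
    have hs : ∑ p, v p = 0 := by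
      have h1 : ∑ p, (M.mulVec v) p = mu * ∑ p, v p := by
        rw [hMv]
        simp [Finset.mul_sum]
      have h2 : ∑ p, (M.mulVec v) p = (q:ℝ)^d * ∑ p, v p := by
        simp only [Matrix.mulVec, dotProduct]
        rw [Finset.sum_comm]
        rw [Finset.mul_sum]
        refine Finset.sum_congr rfl (fun w _ => ?_)
        rw [← Finset.sum_mul, hcol w]
      by_contra hs0
      exact hmune (mul_right_cancel₀ hs0 (h1.symm.trans h2))
    -- entries of M * M
    have hentry : ∀ p w : F × (Fin d → F),
        (M * M) p w = (q:ℝ)^(d-1) - (q:ℝ)^(d-1) * (if p.2 = w.2 then 1 else 0)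
          + (q:ℝ)^d * (if p = w then 1 else 0) := by
      intro p w
      rw [Matrix.mul_apply]
      have h1 : ∀ u : F × (Fin d → F), M p u * M u w =
          if ((p.1 + u.1 + lam = B p.2 u.2) ∧ (u.1 + w.1 + lam = B u.2 w.2))
          then (1:ℝ) else 0 := by
        intro u
        simp only [hM, Matrix.of_apply]
        by_cases h1 : p.1 + u.1 + lam = B p.2 u.2 <;>
          by_cases h2 : u.1 + w.1 + lam = B u.2 w.2 <;> simp [h1, h2]
      rw [Finset.sum_congr rfl (fun u _ => h1 u), Finset.sum_boole]
      by_cases h2 : p.2 = w.2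
      · by_cases hone : p.1 = w.1
        · have hpw : p = w := Prod.ext hone h2
          rw [if_pos h2, if_pos hpw, ← hpw]
          rw [count_two_eq F d B lam hsymm p]
          push_cast
          ring
        · have hpw : p ≠ w := fun h => hone (congrArg Prod.fst h)
          rw [count_two_zero F d B lam hsymm p w h2 hone, if_pos h2, if_neg hpw]
          push_cast
          ring
      · have hpw : p ≠ w := fun h => h2 (congrArg Prod.snd h)
        rw [count_two_ne F d B lam hd hB hsymm p w h2, if_neg h2, if_neg hpw]
        push_cast
        ring
    have hM2v : (M * M).mulVec v = (mu * mu) • v := by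
      rw [← Matrix.mulVec_mulVec, hMv, Matrix.mulVec_smul, hMv, smul_smul]
    -- the quadratic form computation
    have hKterm : ∑ p, ∑ w, (if p.2 = w.2 then (1:ℝ) else 0) * (v p * v w)
        = ∑ b : Fin d → F, (∑ a : F, v (a, b))^2 := by
      simp only [Fintype.sum_prod_type]
      rw [Finset.sum_comm]
      refine Finset.sum_congr rfl (fun b _ => ?_)
      rw [sq, Finset.sum_mul_sum]
      refine Finset.sum_congr rfl (fun a _ => Finset.sum_congr rfl (fun c _ => ?_))
      simp
    have hK0 : (0:ℝ) ≤ ∑ p, ∑ w, (if p.2 = w.2 then (1:ℝ) else 0) * (v p * v w) := by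
      rw [hKterm]
      exact Finset.sum_nonneg (fun b _ => sq_nonneg _)
    have hT : mu * mu * (∑ p, v p ^ 2)
        = (q:ℝ)^(d-1) * ((∑ p, v p) * (∑ p, v p))
          - (q:ℝ)^(d-1) * (∑ p, ∑ w, (if p.2 = w.2 then (1:ℝ) else 0) * (v p * v w))
          + (q:ℝ)^d * (∑ p, v p ^ 2) := by
      have lhs : mu * mu * (∑ p, v p ^ 2) = ∑ p, v p * ((M * M).mulVec v) p := by
        rw [hM2v]
        rw [Finset.mul_sum]
        refine Finset.sum_congr rfl (fun p _ => ?_)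
        simp [sq]
        ring
      rw [lhs]
      have expand : ∑ p, v p * ((M * M).mulVec v) p
          = ∑ p, ∑ w, ((q:ℝ)^(d-1) * (v p * v w)
              - (q:ℝ)^(d-1) * ((if p.2 = w.2 then (1:ℝ) else 0) * (v p * v w))
              + (q:ℝ)^d * ((if p = w then (1:ℝ) else 0) * (v p * v w))) := by
        refine Finset.sum_congr rfl (fun p _ => ?_)
        simp only [Matrix.mulVec, dotProduct, Finset.mul_sum]
        refine Finset.sum_congr rfl (fun w _ => ?_)
        rw [hentry p w]
        ring
      rw [expand]
      have split : ∑ p, ∑ w, ((q:ℝ)^(d-1) * (v p * v w)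
              - (q:ℝ)^(d-1) * ((if p.2 = w.2 then (1:ℝ) else 0) * (v p * v w))
              + (q:ℝ)^d * ((if p = w then (1:ℝ) else 0) * (v p * v w)))
          = (∑ p, ∑ w, (q:ℝ)^(d-1) * (v p * v w))
            - (∑ p, ∑ w, (q:ℝ)^(d-1) * ((if p.2 = w.2 then (1:ℝ) else 0) * (v p * v w)))
            + (∑ p, ∑ w, (q:ℝ)^d * ((if p = w then (1:ℝ) else 0) * (v p * v w))) := by
        simp only [Finset.sum_add_distrib, Finset.sum_sub_distrib]
      have e1 : ∑ p, ∑ w, (q:ℝ)^(d-1) * (v p * v w)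
          = (q:ℝ)^(d-1) * ((∑ p, v p) * (∑ p, v p)) := by
        rw [Finset.sum_mul_sum, Finset.mul_sum]
        refine Finset.sum_congr rfl (fun p _ => ?_)
        rw [Finset.mul_sum]
      have e2 : ∑ p, ∑ w, (q:ℝ)^(d-1) * ((if p.2 = w.2 then (1:ℝ) else 0) * (v p * v w))
          = (q:ℝ)^(d-1) * (∑ p, ∑ w, (if p.2 = w.2 then (1:ℝ) else 0) * (v p * v w)) := by
        rw [Finset.mul_sum]
        refine Finset.sum_congr rfl (fun p _ => ?_)
        rw [Finset.mul_sum]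
      have e3 : ∑ p, ∑ w, (q:ℝ)^d * ((if p = w then (1:ℝ) else 0) * (v p * v w))
          = (q:ℝ)^d * ∑ p, v p ^ 2 := by
        rw [Finset.mul_sum]
        refine Finset.sum_congr rfl (fun p _ => ?_)
        simp [mul_ite, ite_mul, Finset.sum_ite_eq, sq]
      rw [split, e1, e2, e3]
    have hSv2 : (0:ℝ) < ∑ p, v p ^ 2 := by
      obtain ⟨p, hp⟩ := Function.ne_iff.mp hv0
      refine Finset.sum_pos' (fun i _ => sq_nonneg _) ⟨p, Finset.mem_univ p, ?_⟩
      exact pow_two_pos_of_ne_zero hp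
    have hmusq : mu * mu ≤ (q:ℝ)^d := by
      have h1 : mu * mu * (∑ p, v p ^ 2) ≤ (q:ℝ)^d * (∑ p, v p ^ 2) := by
        rw [hT, hs]
        nlinarith [mul_nonneg hA0 hK0]
      exact le_of_mul_le_mul_right h1 hSv2
    have habs : |mu| ≤ Real.sqrt ((q:ℝ)^d) := by
      apply Real.abs_le_sqrt
      rw [sq]
      exact hmusq
    calc |mu| ≤ Real.sqrt ((q:ℝ)^d) := habs
      _ < Real.sqrt (2 * (q:ℝ)^d) := by
          apply Real.sqrt_lt_sqrt (le_of_lt hN0)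
          linarith
end

section
/- Let B be a non-degenerate bilinear form on F_q^d and λ ∈ F_q. If E, F ⊆ F_q × F_q^d satisfy |E||F| ≥ 2q^{d+2}, then there exist (a,b) ∈ E and (c,d) ∈ F with a + c + λ = B(b,d). -/
open Finset

/-- All fibers of a nonzero linear functional on `Fin n → F` have size `card F ^ n / card F`. -/
lemma fiber_mul_card (F : Type) [Field F] [Fintype F] [DecidableEq F] (n : ℕ)
    (φ : (Fin n → F) →ₗ[F] F) (hφ : φ ≠ 0) (c : F) :
    ((univ : Finset (Fin n → F)).filter fun v => φ v = c).card * Fintype.card F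
      = Fintype.card F ^ n := by
  obtain ⟨v0, hv0⟩ : ∃ v, φ v ≠ 0 := by
    by_contra hcon
    push_neg at hcon
    exact hφ (LinearMap.ext fun v => by simp [hcon v])
  set u := (φ v0)⁻¹ • v0 with hu
  have hφu : φ u = 1 := by
    simp [hu, map_smul, smul_eq_mul, inv_mul_cancel₀ hv0]
  have hcancel : ∀ (a : Fin n → F) (x y : F), x + y = 0 → a + x • u + y • u = a := by
    intro a x y hxy
    rw [add_assoc, ← add_smul, hxy, zero_smul, add_zero]
  have key : ∀ c₁ c₂ : F, ((univ : Finset (Fin n → F)).filter fun v => φ v = c₁).card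
      = ((univ : Finset (Fin n → F)).filter fun v => φ v = c₂).card := by
    intro c₁ c₂
    apply Finset.card_bij' (fun v _ => v + (c₂ - c₁) • u) (fun v _ => v + (c₁ - c₂) • u)
    · intro a ha
      simp only [mem_filter, mem_univ, true_and] at ha ⊢
      rw [map_add, map_smul, ha, hφu, smul_eq_mul, mul_one]
      ring
    · intro a ha
      simp only [mem_filter, mem_univ, true_and] at ha ⊢
      rw [map_add, map_smul, ha, hφu, smul_eq_mul, mul_one]
      ring
    · intro a _
      exact hcancel a _ _ (by ring)
    · intro a _
      exact hcancel a _ _ (by ring)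
  have htot : (univ : Finset (Fin n → F)).card
      = ∑ c' : F, ((univ : Finset (Fin n → F)).filter fun v => φ v = c').card :=
    Finset.card_eq_sum_card_fiberwise (fun v _ => mem_univ (φ v))
  have : (Fintype.card F : ℕ) ^ n
      = ∑ _c' : F, ((univ : Finset (Fin n → F)).filter fun v => φ v = c).card := by
    rw [← Finset.sum_congr rfl (fun c' _ => key c' c), ← htot, card_univ,
      Fintype.card_fun, Fintype.card_fin]
  rw [this, Finset.sum_const, card_univ, smul_eq_mul, mul_comm]

theorem stmt10 (F : Type) [Field F] [Fintype F] [DecidableEq F]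
    (hodd : Odd (Fintype.card F))
    (d : ℕ) (hd : 1 ≤ d)
    (B : LinearMap.BilinForm F (Fin d → F))
    (hB : B.Nondegenerate)
    (lam : F)
    (E F' : Finset (F × (Fin d → F)))
    (hEF : 2 * (Fintype.card F : ℝ) ^ (d + 2) ≤ (E.card : ℝ) * F'.card) :
    ∃ p ∈ E, ∃ r ∈ F', p.1 + r.1 + lam = B p.2 r.2 := by
  classical
  by_contra hcon
  push_neg at hcon
  set q := Fintype.card F with hq
  have hq0 : (0 : ℝ) < q := by exact_mod_cast Fintype.card_pos
  set m := F'.card with hm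
  set h : F × (Fin d → F) → ℕ :=
    fun p => (F'.filter fun r => p.1 + r.1 + lam = B p.2 r.2).card with hh
  -- on E, h vanishes
  have hE0 : ∀ p ∈ E, h p = 0 := by
    intro p hp
    rw [hh]
    rw [Finset.card_eq_zero, Finset.filter_eq_empty_iff]
    intro r hr
    exact hcon p hp r hr
  -- count of p satisfying a single condition
  have count1 : ∀ r : F × (Fin d → F),
      ((univ : Finset (F × (Fin d → F))).filter
        fun p => p.1 + r.1 + lam = B p.2 r.2).card = q ^ d := by
    intro r
    have : ((univ : Finset (F × (Fin d → F))).filter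
        fun p => p.1 + r.1 + lam = B p.2 r.2).card = (univ : Finset (Fin d → F)).card := by
      apply Finset.card_bij' (fun p _ => p.2) (fun v _ => (B v r.2 - r.1 - lam, v))
      · intro a _; exact mem_univ _
      · intro v _
        simp only [mem_filter, mem_univ, true_and]
        ring
      · intro p hp
        simp only [mem_filter, mem_univ, true_and] at hp
        have : B p.2 r.2 - r.1 - lam = p.1 := by linear_combination hp.symm
        exact Prod.ext this rfl
      · intro v _; rfl
    rw [this, card_univ, Fintype.card_fun, Fintype.card_fin]
  -- first moment
  have sumh : ∑ p : F × (Fin d → F), h p = m * q ^ d := by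
    have hrw : ∀ p : F × (Fin d → F),
        h p = ∑ r ∈ F', if p.1 + r.1 + lam = B p.2 r.2 then 1 else 0 := by
      intro p; rw [hh]; exact Finset.card_filter _ _
    calc ∑ p : F × (Fin d → F), h p
        = ∑ p : F × (Fin d → F), ∑ r ∈ F',
            if p.1 + r.1 + lam = B p.2 r.2 then 1 else 0 := by
          exact Finset.sum_congr rfl fun p _ => hrw p
      _ = ∑ r ∈ F', ∑ p : F × (Fin d → F),
            if p.1 + r.1 + lam = B p.2 r.2 then 1 else 0 := Finset.sum_comm
      _ = ∑ r ∈ F', q ^ d := by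
          refine Finset.sum_congr rfl fun r _ => ?_
          have hc := count1 r
          rw [Finset.card_filter] at hc
          exact hc
      _ = m * q ^ d := by rw [Finset.sum_const, smul_eq_mul]
  -- pair counts
  have count2 : ∀ r r' : F × (Fin d → F),
      ((univ : Finset (F × (Fin d → F))).filter fun p =>
        (p.1 + r.1 + lam = B p.2 r.2) ∧ (p.1 + r'.1 + lam = B p.2 r'.2)).card * q
        ≤ q ^ d + (if r = r' then q ^ (d + 1) else 0) := by
    intro r r'
    by_cases hrr : r = r'
    · subst hrr
      simp only [if_pos rfl, and_self]
      rw [count1 r, ← pow_succ]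
      exact Nat.le_add_left _ _
    · rw [if_neg hrr, add_zero]
      by_cases hw : r.2 = r'.2
      · -- conditions are incompatible
        have : ((univ : Finset (F × (Fin d → F))).filter fun p =>
            (p.1 + r.1 + lam = B p.2 r.2) ∧ (p.1 + r'.1 + lam = B p.2 r'.2)).card = 0 := by
          rw [Finset.card_eq_zero, Finset.filter_eq_empty_iff]
          rintro p _ ⟨h1, h2⟩
          apply hrr
          have h2' : p.1 + r'.1 + lam = B p.2 r.2 := by rw [h2, hw]
          have : r.1 = r'.1 := by linear_combination h1 - h2'
          exact Prod.ext this hw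
        rw [this, zero_mul]
        exact Nat.zero_le _
      · -- nondegenerate direction: fiber count
        set w := r.2 - r'.2 with hwdef
        have hw0 : w ≠ 0 := sub_ne_zero.mpr hw
        set φ : (Fin d → F) →ₗ[F] F := B.flip w with hφdef
        have hφ : φ ≠ 0 := by
          intro hzero
          apply hw0
          apply hB.flip.1
          intro v
          have := congrFun (congrArg DFunLike.coe hzero) v
          simpa [hφdef] using this
        have hcard : ((univ : Finset (F × (Fin d → F))).filter fun p =>
            (p.1 + r.1 + lam = B p.2 r.2) ∧ (p.1 + r'.1 + lam = B p.2 r'.2)).card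
            = ((univ : Finset (Fin d → F)).filter fun v => φ v = r.1 - r'.1).card := by
          apply Finset.card_bij' (fun p _ => p.2) (fun v _ => (B v r.2 - r.1 - lam, v))
          · intro p hp
            simp only [mem_filter, mem_univ, true_and] at hp ⊢
            obtain ⟨h1, h2⟩ := hp
            have : B p.2 w = B p.2 r.2 - B p.2 r'.2 := by
              rw [hwdef, map_sub]
            rw [hφdef]
            simp only [LinearMap.BilinForm.flip_apply]
            -- goal : B p.2 w = r.1 - r'.1  (flip_apply : B.flip w v = B v w ??)
            rw [this]
            linear_combination h2 - h1
          · intro v hv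
            simp only [mem_filter, mem_univ, true_and] at hv ⊢
            constructor
            · ring
            · have hBv : B v r.2 - B v r'.2 = r.1 - r'.1 := by
                rw [← map_sub, ← hwdef]
                have := hv
                rw [hφdef] at this
                simpa only [LinearMap.BilinForm.flip_apply] using this
              linear_combination hBv
          · intro p hp
            simp only [mem_filter, mem_univ, true_and] at hp
            have : B p.2 r.2 - r.1 - lam = p.1 := by linear_combination hp.1.symm
            exact Prod.ext this rfl
          · intro v _; rfl
        rw [hcard, fiber_mul_card F d φ hφ (r.1 - r'.1)]
  -- second moment
  have sumh2 : (∑ p : F × (Fin d → F), h p ^ 2) * q ≤ m ^ 2 * q ^ d + m * q ^ (d + 1) := by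
    have hrw : ∀ p : F × (Fin d → F), h p ^ 2
        = ∑ r ∈ F', ∑ r' ∈ F',
            if (p.1 + r.1 + lam = B p.2 r.2) ∧ (p.1 + r'.1 + lam = B p.2 r'.2)
            then 1 else 0 := by
      intro p
      have h1 : h p = ∑ r ∈ F', if p.1 + r.1 + lam = B p.2 r.2 then 1 else 0 :=
        Finset.card_filter _ _
      rw [sq, h1, Finset.sum_mul_sum]
      refine Finset.sum_congr rfl fun r _ => Finset.sum_congr rfl fun r' _ => ?_
      rw [ite_zero_mul_ite_zero, mul_one]
    have step : (∑ p : F × (Fin d → F), h p ^ 2)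
        = ∑ r ∈ F', ∑ r' ∈ F',
            ((univ : Finset (F × (Fin d → F))).filter fun p =>
              (p.1 + r.1 + lam = B p.2 r.2) ∧ (p.1 + r'.1 + lam = B p.2 r'.2)).card := by
      calc ∑ p : F × (Fin d → F), h p ^ 2
          = ∑ p : F × (Fin d → F), ∑ r ∈ F', ∑ r' ∈ F',
              if (p.1 + r.1 + lam = B p.2 r.2) ∧ (p.1 + r'.1 + lam = B p.2 r'.2)
              then 1 else 0 := Finset.sum_congr rfl fun p _ => hrw p
        _ = ∑ r ∈ F', ∑ p : F × (Fin d → F), ∑ r' ∈ F',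
              if (p.1 + r.1 + lam = B p.2 r.2) ∧ (p.1 + r'.1 + lam = B p.2 r'.2)
              then 1 else 0 := Finset.sum_comm
        _ = ∑ r ∈ F', ∑ r' ∈ F', ∑ p : F × (Fin d → F),
              if (p.1 + r.1 + lam = B p.2 r.2) ∧ (p.1 + r'.1 + lam = B p.2 r'.2)
              then 1 else 0 := Finset.sum_congr rfl fun r _ => Finset.sum_comm
        _ = _ := by
              refine Finset.sum_congr rfl fun r _ => Finset.sum_congr rfl fun r' _ => ?_
              exact (Finset.card_filter _ _).symm
    calc (∑ p : F × (Fin d → F), h p ^ 2) * q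
        = ∑ r ∈ F', ∑ r' ∈ F',
            ((univ : Finset (F × (Fin d → F))).filter fun p =>
              (p.1 + r.1 + lam = B p.2 r.2) ∧ (p.1 + r'.1 + lam = B p.2 r'.2)).card * q := by
          rw [step, Finset.sum_mul]
          exact Finset.sum_congr rfl fun r _ => by rw [Finset.sum_mul]
      _ ≤ ∑ r ∈ F', ∑ r' ∈ F', (q ^ d + if r = r' then q ^ (d + 1) else 0) := by
          exact Finset.sum_le_sum fun r _ => Finset.sum_le_sum fun r' _ => count2 r r'
      _ = m ^ 2 * q ^ d + m * q ^ (d + 1) := by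
          have inner : ∀ r ∈ F', (∑ r' ∈ F', (q ^ d + if r = r' then q ^ (d + 1) else 0))
              = m * q ^ d + q ^ (d + 1) := by
            intro r hr
            rw [Finset.sum_add_distrib, Finset.sum_const, smul_eq_mul,
              Finset.sum_ite_eq F' r fun _ => q ^ (d + 1), if_pos hr]
          rw [Finset.sum_congr rfl inner, Finset.sum_add_distrib, Finset.sum_const,
            Finset.sum_const, smul_eq_mul, smul_eq_mul]
          ring
  -- move to ℝ
  set Q : ℝ := (q : ℝ) with hQ
  set M : ℝ := (m : ℝ) with hM
  have hsum_cast : (∑ p : F × (Fin d → F), ((h p : ℝ))) = M * Q ^ d := by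
    rw [← Nat.cast_sum, sumh, hM, hQ]
    push_cast
    ring
  have hsq_cast : (∑ p : F × (Fin d → F), ((h p : ℝ)) ^ 2) * Q
      ≤ M ^ 2 * Q ^ d + M * Q ^ (d + 1) := by
    have hcast : (((∑ p : F × (Fin d → F), h p ^ 2) * q : ℕ) : ℝ)
        ≤ ((m ^ 2 * q ^ d + m * q ^ (d + 1) : ℕ) : ℝ) := Nat.cast_le.mpr sumh2
    push_cast at hcast
    convert hcast using 2 <;> push_cast <;> ring
  have hN : (Fintype.card (F × (Fin d → F)) : ℝ) = Q ^ (d + 1) := by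
    rw [Fintype.card_prod, Fintype.card_fun, Fintype.card_fin, hQ, hq]
    push_cast
    ring
  have hT : ∑ p : F × (Fin d → F), (Q * (h p : ℝ) - M) ^ 2 ≤ Q ^ (d + 2) * M := by
    have expand : ∑ p : F × (Fin d → F), (Q * (h p : ℝ) - M) ^ 2
        = Q ^ 2 * (∑ p : F × (Fin d → F), ((h p : ℝ)) ^ 2)
          - 2 * Q * M * (∑ p : F × (Fin d → F), ((h p : ℝ)))
          + (Fintype.card (F × (Fin d → F)) : ℝ) * M ^ 2 := by
      have e1 : ∀ p : F × (Fin d → F),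
          (Q * (h p : ℝ) - M) ^ 2 = Q ^ 2 * (h p : ℝ) ^ 2 - 2 * Q * M * (h p : ℝ) + M ^ 2 :=
        fun p => by ring
      rw [Finset.sum_congr rfl fun p _ => e1 p, Finset.sum_add_distrib,
        Finset.sum_sub_distrib, ← Finset.mul_sum, ← Finset.mul_sum,
        Finset.sum_const, card_univ, nsmul_eq_mul]
    rw [expand, hsum_cast, hN]
    have h2 : Q * ((∑ p : F × (Fin d → F), ((h p : ℝ)) ^ 2) * Q)
        ≤ Q * (M ^ 2 * Q ^ d + M * Q ^ (d + 1)) :=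
      mul_le_mul_of_nonneg_left hsq_cast hq0.le
    have h3 : Q ^ 2 * (∑ p : F × (Fin d → F), ((h p : ℝ)) ^ 2)
        = Q * ((∑ p : F × (Fin d → F), ((h p : ℝ)) ^ 2) * Q) := by ring
    calc Q ^ 2 * (∑ p : F × (Fin d → F), ((h p : ℝ)) ^ 2)
          - 2 * Q * M * (M * Q ^ d) + Q ^ (d + 1) * M ^ 2
        ≤ Q * (M ^ 2 * Q ^ d + M * Q ^ (d + 1))
          - 2 * Q * M * (M * Q ^ d) + Q ^ (d + 1) * M ^ 2 := by
          rw [h3]; linarith [h2]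
      _ = Q ^ (d + 2) * M := by ring
  have hEsum : (E.card : ℝ) * M ^ 2 ≤ Q ^ (d + 2) * M := by
    have hle : ∑ p ∈ E, (Q * (h p : ℝ) - M) ^ 2
        ≤ ∑ p : F × (Fin d → F), (Q * (h p : ℝ) - M) ^ 2 :=
      Finset.sum_le_sum_of_subset_of_nonneg (Finset.subset_univ E)
        (fun p _ _ => sq_nonneg _)
    have heq : ∑ p ∈ E, (Q * (h p : ℝ) - M) ^ 2 = (E.card : ℝ) * M ^ 2 := by
      have : ∀ p ∈ E, (Q * (h p : ℝ) - M) ^ 2 = M ^ 2 := by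
        intro p hp
        rw [hE0 p hp]
        push_cast
        ring
      rw [Finset.sum_congr rfl this, Finset.sum_const, nsmul_eq_mul]
    rw [← heq]
    exact hle.trans hT
  have hQd : (0 : ℝ) < Q ^ (d + 2) := pow_pos hq0 _
  have hM0 : (0 : ℝ) ≤ M := by rw [hM]; positivity
  rcases eq_or_lt_of_le hM0 with hM1 | hM1
  · rw [← hM1, mul_zero] at hEF
    linarith
  · have : (E.card : ℝ) * M ≤ Q ^ (d + 2) := by
      have := (mul_le_mul_iff_of_pos_right hM1).mpr (le_refl M)
      nlinarith [hEsum, hM1]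
    nlinarith [hEF, this, hQd]
end

section
/- For any subset A of a finite field F_q with q elements and any d ≥ 2, writing A·A = {aa' : a, a' ∈ A} and dA = {a₁ + ... + a_d : aᵢ ∈ A}, one has |A|^{2d-1} ≤ |A|^d |A·A|^{d-1} |dA| / q + √(q^d |A|^d |A·A|^{d-1} |dA|). -/
open Finset

variable {F : Type} [Field F] [Fintype F] [DecidableEq F]
set_option linter.unusedSectionVars false

lemma aux_exists_char : ∃ ψ : AddChar F ℂ, ψ ≠ 1 := by
  obtain ⟨ψ, hψ⟩ := (AddChar.exists_apply_ne_zero (a := (1 : F))).2 one_ne_zero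
  exact ⟨ψ, fun h => hψ (by simp [h])⟩

lemma aux_norm (ψ : AddChar F ℂ) (x : F) : ‖ψ x‖ = 1 := by
  refine Complex.norm_eq_one_of_pow_eq_one (n := Fintype.card F) ?_ Fintype.card_ne_zero
  rw [← AddChar.map_nsmul_eq_pow, card_nsmul_eq_zero, AddChar.map_zero_eq_one]

lemma aux_conj (ψ : AddChar F ℂ) (x : F) : (starRingEnd ℂ) (ψ x) = ψ (-x) := by
  rw [AddChar.map_neg_eq_inv, Complex.inv_eq_conj (aux_norm ψ x)]

lemma aux_ortho (ψ : AddChar F ℂ) (hψ : ψ ≠ 1) (x : F) :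
    ∑ t : F, ψ (t * x) = if x = 0 then (Fintype.card F : ℂ) else 0 := by
  split_ifs with h
  · simp [h, Finset.card_univ]
  · have h2 : ψ.mulShift x ≠ 1 := by
      rw [Ne, AddChar.mulShift_unit_eq_one_iff ψ ((isUnit_iff_ne_zero).2 h)]; exact hψ
    have := AddChar.sum_eq_zero_of_ne_one h2
    simpa [AddChar.mulShift_apply, mul_comm] using this

lemma aux_parseval (ψ : AddChar F ℂ) (hψ : ψ ≠ 1) (B : Finset F) :
    ∑ t : F, ‖∑ b ∈ B, ψ (t * b)‖ ^ 2 = (Fintype.card F : ℝ) * B.card := by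
  have conjsum : ∀ t : F, (starRingEnd ℂ) (∑ b ∈ B, ψ (t * b)) = ∑ b ∈ B, ψ (-(t * b)) := by
    intro t
    rw [map_sum]
    exact Finset.sum_congr rfl fun b _ => aux_conj ψ (t * b)
  have h3 : ∀ t : F, ((‖∑ b ∈ B, ψ (t * b)‖ ^ 2 : ℝ) : ℂ)
      = (∑ b ∈ B, ψ (t * b)) * ∑ b ∈ B, ψ (-(t * b)) := by
    intro t
    rw [← conjsum t, Complex.mul_conj, Complex.normSq_eq_norm_sq]
  have key : ∑ t : F, ((∑ b ∈ B, ψ (t * b)) * ∑ b ∈ B, ψ (-(t * b)))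
      = (Fintype.card F : ℂ) * B.card := by
    have h1 : ∀ t : F, ((∑ b ∈ B, ψ (t * b)) * ∑ b ∈ B, ψ (-(t * b)))
        = ∑ p ∈ B ×ˢ B, ψ (t * (p.1 - p.2)) := by
      intro t
      rw [Finset.sum_mul_sum, Finset.sum_product]
      refine Finset.sum_congr rfl fun b _ => Finset.sum_congr rfl fun b' _ => ?_
      rw [← AddChar.map_add_eq_mul]
      congr 1
      ring
    simp_rw [h1]
    rw [Finset.sum_comm]
    rw [Finset.sum_congr rfl fun (p : F × F) _ => aux_ortho ψ hψ (p.1 - p.2)]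
    rw [Finset.sum_product]
    simp [sub_eq_zero, Finset.sum_ite_eq, mul_comm]
  apply Complex.ofReal_injective
  push_cast
  rw [← key]
  refine Finset.sum_congr rfl fun t _ => ?_
  have h5 := h3 t
  push_cast at h5
  exact h5

lemma aux_K (ψ : AddChar F ℂ) (hψ : ψ ≠ 1) (A P : Finset F) {t : F} (ht : t ≠ 0) :
    ‖∑ x ∈ A ×ˢ P, ψ (t * (x.2 * x.1⁻¹))‖
      ≤ Real.sqrt ((A.card : ℝ) * ((Fintype.card F : ℝ) * P.card)) := by
  have h1 : ∑ x ∈ A ×ˢ P, ψ (t * (x.2 * x.1⁻¹))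
      = ∑ a ∈ A, ∑ p ∈ P, ψ ((t * a⁻¹) * p) := by
    rw [Finset.sum_product]
    refine Finset.sum_congr rfl fun a _ => Finset.sum_congr rfl fun p _ => ?_
    congr 1
    ring
  set G : F → ℝ := fun y => ‖∑ p ∈ P, ψ (y * p)‖ with hG
  have hGnn : ∀ y, 0 ≤ G y := fun y => norm_nonneg _
  have step1 : ‖∑ x ∈ A ×ˢ P, ψ (t * (x.2 * x.1⁻¹))‖ ≤ ∑ a ∈ A, G (t * a⁻¹) := by
    rw [h1]
    exact norm_sum_le _ _
  have step2 : (∑ a ∈ A, G (t * a⁻¹)) ^ 2 ≤ (A.card : ℝ) * ∑ a ∈ A, G (t * a⁻¹) ^ 2 := by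
    have := Finset.sum_mul_sq_le_sq_mul_sq A (fun _ => (1 : ℝ)) (fun a => G (t * a⁻¹))
    simpa using this
  have inj : Set.InjOn (fun a : F => t * a⁻¹) A := by
    intro a _ b _ h
    exact inv_injective (mul_left_cancel₀ ht h)
  have step3 : ∑ a ∈ A, G (t * a⁻¹) ^ 2 ≤ (Fintype.card F : ℝ) * P.card := by
    have him : ∑ y ∈ A.image (fun a : F => t * a⁻¹), G y ^ 2
        = ∑ a ∈ A, G (t * a⁻¹) ^ 2 :=
      Finset.sum_image (fun a ha b hb h => inj ha hb h)
    rw [← him]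
    calc ∑ y ∈ A.image (fun a : F => t * a⁻¹), G y ^ 2
        ≤ ∑ y : F, G y ^ 2 := Finset.sum_le_sum_of_subset_of_nonneg
            (Finset.subset_univ _) (fun y _ _ => sq_nonneg _)
      _ = (Fintype.card F : ℝ) * P.card := aux_parseval ψ hψ P
  have hS : 0 ≤ ∑ a ∈ A, G (t * a⁻¹) := Finset.sum_nonneg fun a _ => hGnn _
  calc ‖∑ x ∈ A ×ˢ P, ψ (t * (x.2 * x.1⁻¹))‖ ≤ ∑ a ∈ A, G (t * a⁻¹) := step1
    _ = Real.sqrt ((∑ a ∈ A, G (t * a⁻¹)) ^ 2) := (Real.sqrt_sq hS).symm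
    _ ≤ Real.sqrt ((A.card : ℝ) * ((Fintype.card F : ℝ) * P.card)) := by
        apply Real.sqrt_le_sqrt
        calc (∑ a ∈ A, G (t * a⁻¹)) ^ 2 ≤ (A.card : ℝ) * ∑ a ∈ A, G (t * a⁻¹) ^ 2 := step2
          _ ≤ (A.card : ℝ) * ((Fintype.card F : ℝ) * P.card) := by
              apply mul_le_mul_of_nonneg_left step3 (by positivity)

lemma aux_map_sum (ψ : AddChar F ℂ) {ι : Type} [DecidableEq ι] (s : Finset ι) (f : ι → F) :
    ψ (∑ i ∈ s, f i) = ∏ i ∈ s, ψ (f i) := by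
  induction s using Finset.induction with
  | empty => simp
  | insert a s h ih => rw [Finset.sum_insert h, Finset.prod_insert h, AddChar.map_add_eq_mul, ih]

lemma aux_expand (ψ : AddChar F ℂ) (hψ : ψ ≠ 1) (e : ℕ) (A P S : Finset F) :
    ((((Fintype.piFinset (fun _ : Fin e => A ×ˢ P)) ×ˢ (A ×ˢ S)).filter
        (fun y : (Fin e → F × F) × F × F =>
          (∑ i, (y.1 i).2 * ((y.1 i).1)⁻¹) + y.2.1 = y.2.2)).card : ℂ) * (Fintype.card F : ℂ)
      = ∑ t : F, (∑ x ∈ A ×ˢ P, ψ (t * (x.2 * x.1⁻¹))) ^ e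
          * (∑ c ∈ A, ψ (t * c)) * (∑ s ∈ S, ψ (-(t * s))) := by
  set V := Fintype.piFinset (fun _ : Fin e => A ×ˢ P) with hV
  set Y := V ×ˢ (A ×ˢ S) with hY
  set g : (Fin e → F × F) × F × F → F :=
    fun y => ((∑ i, (y.1 i).2 * ((y.1 i).1)⁻¹) + y.2.1) - y.2.2 with hg
  set cond : (Fin e → F × F) × F × F → Prop :=
    fun y => (∑ i, (y.1 i).2 * ((y.1 i).1)⁻¹) + y.2.1 = y.2.2 with hcond
  have hKe : ∀ t : F, (∑ x ∈ A ×ˢ P, ψ (t * (x.2 * x.1⁻¹))) ^ e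
      = ∑ v ∈ V, ∏ i : Fin e, ψ (t * ((v i).2 * ((v i).1)⁻¹)) := by
    intro t
    calc (∑ x ∈ A ×ˢ P, ψ (t * (x.2 * x.1⁻¹))) ^ e
        = ∏ _i : Fin e, (∑ x ∈ A ×ˢ P, ψ (t * (x.2 * x.1⁻¹))) := by
          rw [Finset.prod_const, Finset.card_univ, Fintype.card_fin]
      _ = ∑ v ∈ V, ∏ i : Fin e, ψ (t * ((v i).2 * ((v i).1)⁻¹)) :=
          Finset.prod_univ_sum _ _
  have hmul : ∀ t : F, (∑ x ∈ A ×ˢ P, ψ (t * (x.2 * x.1⁻¹))) ^ e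
      * (∑ c ∈ A, ψ (t * c)) * (∑ s ∈ S, ψ (-(t * s)))
      = ∑ y ∈ Y, ψ (t * g y) := by
    intro t
    rw [hKe t, mul_assoc, Finset.sum_mul_sum, Finset.sum_mul]
    rw [hY, Finset.sum_product]
    refine Finset.sum_congr rfl fun v hv => ?_
    rw [Finset.mul_sum, Finset.sum_product]
    refine Finset.sum_congr rfl fun c hc => ?_
    rw [Finset.mul_sum]
    refine Finset.sum_congr rfl fun s hs => ?_
    have harg : t * g (v, c, s) = (∑ i : Fin e, t * ((v i).2 * ((v i).1)⁻¹)) + (t * c + -(t * s)) := by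
      rw [hg]
      simp only []
      rw [← Finset.mul_sum]
      try ring
    rw [harg, AddChar.map_add_eq_mul, AddChar.map_add_eq_mul, aux_map_sum]
    try ring
  have hsplit : ((Y.filter cond).card : ℂ) * (Fintype.card F : ℂ)
      = ∑ y ∈ Y, if cond y then (Fintype.card F : ℂ) else 0 := by
    rw [← Finset.sum_filter, Finset.sum_const, nsmul_eq_mul]
  calc ((Y.filter cond).card : ℂ) * (Fintype.card F : ℂ)
      = ∑ y ∈ Y, if cond y then (Fintype.card F : ℂ) else 0 := hsplit
    _ = ∑ y ∈ Y, ∑ t : F, ψ (t * g y) := by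
        refine Finset.sum_congr rfl fun y hy => ?_
        rw [aux_ortho ψ hψ (g y)]
        exact (if_congr sub_eq_zero rfl rfl).symm
    _ = ∑ t : F, ∑ y ∈ Y, ψ (t * g y) := Finset.sum_comm
    _ = ∑ t : F, (∑ x ∈ A ×ˢ P, ψ (t * (x.2 * x.1⁻¹))) ^ e
          * (∑ c ∈ A, ψ (t * c)) * (∑ s ∈ S, ψ (-(t * s))) :=
        Finset.sum_congr rfl fun t _ => (hmul t).symm

lemma aux_lower (e : ℕ) (A P S : Finset F)
    (hP : ∀ a ∈ A, ∀ b ∈ A, a * b ∈ P)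
    (hS : ∀ g : Fin e → F, ∀ c : F, (∀ i, g i ∈ A) → c ∈ A → (∑ i, g i) + c ∈ S) :
    A.card ^ (2 * e + 1)
      ≤ (((Fintype.piFinset (fun _ : Fin e => A ×ˢ P)) ×ˢ (A ×ˢ S)).filter
          (fun y : (Fin e → F × F) × F × F =>
            (∑ i, (y.1 i).2 * ((y.1 i).1)⁻¹) + y.2.1 = y.2.2)).card := by
  obtain ⟨ι, hιinj, hιmem⟩ : ∃ ι : F → F, Set.InjOn ι A ∧ ∀ b ∈ A, ι b ∈ P := by
    by_cases hex : ∃ a ∈ A, a ≠ 0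
    · obtain ⟨a₀, ha₀, ha₀ne⟩ := hex
      exact ⟨fun b => a₀ * b, fun x _ y _ h => mul_left_cancel₀ ha₀ne h,
        fun b hb => hP a₀ ha₀ b hb⟩
    · push_neg at hex
      refine ⟨id, fun x _ y _ h => h, fun b hb => ?_⟩
      have hb0 := hex b hb
      have := hP b hb b hb
      simpa [hb0] using this
  set D := (Fintype.piFinset fun _ : Fin e => A ×ˢ A) ×ˢ A with hD
  set Φ : ((Fin e → F × F) × F) → ((Fin e → F × F) × F × F) :=
    fun z => (fun i => ((z.1 i).1,
        if (z.1 i).1 = 0 then ι (z.1 i).2 else (z.1 i).1 * (z.1 i).2),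
      (z.2, (∑ i, if (z.1 i).1 = 0 then 0 else (z.1 i).2) + z.2)) with hΦ
  have hcard : D.card = A.card ^ (2 * e + 1) := by
    rw [hD, Finset.card_product, Fintype.card_piFinset]
    simp only [Finset.card_product, Finset.prod_const, Finset.card_univ, Fintype.card_fin]
    ring
  rw [← hcard]
  apply Finset.card_le_card_of_injOn Φ
  · rintro ⟨v, c⟩ hz
    rw [hD, Finset.mem_coe, Finset.mem_product] at hz
    obtain ⟨hv, hc⟩ := hz
    rw [Fintype.mem_piFinset] at hv
    have hva : ∀ i, (v i).1 ∈ A := fun i => (Finset.mem_product.1 (hv i)).1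
    have hvb : ∀ i, (v i).2 ∈ A := fun i => (Finset.mem_product.1 (hv i)).2
    simp only [hΦ]
    rw [Finset.mem_coe, Finset.mem_filter]
    constructor
    · rw [Finset.mem_product]
      constructor
      · rw [Fintype.mem_piFinset]
        intro i
        rw [Finset.mem_product]
        refine ⟨hva i, ?_⟩
        by_cases h0 : (v i).1 = 0
        · simp only [h0, if_pos]
          exact hιmem _ (hvb i)
        · simp only [if_neg h0]
          exact hP _ (hva i) _ (hvb i)
      · rw [Finset.mem_product]
        refine ⟨hc, ?_⟩
        apply hS (fun i => if (v i).1 = 0 then 0 else (v i).2) c ?_ hc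
        intro i
        by_cases h0 : (v i).1 = 0
        · simp only [h0, if_pos]
          rw [← h0]
          exact hva i
        · simp only [if_neg h0]
          exact hvb i
    · simp only []
      congr 1
      refine Finset.sum_congr rfl fun i _ => ?_
      by_cases h0 : (v i).1 = 0
      · rw [if_pos h0, if_pos h0, h0, inv_zero, mul_zero]
      · rw [if_neg h0, if_neg h0, mul_comm ((v i).1) ((v i).2), mul_inv_cancel_right₀ h0]
  · rintro ⟨v, c⟩ hz ⟨v', c'⟩ hz' heq
    rw [hD, Finset.mem_coe, Finset.mem_product, Fintype.mem_piFinset] at hz hz'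
    have hvb : ∀ i, (v i).2 ∈ A := fun i => (Finset.mem_product.1 (hz.1 i)).2
    have hvb' : ∀ i, (v' i).2 ∈ A := fun i => (Finset.mem_product.1 (hz'.1 i)).2
    simp only [hΦ, Prod.mk.injEq] at heq
    obtain ⟨h1, h2, _⟩ := heq
    have hcc : c = c' := h2
    refine Prod.ext ?_ hcc
    funext i
    have hi := congrFun h1 i
    rw [Prod.mk.injEq] at hi
    obtain ⟨hia, hib⟩ := hi
    refine Prod.ext hia ?_
    by_cases h0 : (v i).1 = 0
    · rw [if_pos h0, if_pos (hia ▸ h0 : (v' i).1 = 0)] at hib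
      exact hιinj (hvb i) (hvb' i) hib
    · rw [if_neg h0, if_neg (hia ▸ h0 : ¬ (v' i).1 = 0)] at hib
      rw [← hia] at hib
      exact mul_left_cancel₀ h0 hib

theorem stmt11 (F : Type) [Field F] [Fintype F] [DecidableEq F]
    (hodd : Odd (Fintype.card F))
    (d : ℕ) (hd : 2 ≤ d)
    (A : Finset F) :
    ((A.card : ℝ)) ^ (2 * d - 1)
      ≤ (A.card : ℝ) ^ d
          * (((A ×ˢ A).image (fun p => p.1 * p.2)).card : ℝ) ^ (d - 1)
          * (((Fintype.piFinset (fun _ : Fin d => A)).image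
                (fun f => ∑ i, f i)).card : ℝ)
          / Fintype.card F
        + Real.sqrt ((Fintype.card F : ℝ) ^ d * (A.card : ℝ) ^ d
            * (((A ×ˢ A).image (fun p => p.1 * p.2)).card : ℝ) ^ (d - 1)
            * (((Fintype.piFinset (fun _ : Fin d => A)).image
                  (fun f => ∑ i, f i)).card : ℝ)) := by
  obtain ⟨e, rfl⟩ : ∃ e, d = e + 1 := ⟨d - 1, by omega⟩
  have hexp1 : 2 * (e + 1) - 1 = 2 * e + 1 := by omega
  have hexp2 : (e + 1) - 1 = e := by omega
  rw [hexp1, hexp2]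
  set P := (A ×ˢ A).image (fun p : F × F => p.1 * p.2) with hPdef
  set S := (Fintype.piFinset (fun _ : Fin (e+1) => A)).image (fun f => ∑ i, f i) with hSdef
  obtain ⟨ψ, hψ⟩ := aux_exists_char (F := F)
  have hq1 : (1 : ℝ) ≤ (Fintype.card F : ℝ) := by exact_mod_cast Fintype.card_pos
  have hq0 : (0 : ℝ) < (Fintype.card F : ℝ) := lt_of_lt_of_le zero_lt_one hq1
  -- membership helpers
  have hP : ∀ a ∈ A, ∀ b ∈ A, a * b ∈ P := fun a ha b hb =>
    Finset.mem_image.2 ⟨(a, b), Finset.mem_product.2 ⟨ha, hb⟩, rfl⟩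
  have hS : ∀ g : Fin e → F, ∀ c : F, (∀ i, g i ∈ A) → c ∈ A → (∑ i, g i) + c ∈ S := by
    intro g c hg hc
    refine Finset.mem_image.2 ⟨Fin.snoc g c, ?_, ?_⟩
    · rw [Fintype.mem_piFinset]
      intro j
      refine Fin.lastCases ?_ ?_ j
      · rw [Fin.snoc_last]; exact hc
      · intro i; rw [Fin.snoc_castSucc]; exact hg i
    · rw [Fin.sum_univ_castSucc]
      simp only [Fin.snoc_castSucc, Fin.snoc_last]
  -- the count
  set T := (((Fintype.piFinset (fun _ : Fin e => A ×ˢ P)) ×ˢ (A ×ˢ S)).filter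
      (fun y : (Fin e → F × F) × F × F =>
        (∑ i, (y.1 i).2 * ((y.1 i).1)⁻¹) + y.2.1 = y.2.2)) with hT
  have hlow : (A.card : ℝ) ^ (2 * e + 1) ≤ (T.card : ℝ) := by
    have := aux_lower e A P S hP hS
    exact_mod_cast this
  -- character sums
  set K : F → ℂ := fun t => ∑ x ∈ A ×ˢ P, ψ (t * (x.2 * x.1⁻¹)) with hK
  set cA : F → ℂ := fun t => ∑ c ∈ A, ψ (t * c) with hcA
  set cS : F → ℂ := fun t => ∑ s ∈ S, ψ (-(t * s)) with hcS
  have hexpand : (T.card : ℂ) * (Fintype.card F : ℂ)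
      = ∑ t : F, K t ^ e * cA t * cS t := aux_expand ψ hψ e A P S
  have hf0 : K 0 ^ e * cA 0 * cS 0
      = (A.card : ℂ) ^ (e + 1) * (P.card : ℂ) ^ e * (S.card : ℂ) := by
    have h1 : K 0 = ((A.card * P.card : ℕ) : ℂ) := by
      rw [hK]
      simp [AddChar.map_zero_eq_one, Finset.sum_const, Finset.card_product]
    have h2 : cA 0 = (A.card : ℂ) := by
      rw [hcA]; simp [AddChar.map_zero_eq_one, Finset.sum_const]
    have h3 : cS 0 = (S.card : ℂ) := by
      rw [hcS]; simp [AddChar.map_zero_eq_one, Finset.sum_const]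
    rw [h1, h2, h3]
    push_cast
    ring
  have hdiff : (T.card : ℂ) * (Fintype.card F : ℂ)
        - (A.card : ℂ) ^ (e + 1) * (P.card : ℂ) ^ e * (S.card : ℂ)
      = ∑ t ∈ Finset.univ.erase (0 : F), K t ^ e * cA t * cS t := by
    rw [hexpand, ← Finset.add_sum_erase Finset.univ _ (Finset.mem_univ (0 : F)), hf0]
    ring
  -- error bound
  set B : ℝ := Real.sqrt ((A.card : ℝ) * ((Fintype.card F : ℝ) * P.card)) with hB
  have hBnn : 0 ≤ B := Real.sqrt_nonneg _
  have hcA2 : ∑ t : F, ‖cA t‖ ^ 2 = (Fintype.card F : ℝ) * A.card := aux_parseval ψ hψ A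
  have hcS2 : ∑ t : F, ‖cS t‖ ^ 2 = (Fintype.card F : ℝ) * S.card := by
    have h1 : ∀ t : F, cS t = ∑ s ∈ S, ψ ((-t) * s) := by
      intro t
      rw [hcS]
      exact Finset.sum_congr rfl fun s _ => by rw [neg_mul]
    calc ∑ t : F, ‖cS t‖ ^ 2 = ∑ t : F, ‖∑ s ∈ S, ψ (t * s)‖ ^ 2 := by
          refine Fintype.sum_equiv (Equiv.neg F) _ _ fun t => ?_
          rw [h1 t]
          simp only [Equiv.neg_apply]
      _ = (Fintype.card F : ℝ) * S.card := aux_parseval ψ hψ S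
  have hCS : ∑ t : F, ‖cA t‖ * ‖cS t‖
      ≤ Real.sqrt (((Fintype.card F : ℝ) * A.card) * ((Fintype.card F : ℝ) * S.card)) := by
    have h1 := Finset.sum_mul_sq_le_sq_mul_sq Finset.univ (fun t : F => ‖cA t‖)
      (fun t : F => ‖cS t‖)
    have h2 : (∑ t : F, ‖cA t‖ * ‖cS t‖) ^ 2
        ≤ ((Fintype.card F : ℝ) * A.card) * ((Fintype.card F : ℝ) * S.card) := by
      calc (∑ t : F, ‖cA t‖ * ‖cS t‖) ^ 2
          ≤ (∑ t : F, ‖cA t‖ ^ 2) * ∑ t : F, ‖cS t‖ ^ 2 := h1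
        _ = _ := by rw [hcA2, hcS2]
    have h3 : 0 ≤ ∑ t : F, ‖cA t‖ * ‖cS t‖ :=
      Finset.sum_nonneg fun t _ => mul_nonneg (norm_nonneg _) (norm_nonneg _)
    calc ∑ t : F, ‖cA t‖ * ‖cS t‖
        = Real.sqrt ((∑ t : F, ‖cA t‖ * ‖cS t‖) ^ 2) := (Real.sqrt_sq h3).symm
      _ ≤ _ := Real.sqrt_le_sqrt h2
  have herr : ‖∑ t ∈ Finset.univ.erase (0 : F), K t ^ e * cA t * cS t‖
      ≤ B ^ e * Real.sqrt (((Fintype.card F : ℝ) * A.card)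
          * ((Fintype.card F : ℝ) * S.card)) := by
    calc ‖∑ t ∈ Finset.univ.erase (0 : F), K t ^ e * cA t * cS t‖
        ≤ ∑ t ∈ Finset.univ.erase (0 : F), ‖K t ^ e * cA t * cS t‖ := norm_sum_le _ _
      _ ≤ ∑ t ∈ Finset.univ.erase (0 : F), B ^ e * (‖cA t‖ * ‖cS t‖) := by
          refine Finset.sum_le_sum fun t ht => ?_
          have ht0 : t ≠ 0 := (Finset.mem_erase.1 ht).1
          rw [norm_mul, norm_mul, norm_pow, mul_assoc]
          refine mul_le_mul_of_nonneg_right ?_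
            (mul_nonneg (norm_nonneg _) (norm_nonneg _))
          exact pow_le_pow_left₀ (norm_nonneg _) (aux_K ψ hψ A P ht0) e
      _ = B ^ e * ∑ t ∈ Finset.univ.erase (0 : F), ‖cA t‖ * ‖cS t‖ := by
          rw [Finset.mul_sum]
      _ ≤ B ^ e * ∑ t : F, ‖cA t‖ * ‖cS t‖ := by
          refine mul_le_mul_of_nonneg_left ?_ (pow_nonneg hBnn e)
          exact Finset.sum_le_sum_of_subset_of_nonneg (Finset.subset_univ _)
            (fun t _ _ => mul_nonneg (norm_nonneg _) (norm_nonneg _))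
      _ ≤ B ^ e * Real.sqrt (((Fintype.card F : ℝ) * A.card)
            * ((Fintype.card F : ℝ) * S.card)) :=
          mul_le_mul_of_nonneg_left hCS (pow_nonneg hBnn e)
  -- upper bound on T.card
  have hupper : (T.card : ℝ) * (Fintype.card F : ℝ)
      ≤ (A.card : ℝ) ^ (e + 1) * (P.card : ℝ) ^ e * (S.card : ℝ)
        + B ^ e * Real.sqrt (((Fintype.card F : ℝ) * A.card)
            * ((Fintype.card F : ℝ) * S.card)) := by
    have hre : (T.card : ℝ) * (Fintype.card F : ℝ)
          - (A.card : ℝ) ^ (e + 1) * (P.card : ℝ) ^ e * (S.card : ℝ)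
        ≤ ‖(T.card : ℂ) * (Fintype.card F : ℂ)
            - (A.card : ℂ) ^ (e + 1) * (P.card : ℂ) ^ e * (S.card : ℂ)‖ := by
      have heq : ((T.card : ℂ) * (Fintype.card F : ℂ)
            - (A.card : ℂ) ^ (e + 1) * (P.card : ℂ) ^ e * (S.card : ℂ))
          = (((T.card : ℝ) * (Fintype.card F : ℝ)
            - (A.card : ℝ) ^ (e + 1) * (P.card : ℝ) ^ e * (S.card : ℝ) : ℝ) : ℂ) := by
        push_cast
        ring
      have heq2 : ((T.card : ℝ) * (Fintype.card F : ℝ)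
            - (A.card : ℝ) ^ (e + 1) * (P.card : ℝ) ^ e * (S.card : ℝ) : ℝ)
          = ((T.card : ℂ) * (Fintype.card F : ℂ)
            - (A.card : ℂ) ^ (e + 1) * (P.card : ℂ) ^ e * (S.card : ℂ)).re := by
        rw [heq, Complex.ofReal_re]
      rw [heq2]
      exact Complex.re_le_norm _
    rw [hdiff] at hre
    have := hre.trans herr
    linarith
  -- final error comparison
  have hx : (0 : ℝ) ≤ (A.card : ℝ) * ((Fintype.card F : ℝ) * P.card) :=
    mul_nonneg (Nat.cast_nonneg _) (mul_nonneg (Nat.cast_nonneg _) (Nat.cast_nonneg _))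
  have hy : (0 : ℝ) ≤ (A.card : ℝ) * (S.card : ℝ) :=
    mul_nonneg (Nat.cast_nonneg _) (Nat.cast_nonneg _)
  have hB2 : B ^ 2 = (A.card : ℝ) * ((Fintype.card F : ℝ) * P.card) := Real.sq_sqrt hx
  have hfinal : B ^ e * Real.sqrt ((A.card : ℝ) * (S.card : ℝ))
      ≤ Real.sqrt ((Fintype.card F : ℝ) ^ (e + 1) * (A.card : ℝ) ^ (e + 1)
          * (P.card : ℝ) ^ e * (S.card : ℝ)) := by
    have hnn : 0 ≤ B ^ e * Real.sqrt ((A.card : ℝ) * (S.card : ℝ)) :=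
      mul_nonneg (pow_nonneg hBnn e) (Real.sqrt_nonneg _)
    have hsq2 : (B ^ e * Real.sqrt ((A.card : ℝ) * (S.card : ℝ))) ^ 2
        = ((A.card : ℝ) * ((Fintype.card F : ℝ) * P.card)) ^ e
          * ((A.card : ℝ) * (S.card : ℝ)) := by
      rw [mul_pow, Real.sq_sqrt hy, ← pow_mul, mul_comm e 2, pow_mul, hB2]
    have hle : ((A.card : ℝ) * ((Fintype.card F : ℝ) * P.card)) ^ e
          * ((A.card : ℝ) * (S.card : ℝ))
        ≤ (Fintype.card F : ℝ) ^ (e + 1) * (A.card : ℝ) ^ (e + 1)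
          * (P.card : ℝ) ^ e * (S.card : ℝ) := by
      have h1 : ((A.card : ℝ) * ((Fintype.card F : ℝ) * P.card)) ^ e
            * ((A.card : ℝ) * (S.card : ℝ))
          = (Fintype.card F : ℝ) ^ e
            * ((A.card : ℝ) ^ (e + 1) * (P.card : ℝ) ^ e * (S.card : ℝ)) := by
        rw [mul_pow, mul_pow]
        ring
      have h2 : (Fintype.card F : ℝ) ^ e ≤ (Fintype.card F : ℝ) ^ (e + 1) :=
        pow_le_pow_right₀ hq1 (by omega)
      have h3 : (0 : ℝ) ≤ (A.card : ℝ) ^ (e + 1) * (P.card : ℝ) ^ e * (S.card : ℝ) :=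
        mul_nonneg (mul_nonneg (pow_nonneg (Nat.cast_nonneg _) _)
          (pow_nonneg (Nat.cast_nonneg _) _)) (Nat.cast_nonneg _)
      calc ((A.card : ℝ) * ((Fintype.card F : ℝ) * P.card)) ^ e
            * ((A.card : ℝ) * (S.card : ℝ))
          = (Fintype.card F : ℝ) ^ e
            * ((A.card : ℝ) ^ (e + 1) * (P.card : ℝ) ^ e * (S.card : ℝ)) := h1
        _ ≤ (Fintype.card F : ℝ) ^ (e + 1)
            * ((A.card : ℝ) ^ (e + 1) * (P.card : ℝ) ^ e * (S.card : ℝ)) :=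
            mul_le_mul_of_nonneg_right h2 h3
        _ = (Fintype.card F : ℝ) ^ (e + 1) * (A.card : ℝ) ^ (e + 1)
            * (P.card : ℝ) ^ e * (S.card : ℝ) := by ring
    calc B ^ e * Real.sqrt ((A.card : ℝ) * (S.card : ℝ))
        = Real.sqrt ((B ^ e * Real.sqrt ((A.card : ℝ) * (S.card : ℝ))) ^ 2) :=
          (Real.sqrt_sq hnn).symm
      _ ≤ _ := Real.sqrt_le_sqrt (by rw [hsq2]; exact hle)
  have hsqq : Real.sqrt (((Fintype.card F : ℝ) * A.card) * ((Fintype.card F : ℝ) * S.card))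
      = (Fintype.card F : ℝ) * Real.sqrt ((A.card : ℝ) * (S.card : ℝ)) := by
    rw [show ((Fintype.card F : ℝ) * A.card) * ((Fintype.card F : ℝ) * S.card)
        = (Fintype.card F : ℝ) ^ 2 * ((A.card : ℝ) * (S.card : ℝ)) by ring]
    rw [Real.sqrt_mul (sq_nonneg _), Real.sqrt_sq hq0.le]
  calc ((A.card : ℝ)) ^ (2 * e + 1) ≤ (T.card : ℝ) := hlow
    _ ≤ ((A.card : ℝ) ^ (e + 1) * (P.card : ℝ) ^ e * (S.card : ℝ)
          + B ^ e * Real.sqrt (((Fintype.card F : ℝ) * A.card)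
            * ((Fintype.card F : ℝ) * S.card))) / (Fintype.card F : ℝ) := by
        rw [le_div_iff₀ hq0]
        exact hupper
    _ = (A.card : ℝ) ^ (e + 1) * (P.card : ℝ) ^ e * (S.card : ℝ) / (Fintype.card F : ℝ)
          + B ^ e * Real.sqrt ((A.card : ℝ) * (S.card : ℝ)) := by
        rw [hsqq]
        rw [add_div]
        congr 1
        rw [mul_left_comm, mul_div_cancel_left₀ _ hq0.ne']
    _ ≤ (A.card : ℝ) ^ (e + 1) * (P.card : ℝ) ^ e * (S.card : ℝ) / (Fintype.card F : ℝ)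
          + Real.sqrt ((Fintype.card F : ℝ) ^ (e + 1) * (A.card : ℝ) ^ (e + 1)
            * (P.card : ℝ) ^ e * (S.card : ℝ)) := add_le_add_right hfinal _
end

section
/- For any A ⊆ F_q, |A|³ ≤ |A·A| |A|² |A+A| / q + √(q |A·A| |A|² |A+A|); consequently |A+A| · |A·A| ≫ min( q|A|, |A|⁴/q ). -/
open Finset

variable {F : Type} [Field F] [Fintype F] [DecidableEq F]

-- number of solutions of a linear equation
lemma count_lin (u v : F) :
    (univ.filter fun s : F => u * s = v).card
      = if u = 0 then (if v = 0 then Fintype.card F else 0) else 1 := by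
  split_ifs with hu hv
  · subst hu; subst hv; simp
  · subst hu; simp [eq_comm, hv]
  · have : (univ.filter fun s : F => u * s = v) = {u⁻¹ * v} := by
      ext s
      simp only [mem_filter, mem_univ, true_and, mem_singleton]
      constructor
      · rintro rfl; field_simp
      · rintro rfl; field_simp
    rw [this, card_singleton]

-- cardinality of a graph-like filter
lemma count_graph (g : F → F) (Q : F → Prop) [DecidablePred Q] :
    (univ.filter fun sp : F × F => sp.2 = g sp.1 ∧ Q sp.1).card
      = (univ.filter Q).card := by
  apply Finset.card_nbij' (i := fun sp => sp.1) (j := fun s => (s, g s))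
  · intro sp h; simp only [mem_coe, mem_filter, mem_univ, true_and] at h ⊢; exact h.2
  · intro s h; simp only [mem_coe, mem_filter, mem_univ, true_and] at h ⊢; exact h
  · intro sp h; simp only [mem_coe, mem_filter, mem_univ, true_and] at h
    exact Prod.ext rfl h.1.symm
  · intro s h; rfl

set_option linter.unusedSectionVars false

lemma count_graph'_s13 (g : F → F) :
    (univ.filter fun sp : F × F => g sp.1 = sp.2).card = Fintype.card F := by
  have : (univ.filter fun sp : F × F => g sp.1 = sp.2)
      = univ.filter fun sp : F × F => sp.2 = g sp.1 ∧ True := by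
    ext sp; simp [eq_comm]
  rw [this, count_graph (fun x : F => g x) (fun _ => True)]
  simp

lemma count_pair (b c b' c' : F) (hc : c ≠ 0) (hc' : c' ≠ 0) :
    (univ.filter fun sp : F × F =>
        (sp.1 - b) * c = sp.2 ∧ (sp.1 - b') * c' = sp.2).card
      = if c = c' then (if b = b' then Fintype.card F else 0) else 1 := by
  have h1 : (univ.filter fun sp : F × F =>
        (sp.1 - b) * c = sp.2 ∧ (sp.1 - b') * c' = sp.2)
      = univ.filter fun sp : F × F =>
          sp.2 = (sp.1 - b) * c ∧ (c - c') * sp.1 = b * c - b' * c' := by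
    ext sp
    simp only [mem_filter, mem_univ, true_and]
    constructor
    · rintro ⟨h, h'⟩
      refine ⟨h.symm, ?_⟩
      have := h.trans h'.symm
      ring_nf at this ⊢
      linear_combination this
    · rintro ⟨h, h'⟩
      refine ⟨h.symm, ?_⟩
      rw [h]
      ring_nf
      linear_combination -h'
  rw [h1, count_graph (fun x : F => (x - b) * c) (fun x : F => (c - c') * x = b * c - b' * c'), count_lin]
  by_cases h2 : c = c'
  · subst h2
    rw [if_pos rfl, if_pos (show c - c = 0 by ring)]
    by_cases h3 : b = b'
    · subst h3; rw [if_pos rfl, if_pos (by ring)]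
    · rw [if_neg h3, if_neg ?_]
      intro h
      apply h3
      have h4 : (b - b') * c = 0 := by linear_combination h
      rcases mul_eq_zero.1 h4 with h5 | h5
      · exact sub_eq_zero.1 h5
      · exact absurd h5 hc
  · rw [if_neg h2, if_neg (fun h => h2 (sub_eq_zero.1 h))]

lemma sum_r (A : Finset F) :
    ∑ sp : F × F, ((A ×ˢ A.erase 0).filter fun bc => (sp.1 - bc.1) * bc.2 = sp.2).card
      = A.card * (A.erase 0).card * Fintype.card F := by
  calc ∑ sp : F × F, ((A ×ˢ A.erase 0).filter fun bc => (sp.1 - bc.1) * bc.2 = sp.2).card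
      = ∑ sp : F × F, ∑ bc ∈ A ×ˢ A.erase 0, if (sp.1 - bc.1) * bc.2 = sp.2 then 1 else 0 := by
        simp only [Finset.card_filter]
    _ = ∑ bc ∈ A ×ˢ A.erase 0, ∑ sp : F × F, if (sp.1 - bc.1) * bc.2 = sp.2 then 1 else 0 :=
        Finset.sum_comm
    _ = ∑ bc ∈ A ×ˢ A.erase 0, (univ.filter fun sp : F × F => (sp.1 - bc.1) * bc.2 = sp.2).card := by
        simp only [Finset.card_filter]
    _ = ∑ bc ∈ A ×ˢ A.erase 0, Fintype.card F := by
        refine sum_congr rfl fun bc _ => ?_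
        exact count_graph'_s13 (fun x => (x - bc.1) * bc.2)
    _ = A.card * (A.erase 0).card * Fintype.card F := by
        rw [Finset.sum_const, Finset.card_product, smul_eq_mul]

lemma sum_r_sq (A : Finset F) :
    ∑ sp : F × F,
        (((A ×ˢ A.erase 0).filter fun bc => (sp.1 - bc.1) * bc.2 = sp.2).card) ^ 2
      + A.card ^ 2 * (A.erase 0).card
    = A.card ^ 2 * (A.erase 0).card ^ 2
      + Fintype.card F * (A.card * (A.erase 0).card) := by
  set B := A ×ˢ A.erase 0 with hB
  have key : ∑ sp : F × F,
        ((B.filter fun bc => (sp.1 - bc.1) * bc.2 = sp.2).card) ^ 2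
      = ∑ bc ∈ B, ∑ bc' ∈ B,
          (if bc.2 = bc'.2 then (if bc.1 = bc'.1 then Fintype.card F else 0) else 1) := by
    calc ∑ sp : F × F, ((B.filter fun bc => (sp.1 - bc.1) * bc.2 = sp.2).card) ^ 2
        = ∑ sp : F × F, ∑ bc ∈ B, ∑ bc' ∈ B,
            ((if (sp.1 - bc.1) * bc.2 = sp.2 then 1 else 0)
              * (if (sp.1 - bc'.1) * bc'.2 = sp.2 then 1 else 0)) := by
          refine Finset.sum_congr rfl fun sp _ => ?_
          rw [sq, Finset.card_filter, Finset.sum_mul_sum]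
      _ = ∑ bc ∈ B, ∑ bc' ∈ B, ∑ sp : F × F,
            ((if (sp.1 - bc.1) * bc.2 = sp.2 then 1 else 0)
              * (if (sp.1 - bc'.1) * bc'.2 = sp.2 then 1 else 0)) := by
          rw [Finset.sum_comm]
          refine Finset.sum_congr rfl fun bc _ => Finset.sum_comm
      _ = ∑ bc ∈ B, ∑ bc' ∈ B,
          (if bc.2 = bc'.2 then (if bc.1 = bc'.1 then Fintype.card F else 0) else 1) := by
          refine Finset.sum_congr rfl fun bc hbc => Finset.sum_congr rfl fun bc' hbc' => ?_
          have hc : bc.2 ≠ 0 := (Finset.mem_erase.1 (Finset.mem_product.1 hbc).2).1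
          have hc' : bc'.2 ≠ 0 := (Finset.mem_erase.1 (Finset.mem_product.1 hbc').2).1
          rw [← count_pair bc.1 bc.2 bc'.1 bc'.2 hc hc', Finset.card_filter]
          refine Finset.sum_congr rfl fun sp _ => ?_
          split_ifs <;> simp_all
  have point : ∀ bc bc' : F × F,
      (if bc.2 = bc'.2 then (if bc.1 = bc'.1 then Fintype.card F else 0) else 1)
        = (if bc.2 = bc'.2 then 0 else 1)
          + Fintype.card F * (if bc = bc' then 1 else 0) := by
    intro bc bc'
    by_cases h1 : bc.2 = bc'.2 <;> by_cases h2 : bc.1 = bc'.1 <;>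
      simp_all [Prod.ext_iff]
  have split : ∑ bc ∈ B, ∑ bc' ∈ B,
        (if bc.2 = bc'.2 then (if bc.1 = bc'.1 then Fintype.card F else 0) else 1)
      = (∑ bc ∈ B, ∑ bc' ∈ B, if bc.2 = bc'.2 then 0 else 1)
        + Fintype.card F * B.card := by
    have diag : ∑ bc ∈ B, ∑ bc' ∈ B, (if bc = bc' then 1 else 0) = B.card := by
      have : ∀ bc ∈ B, (∑ bc' ∈ B, if bc = bc' then 1 else 0) = 1 := by
        intro bc hbc
        rw [Finset.sum_ite_eq]
        simp [hbc]
      rw [Finset.sum_congr rfl this, Finset.sum_const, smul_eq_mul, mul_one]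
    calc ∑ bc ∈ B, ∑ bc' ∈ B,
          (if bc.2 = bc'.2 then (if bc.1 = bc'.1 then Fintype.card F else 0) else 1)
        = ∑ bc ∈ B, ∑ bc' ∈ B, ((if bc.2 = bc'.2 then 0 else 1)
            + Fintype.card F * (if bc = bc' then 1 else 0)) := by
          exact Finset.sum_congr rfl fun bc _ => Finset.sum_congr rfl fun bc' _ => point bc bc'
      _ = (∑ bc ∈ B, ∑ bc' ∈ B, if bc.2 = bc'.2 then 0 else 1)
          + Fintype.card F * (∑ bc ∈ B, ∑ bc' ∈ B, (if bc = bc' then 1 else 0)) := by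
          simp only [Finset.sum_add_distrib, Finset.mul_sum]
      _ = _ := by rw [diag]
  have compl : (∑ bc ∈ B, ∑ bc' ∈ B, if bc.2 = bc'.2 then 0 else 1)
        + (∑ bc ∈ B, ∑ bc' ∈ B, if bc.2 = bc'.2 then 1 else 0)
      = B.card ^ 2 := by
    have h1 : ∀ bc : F × F, ((∑ bc' ∈ B, if bc.2 = bc'.2 then 0 else 1)
        + ∑ bc' ∈ B, if bc.2 = bc'.2 then 1 else 0) = B.card := by
      intro bc
      rw [← Finset.sum_add_distrib]
      have h2 : ∀ bc' ∈ B, ((if bc.2 = bc'.2 then 0 else 1)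
          + (if bc.2 = bc'.2 then 1 else 0)) = 1 := fun bc' _ => by split_ifs <;> rfl
      rw [Finset.sum_congr rfl h2, Finset.sum_const, smul_eq_mul, mul_one]
    rw [← Finset.sum_add_distrib, Finset.sum_congr rfl fun bc _ => h1 bc,
      Finset.sum_const, smul_eq_mul, sq]
  have hY : (∑ bc ∈ B, ∑ bc' ∈ B, if bc.2 = bc'.2 then 1 else 0)
      = A.card ^ 2 * (A.erase 0).card := by
    rw [hB]
    rw [Finset.sum_product]
    have inner : ∀ b ∈ A, ∀ c ∈ A.erase 0,
        (∑ bc' ∈ A ×ˢ A.erase 0, if c = bc'.2 then (1:ℕ) else 0) = A.card := by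
      intro b _ c hc
      rw [Finset.sum_product]
      have : ∀ b' ∈ A, (∑ c' ∈ A.erase 0, if c = c' then (1:ℕ) else 0) = 1 := by
        intro b' _
        rw [Finset.sum_ite_eq]
        simp [hc]
      rw [Finset.sum_congr rfl this, Finset.sum_const, smul_eq_mul, mul_one]
    calc ∑ b ∈ A, ∑ c ∈ A.erase 0, ∑ bc' ∈ A ×ˢ A.erase 0, (if (b, c).2 = bc'.2 then (1:ℕ) else 0)
        = ∑ b ∈ A, ∑ c ∈ A.erase 0, A.card := by
          exact Finset.sum_congr rfl fun b hb =>
            Finset.sum_congr rfl fun c hc => inner b hb c hc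
      _ = A.card ^ 2 * (A.erase 0).card := by
          simp only [Finset.sum_const, smul_eq_mul]
          ring
  have hBcard : B.card = A.card * (A.erase 0).card := by
    rw [hB, Finset.card_product]
  rw [key, split]
  have e1 : (∑ bc ∈ B, ∑ bc' ∈ B, if bc.2 = bc'.2 then 0 else 1)
      + A.card ^ 2 * (A.erase 0).card = A.card ^ 2 * (A.erase 0).card ^ 2 := by
    rw [← hY, compl, hBcard]; ring
  rw [hBcard]
  linarith

lemma lower_bound (A : Finset F) :
    A.card * A.card * (A.erase 0).card
      ≤ ∑ sp ∈ ((A ×ˢ A).image fun p => p.1 + p.2) ×ˢ ((A ×ˢ A).image fun p => p.1 * p.2),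
          ((A ×ˢ A.erase 0).filter fun bc => (sp.1 - bc.1) * bc.2 = sp.2).card := by
  set T₀ := ((A ×ˢ A).image fun p => p.1 + p.2) ×ˢ ((A ×ˢ A).image fun p => p.1 * p.2) with hT
  set W := (T₀ ×ˢ (A ×ˢ A.erase 0)).filter
      (fun x : (F × F) × (F × F) => (x.1.1 - x.2.1) * x.2.2 = x.1.2) with hW
  have hWcard : W.card = ∑ sp ∈ T₀,
      ((A ×ˢ A.erase 0).filter fun bc => (sp.1 - bc.1) * bc.2 = sp.2).card := by
    rw [hW, Finset.card_filter, Finset.sum_product]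
    refine Finset.sum_congr rfl fun sp _ => ?_
    rw [Finset.card_filter]
  rw [← hWcard]
  have : A.card * A.card * (A.erase 0).card = (A ×ˢ (A ×ˢ A.erase 0)).card := by
    rw [Finset.card_product, Finset.card_product]; ring
  rw [this]
  apply Finset.card_le_card_of_injOn
      (fun x : F × F × F => ((x.2.1 + x.1, x.1 * x.2.2), (x.2.1, x.2.2)))
  · rintro ⟨a, b, c⟩ hx
    simp only [Finset.mem_coe, Finset.mem_product, Finset.mem_erase] at hx
    obtain ⟨ha, hb, hc0, hc⟩ := hx
    rw [hW]
    refine Finset.mem_filter.2 ⟨?_, by simp⟩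
    refine Finset.mem_product.2 ⟨?_, ?_⟩
    · rw [hT]
      refine Finset.mem_product.2 ⟨?_, ?_⟩
      · exact Finset.mem_image.2 ⟨(b, a), Finset.mem_product.2 ⟨hb, ha⟩, rfl⟩
      · exact Finset.mem_image.2 ⟨(a, c), Finset.mem_product.2 ⟨ha, hc⟩, rfl⟩
    · exact Finset.mem_product.2 ⟨hb, Finset.mem_erase.2 ⟨hc0, hc⟩⟩
  · rintro ⟨a, b, c⟩ _ ⟨a', b', c'⟩ _ h
    simp only [Prod.mk.injEq] at h
    obtain ⟨⟨h1, -⟩, h2, h3⟩ := h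
    subst h2; subst h3
    have : a = a' := by
      have := add_left_cancel (h1 : b + a = b + a')
      exact this
    simp [this]

lemma master (A : Finset F) :
    ((A.card : ℝ)) ^ 2 * ((A.erase 0).card : ℝ)
      ≤ (A.card : ℝ) * ((A.erase 0).card : ℝ)
          * ((((A ×ˢ A).image fun p => p.1 + p.2).card : ℝ))
          * ((((A ×ˢ A).image fun p => p.1 * p.2).card : ℝ)) / (Fintype.card F : ℝ)
        + Real.sqrt (((((A ×ˢ A).image fun p => p.1 + p.2).card : ℝ))
            * ((((A ×ˢ A).image fun p => p.1 * p.2).card : ℝ))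
            * ((A.card : ℝ) * ((A.erase 0).card : ℝ) * ((Fintype.card F : ℝ) - A.card))) := by
  set r : F × F → ℕ :=
    fun sp => ((A ×ˢ A.erase 0).filter fun bc => (sp.1 - bc.1) * bc.2 = sp.2).card with hr
  set q : ℝ := (Fintype.card F : ℝ) with hq
  set n : ℝ := (A.card : ℝ) with hn
  set m : ℝ := ((A.erase 0).card : ℝ) with hm
  set S : ℝ := ((((A ×ˢ A).image fun p => p.1 + p.2).card : ℝ)) with hS
  set P : ℝ := ((((A ×ˢ A).image fun p => p.1 * p.2).card : ℝ)) with hP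
  set T₀ := ((A ×ˢ A).image fun p => p.1 + p.2) ×ˢ ((A ×ˢ A).image fun p => p.1 * p.2) with hT
  have hq0 : 0 < q := by
    rw [hq]; exact_mod_cast Fintype.card_pos
  have hsum : ∑ sp : F × F, (r sp : ℝ) = n * m * q := by
    rw [hn, hm, hq]
    rw [← Nat.cast_sum]
    exact_mod_cast congrArg (Nat.cast : ℕ → ℝ) (sum_r A)
  have hsumsq : ∑ sp : F × F, ((r sp : ℝ)) ^ 2 = n ^ 2 * m ^ 2 + q * (n * m) - n ^ 2 * m := by
    have := congrArg (Nat.cast : ℕ → ℝ) (sum_r_sq A)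
    push_cast at this
    rw [hn, hm, hq]
    linarith
  set μ : ℝ := n * m / q with hμ
  have hV : ∑ sp : F × F, ((r sp : ℝ) - μ) ^ 2 = n * m * (q - n) := by
    have expand : ∑ sp : F × F, ((r sp : ℝ) - μ) ^ 2
        = (∑ sp : F × F, ((r sp : ℝ)) ^ 2) - 2 * μ * (∑ sp : F × F, (r sp : ℝ))
          + (Fintype.card F : ℝ) ^ 2 * μ ^ 2 := by
      have : ∀ sp : F × F, ((r sp : ℝ) - μ) ^ 2
          = ((r sp : ℝ)) ^ 2 - 2 * μ * (r sp : ℝ) + μ ^ 2 := fun sp => by ring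
      rw [Finset.sum_congr rfl fun sp _ => this sp]
      rw [Finset.sum_add_distrib, Finset.sum_sub_distrib, Finset.sum_const, Finset.card_univ,
        Fintype.card_prod, ← Finset.mul_sum, nsmul_eq_mul]
      push_cast
      ring
    rw [expand, hsum, hsumsq, hμ, ← hq]
    field_simp
    ring
  have hlow : n ^ 2 * m ≤ ∑ sp ∈ T₀, (r sp : ℝ) := by
    have := lower_bound A
    rw [hn, hm, ← Nat.cast_sum]
    calc (A.card : ℝ) ^ 2 * ((A.erase 0).card : ℝ)
        = ((A.card * A.card * (A.erase 0).card : ℕ) : ℝ) := by push_cast; ring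
      _ ≤ _ := by exact_mod_cast this
  have hT₀card : (T₀.card : ℝ) = S * P := by
    rw [hT, Finset.card_product]; push_cast; rw [hS, hP]
  have hSP0 : 0 ≤ S * P := by positivity
  have hCS : ∑ sp ∈ T₀, ((r sp : ℝ) - μ) ≤ Real.sqrt (S * P * (n * m * (q - n))) := by
    have h1 : (∑ sp ∈ T₀, ((r sp : ℝ) - μ)) ^ 2 ≤ (S * P) * (n * m * (q - n)) := by
      have hcs := Finset.sum_mul_sq_le_sq_mul_sq T₀ (fun sp => (r sp : ℝ) - μ) (fun _ => 1)
      simp only [mul_one, one_pow, Finset.sum_const, nsmul_eq_mul, smul_eq_mul] at hcs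
      have hsub : ∑ sp ∈ T₀, ((r sp : ℝ) - μ) ^ 2 ≤ ∑ sp : F × F, ((r sp : ℝ) - μ) ^ 2 :=
        Finset.sum_le_sum_of_subset_of_nonneg (Finset.subset_univ T₀)
          (fun _ _ _ => sq_nonneg _)
      calc (∑ sp ∈ T₀, ((r sp : ℝ) - μ)) ^ 2
          ≤ (∑ sp ∈ T₀, ((r sp : ℝ) - μ) ^ 2) * T₀.card := hcs
        _ ≤ (∑ sp : F × F, ((r sp : ℝ) - μ) ^ 2) * T₀.card := by
            apply mul_le_mul_of_nonneg_right hsub (by positivity)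
        _ = (S * P) * (n * m * (q - n)) := by rw [hV, hT₀card]; ring
    calc ∑ sp ∈ T₀, ((r sp : ℝ) - μ) ≤ |∑ sp ∈ T₀, ((r sp : ℝ) - μ)| := le_abs_self _
      _ = Real.sqrt ((∑ sp ∈ T₀, ((r sp : ℝ) - μ)) ^ 2) := (Real.sqrt_sq_eq_abs _).symm
      _ ≤ Real.sqrt (S * P * (n * m * (q - n))) := Real.sqrt_le_sqrt h1
  have hdecomp : ∑ sp ∈ T₀, (r sp : ℝ)
      = (T₀.card : ℝ) * μ + ∑ sp ∈ T₀, ((r sp : ℝ) - μ) := by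
    rw [Finset.sum_sub_distrib, Finset.sum_const, nsmul_eq_mul]
    ring
  have : n ^ 2 * m ≤ S * P * μ + Real.sqrt (S * P * (n * m * (q - n))) := by
    calc n ^ 2 * m ≤ ∑ sp ∈ T₀, (r sp : ℝ) := hlow
      _ = (T₀.card : ℝ) * μ + ∑ sp ∈ T₀, ((r sp : ℝ) - μ) := hdecomp
      _ ≤ S * P * μ + Real.sqrt (S * P * (n * m * (q - n))) := by
          rw [hT₀card]; linarith [hCS]
  calc n ^ 2 * m ≤ S * P * μ + Real.sqrt (S * P * (n * m * (q - n))) := this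
    _ = n * m * S * P / q + Real.sqrt (S * P * (n * m * (q - n))) := by
        rw [hμ]; ring

lemma le_S_card (A : Finset F) (a : F) (ha : a ∈ A) :
    A.card ≤ ((A ×ˢ A).image fun p => p.1 + p.2).card := by
  have h : A.image (fun b => a + b) ⊆ (A ×ˢ A).image fun p => p.1 + p.2 := by
    intro x hx
    obtain ⟨b, hb, rfl⟩ := Finset.mem_image.1 hx
    exact Finset.mem_image.2 ⟨(a, b), Finset.mem_product.2 ⟨ha, hb⟩, rfl⟩
  calc A.card = (A.image (fun b => a + b)).card :=
        (Finset.card_image_of_injective _ (add_right_injective a)).symm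
    _ ≤ _ := Finset.card_le_card h

lemma le_P_card (A : Finset F) (a : F) (ha : a ∈ A) (ha0 : a ≠ 0) :
    A.card ≤ ((A ×ˢ A).image fun p => p.1 * p.2).card := by
  have h : A.image (fun b => a * b) ⊆ (A ×ˢ A).image fun p => p.1 * p.2 := by
    intro x hx
    obtain ⟨b, hb, rfl⟩ := Finset.mem_image.1 hx
    exact Finset.mem_image.2 ⟨(a, b), Finset.mem_product.2 ⟨ha, hb⟩, rfl⟩
  calc A.card = (A.image (fun b => a * b)).card :=
        (Finset.card_image_of_injective _ (mul_right_injective₀ ha0)).symm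
    _ ≤ _ := Finset.card_le_card h

lemma key_sqrt (n t : ℝ) (h1 : 1 ≤ t) (hn : 1 ≤ n) :
    Real.sqrt ((n ^ 2 - n) * (t ^ 2 - n)) ≤ n * t - n + n ^ 2 / t ^ 2 := by
  have ht0 : (0:ℝ) < t := lt_of_lt_of_le one_pos h1
  have key : (n ^ 2 - n) * (t ^ 2 - n) * t ^ 4 ≤ (n * t ^ 3 - n * t ^ 2 + n ^ 2) ^ 2 := by
    have hA : 0 ≤ n * (t ^ 3 - n * t ^ 2) ^ 2 := by positivity
    have hB : 0 ≤ 2 * n ^ 3 * t ^ 2 * (t - 1) :=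
      mul_nonneg (by positivity) (by linarith)
    have hC : 0 ≤ n ^ 4 := by positivity
    nlinarith [hA, hB, hC]
  have h3 : (n ^ 2 - n) * (t ^ 2 - n) ≤ ((n * t ^ 3 - n * t ^ 2 + n ^ 2) / t ^ 2) ^ 2 := by
    rw [div_pow, le_div_iff₀ (by positivity)]
    calc (n ^ 2 - n) * (t ^ 2 - n) * (t ^ 2) ^ 2
        = (n ^ 2 - n) * (t ^ 2 - n) * t ^ 4 := by ring
      _ ≤ (n * t ^ 3 - n * t ^ 2 + n ^ 2) ^ 2 := key
  have hnum : 0 ≤ (n * t ^ 3 - n * t ^ 2 + n ^ 2) / t ^ 2 := by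
    have : 0 ≤ n * t ^ 2 * (t - 1) + n ^ 2 := by
      have := mul_nonneg (mul_nonneg (by linarith : (0:ℝ) ≤ n) (by positivity : (0:ℝ) ≤ t ^ 2))
        (by linarith : (0:ℝ) ≤ t - 1)
      nlinarith
    apply div_nonneg _ (by positivity)
    nlinarith
  calc Real.sqrt ((n ^ 2 - n) * (t ^ 2 - n))
      ≤ Real.sqrt (((n * t ^ 3 - n * t ^ 2 + n ^ 2) / t ^ 2) ^ 2) := Real.sqrt_le_sqrt h3
    _ = (n * t ^ 3 - n * t ^ 2 + n ^ 2) / t ^ 2 := Real.sqrt_sq hnum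
    _ = n * t - n + n ^ 2 / t ^ 2 := by field_simp

set_option maxHeartbeats 1000000 in
lemma part1 (A : Finset F) (hq2 : 2 ≤ Fintype.card F) :
    ((A.card : ℝ)) ^ 3
      ≤ (((A ×ˢ A).image (fun p => p.1 * p.2)).card : ℝ) * (A.card : ℝ) ^ 2
          * (((A ×ˢ A).image (fun p => p.1 + p.2)).card : ℝ) / Fintype.card F
        + Real.sqrt ((Fintype.card F : ℝ)
            * (((A ×ˢ A).image (fun p => p.1 * p.2)).card : ℝ)
            * (A.card : ℝ) ^ 2
            * (((A ×ˢ A).image (fun p => p.1 + p.2)).card : ℝ)) := by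
  have hmaster := master A
  set q : ℝ := (Fintype.card F : ℝ) with hq
  set n : ℝ := (A.card : ℝ) with hn
  set S : ℝ := ((((A ×ˢ A).image fun p => p.1 + p.2).card : ℝ)) with hS
  set P : ℝ := ((((A ×ˢ A).image fun p => p.1 * p.2).card : ℝ)) with hP
  have hq0 : 0 < q := by rw [hq]; exact_mod_cast Fintype.card_pos
  have hq2' : (2:ℝ) ≤ q := by rw [hq]; exact_mod_cast hq2
  have hqn : n ≤ q := by
    rw [hn, hq]
    exact_mod_cast (Finset.card_le_univ A).trans_eq (Finset.card_univ)
  have hn0 : (0:ℝ) ≤ n := by rw [hn]; positivity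
  have hS0 : (0:ℝ) ≤ S := by rw [hS]; positivity
  have hP0 : (0:ℝ) ≤ P := by rw [hP]; positivity
  clear_value q n S P
  by_cases h0 : (0:F) ∈ A
  · -- 0 ∈ A
    have hA1 : 1 ≤ A.card := Finset.card_pos.2 ⟨0, h0⟩
    have hm : ((A.erase 0).card : ℝ) = n - 1 := by
      rw [Finset.card_erase_of_mem h0, hn, Nat.cast_sub hA1, Nat.cast_one]
    rw [hm] at hmaster
    by_cases hn1 : A.card = 1
    · -- A = {0}
      have hn1' : n = 1 := by rw [hn, hn1]; norm_num
      have hS1 : (1:ℝ) ≤ S := by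
        rw [hS]
        have : (((A ×ˢ A).image fun p => p.1 + p.2)).Nonempty :=
          ⟨0 + 0, Finset.mem_image.2 ⟨(0,0), Finset.mem_product.2 ⟨h0, h0⟩, rfl⟩⟩
        exact_mod_cast Finset.card_pos.2 this
      have hP1 : (1:ℝ) ≤ P := by
        rw [hP]
        have : (((A ×ˢ A).image fun p => p.1 * p.2)).Nonempty :=
          ⟨0 * 0, Finset.mem_image.2 ⟨(0,0), Finset.mem_product.2 ⟨h0, h0⟩, rfl⟩⟩
        exact_mod_cast Finset.card_pos.2 this
      have hPS : (1:ℝ) ≤ P * S := by nlinarith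
      rw [hn1']
      have h1 : (1:ℝ) ≤ Real.sqrt (q * P * S) := by
        have h1' := Real.sqrt_le_sqrt (show (1:ℝ) ≤ q * P * S by nlinarith)
        rw [Real.sqrt_one] at h1'
        exact h1'
      have h2 : 0 ≤ P * S / q := by positivity
      norm_num
      linarith [h1, h2]
    · -- A.card ≥ 2
      have hn2 : (2:ℝ) ≤ n := by
        rw [hn]
        have : 2 ≤ A.card := by omega
        exact_mod_cast this
      have hA' : (A.erase 0).Nonempty := by
        rw [← Finset.card_pos, Finset.card_erase_of_mem h0]
        omega
      obtain ⟨a, ha⟩ := hA'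
      have haA : a ∈ A := Finset.mem_of_mem_erase ha
      have ha0 : a ≠ 0 := Finset.ne_of_mem_erase ha
      have hSn : n ≤ S := by rw [hn, hS]; exact_mod_cast le_S_card A a haA
      have hPn : n ≤ P := by rw [hn, hP]; exact_mod_cast le_P_card A a haA ha0
      obtain ⟨t, ht0, ht2⟩ : ∃ t : ℝ, 0 ≤ t ∧ t ^ 2 = q :=
        ⟨Real.sqrt q, Real.sqrt_nonneg q, Real.sq_sqrt hq0.le⟩
      have ht1 : (1:ℝ) ≤ t := by nlinarith
      obtain ⟨x, hx0, hx2⟩ : ∃ x : ℝ, 0 ≤ x ∧ x ^ 2 = S * P :=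
        ⟨Real.sqrt (S * P), Real.sqrt_nonneg _, Real.sq_sqrt (by positivity)⟩
      have hxn : n ≤ x := by nlinarith [mul_le_mul hSn hPn hn0 hS0]
      have hkey := key_sqrt n t ht1 (by linarith)
      rw [ht2] at hkey
      have hsq' : Real.sqrt (S * P * (n * (n - 1) * (q - n)))
          ≤ x * (n * t - n + n ^ 2 / q) := by
        have e : Real.sqrt (S * P * (n * (n - 1) * (q - n)))
            = x * Real.sqrt ((n ^ 2 - n) * (q - n)) := by
          rw [show S * P * (n * (n - 1) * (q - n)) = x ^ 2 * ((n ^ 2 - n) * (q - n)) by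
            rw [hx2]; ring]
          rw [Real.sqrt_mul (sq_nonneg x), Real.sqrt_sq hx0]
        rw [e]
        exact mul_le_mul_of_nonneg_left hkey hx0
      have htar : Real.sqrt (q * P * n ^ 2 * S) = n * t * x := by
        rw [show q * P * n ^ 2 * S = (n * t * x) ^ 2 by
          rw [mul_pow, mul_pow, hx2, ht2]; ring]
        exact Real.sqrt_sq (mul_nonneg (mul_nonneg hn0 ht0) hx0)
      rw [htar]
      have hdiff : (P * n ^ 2 * S / q + n * t * x)
          - (n * (n - 1) * S * P / q + x * (n * t - n + n ^ 2 / q) + n ^ 2)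
          = n * x * (x - n) / q + n * (x - n) := by
        field_simp
        linear_combination (-1) * hx2
      have h5 : 0 ≤ n * x * (x - n) / q :=
        div_nonneg (mul_nonneg (mul_nonneg hn0 hx0) (by linarith)) hq0.le
      have h6 : 0 ≤ n * (x - n) := mul_nonneg hn0 (by linarith)
      have hchain : n ^ 3 ≤ n * (n - 1) * S * P / q + x * (n * t - n + n ^ 2 / q) + n ^ 2 := by
        have : n ^ 3 = n ^ 2 * (n - 1) + n ^ 2 := by ring
        rw [this]
        linarith [hmaster, hsq']
      linarith [hchain, hdiff, h5, h6]
  · -- 0 ∉ A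
    have hm : ((A.erase 0).card : ℝ) = n := by
      rw [Finset.erase_eq_of_notMem h0, hn]
    rw [hm] at hmaster
    have hin : S * P * (n * n * (q - n)) ≤ q * P * n ^ 2 * S := by
      nlinarith [mul_nonneg (mul_nonneg hS0 hP0) (mul_nonneg hn0 hn0)]
    have h1 : Real.sqrt (S * P * (n * n * (q - n)))
        ≤ Real.sqrt (q * P * n ^ 2 * S) := Real.sqrt_le_sqrt hin
    have hm2 : n * n * S * P / q = P * n ^ 2 * S / q := by ring
    rw [hm2] at hmaster
    have hnn : n ^ 3 = n ^ 2 * n := by ring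
    rw [hnn]
    linarith [hmaster, h1]

theorem stmt13 :
    (∀ (F : Type) [Field F] [Fintype F] [DecidableEq F],
      Odd (Fintype.card F) →
      ∀ (A : Finset F),
        ((A.card : ℝ)) ^ 3
          ≤ (((A ×ˢ A).image (fun p => p.1 * p.2)).card : ℝ)
              * (A.card : ℝ) ^ 2
              * (((A ×ˢ A).image (fun p => p.1 + p.2)).card : ℝ)
              / Fintype.card F
            + Real.sqrt ((Fintype.card F : ℝ)
                * (((A ×ˢ A).image (fun p => p.1 * p.2)).card : ℝ)
                * (A.card : ℝ) ^ 2
                * (((A ×ˢ A).image (fun p => p.1 + p.2)).card : ℝ))) ∧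
    ∃ c : ℝ, 0 < c ∧
      ∀ (F : Type) [Field F] [Fintype F] [DecidableEq F],
        Odd (Fintype.card F) →
        ∀ (A : Finset F),
          c * min ((Fintype.card F : ℝ) * A.card)
              ((A.card : ℝ) ^ 4 / Fintype.card F)
            ≤ (((A ×ˢ A).image (fun p => p.1 + p.2)).card : ℝ)
              * (((A ×ˢ A).image (fun p => p.1 * p.2)).card : ℝ) := by
  constructor
  · intro F _ _ _ _ A
    exact part1 A Fintype.one_lt_card
  · refine ⟨1/4, by norm_num, ?_⟩
    intro F _ _ _ _ A
    have h := part1 (F := F) A Fintype.one_lt_card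
    set q : ℝ := (Fintype.card F : ℝ) with hq
    set n : ℝ := (A.card : ℝ) with hn
    set S : ℝ := ((((A ×ˢ A).image fun p => p.1 + p.2).card : ℝ)) with hS
    set P : ℝ := ((((A ×ˢ A).image fun p => p.1 * p.2).card : ℝ)) with hP
    have hq0 : 0 < q := by rw [hq]; exact_mod_cast Fintype.card_pos
    have hn0 : (0:ℝ) ≤ n := by rw [hn]; positivity
    have hS0 : (0:ℝ) ≤ S := by rw [hS]; positivity
    have hP0 : (0:ℝ) ≤ P := by rw [hP]; positivity
    clear_value q n S P
    by_cases hA0 : A.card = 0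
    · have hnn : n = 0 := by rw [hn, hA0]; norm_num
      rw [hnn]
      have : min (q * 0) ((0:ℝ) ^ 4 / q) = 0 := by
        norm_num
      rw [this]
      nlinarith [mul_nonneg hS0 hP0]
    · have hn1 : (1:ℝ) ≤ n := by
        rw [hn]
        have : 1 ≤ A.card := Nat.one_le_iff_ne_zero.2 hA0
        exact_mod_cast this
      have hn2 : (0:ℝ) < n ^ 2 := by positivity
      rcases le_total (Real.sqrt (q * P * n ^ 2 * S)) (P * n ^ 2 * S / q) with hc | hc
      · -- main term dominates
        have h2 : n ^ 3 ≤ 2 * (P * n ^ 2 * S) / q := by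
          have e : 2 * (P * n ^ 2 * S) / q = P * n ^ 2 * S / q + P * n ^ 2 * S / q := by ring
          rw [e]; linarith
        have h2' : n ^ 3 * q ≤ 2 * (P * n ^ 2 * S) := (le_div_iff₀ hq0).1 h2
        have h3 : q * n ≤ 2 * (S * P) := by nlinarith [h2', hn2]
        have hmin : min (q * n) (n ^ 4 / q) ≤ q * n := min_le_left _ _
        nlinarith [hmin, h3, mul_nonneg hS0 hP0]
      · -- sqrt term dominates
        have h2 : n ^ 3 ≤ 2 * Real.sqrt (q * P * n ^ 2 * S) := by linarith
        have hy0 : (0:ℝ) ≤ q * P * n ^ 2 * S := by positivity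
        have h5 := Real.sq_sqrt hy0
        have hs0 := Real.sqrt_nonneg (q * P * n ^ 2 * S)
        have h4 : n ^ 3 * n ^ 3 ≤ 4 * (q * P * n ^ 2 * S) := by
          have hn3 : (0:ℝ) ≤ n ^ 3 := by positivity
          nlinarith [mul_nonneg (by linarith : (0:ℝ) ≤ 2 * Real.sqrt (q * P * n ^ 2 * S) - n ^ 3)
            (by linarith : (0:ℝ) ≤ 2 * Real.sqrt (q * P * n ^ 2 * S) + n ^ 3), h5]
        have h6 : n ^ 4 / q ≤ 4 * (S * P) := by
          rw [div_le_iff₀ hq0]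
          nlinarith [h4, hn2]
        have hmin : min (q * n) (n ^ 4 / q) ≤ n ^ 4 / q := min_le_right _ _
        linarith [hmin, h6]
end

section
/- Suppose A ⊆ F_q satisfies min(|A+A|, |A·A|) ≤ C|A| for an absolute constant C > 0. If |A| ≫ q^{2/3} then max(|A+A|, |A·A|) ≫ q; and if |A| ≪ q^{2/3} then max(|A+A|, |A·A|) ≫ |A|³/q. -/
open Finset

namespace GaraevAux

set_option linter.unusedSectionVars false

variable {F : Type} [Field F] [Fintype F] [DecidableEq F]

lemma conj_char (ψ : AddChar F ℂ) (x : F) :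
    (starRingEnd ℂ) (ψ x) = ψ (-x) := by
  have h : 0 < ringChar F := Nat.pos_of_ne_zero (CharP.ringChar_ne_zero_of_finite F)
  rw [AddChar.starComp_apply h, AddChar.inv_apply]

lemma sum_char_mul {ψ : AddChar F ℂ} (hψ : ψ.IsPrimitive) (x : F) :
    ∑ a : F, ψ (a * x) = if x = 0 then (Fintype.card F : ℂ) else 0 := by
  rw [AddChar.sum_mulShift x hψ]
  split <;> simp

lemma parseval {ψ : AddChar F ℂ} (hψ : ψ.IsPrimitive) {b : F} (hb : b ≠ 0) (B : Finset F) :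
    ∑ a : F, ‖∑ s ∈ B, ψ (b * a * s)‖ ^ 2 = (Fintype.card F : ℝ) * B.card := by
  have key : ∑ a : F, (∑ s ∈ B, ψ (b * a * s)) * (starRingEnd ℂ) (∑ s ∈ B, ψ (b * a * s))
      = (Fintype.card F : ℂ) * B.card := by
    have h1 : ∀ a : F, (∑ s ∈ B, ψ (b * a * s)) * (starRingEnd ℂ) (∑ s ∈ B, ψ (b * a * s))
        = ∑ s ∈ B, ∑ t ∈ B, ψ (a * (b * (s - t))) := by
      intro a
      rw [map_sum, Finset.sum_mul_sum]
      refine Finset.sum_congr rfl fun s _ => Finset.sum_congr rfl fun t _ => ?_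
      rw [conj_char, ← AddChar.map_add_eq_mul]
      congr 1
      ring
    have h3 : ∀ s ∈ B, ∀ t ∈ B, ∑ a : F, ψ (a * (b * (s - t)))
        = if t = s then (Fintype.card F : ℂ) else 0 := by
      intro s _ t _
      rw [sum_char_mul hψ]
      congr 1
      simp only [mul_eq_zero, sub_eq_zero, eq_iff_iff]
      constructor
      · rintro (h | h)
        · exact absurd h hb
        · exact h.symm
      · intro h; right; exact h.symm
    have h2 : ∀ s ∈ B, ∑ t ∈ B, ∑ a : F, ψ (a * (b * (s - t))) = (Fintype.card F : ℂ) := by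
      intro s hs
      rw [Finset.sum_congr rfl (h3 s hs), Finset.sum_ite_eq' B s (fun _ => (Fintype.card F : ℂ)),
        if_pos hs]
    calc ∑ a : F, (∑ s ∈ B, ψ (b * a * s)) * (starRingEnd ℂ) (∑ s ∈ B, ψ (b * a * s))
        = ∑ a : F, ∑ s ∈ B, ∑ t ∈ B, ψ (a * (b * (s - t))) :=
          Finset.sum_congr rfl fun a _ => h1 a
      _ = ∑ s ∈ B, ∑ t ∈ B, ∑ a : F, ψ (a * (b * (s - t))) := by
          rw [Finset.sum_comm]
          exact Finset.sum_congr rfl fun s _ => Finset.sum_comm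
      _ = ∑ _s ∈ B, (Fintype.card F : ℂ) := Finset.sum_congr rfl h2
      _ = (Fintype.card F : ℂ) * B.card := by
          rw [Finset.sum_const, nsmul_eq_mul, mul_comm]
  have cast : ((∑ a : F, ‖∑ s ∈ B, ψ (b * a * s)‖ ^ 2 : ℝ) : ℂ)
      = ∑ a : F, (∑ s ∈ B, ψ (b * a * s)) * (starRingEnd ℂ) (∑ s ∈ B, ψ (b * a * s)) := by
    push_cast
    exact Finset.sum_congr rfl fun a _ => (Complex.mul_conj' _).symm
  exact_mod_cast cast.trans key


lemma bilinear {ψ : AddChar F ℂ} (hψ : ψ.IsPrimitive) {a : F} (ha : a ≠ 0) (B C : Finset F) :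
    ‖∑ p ∈ B ×ˢ C, ψ (a * (p.1 * p.2))‖
      ≤ Real.sqrt ((Fintype.card F : ℝ) * B.card * C.card) := by
  have h1 : ∑ p ∈ B ×ˢ C, ψ (a * (p.1 * p.2)) = ∑ u ∈ B, ∑ v ∈ C, ψ (a * u * v) := by
    rw [Finset.sum_product]
    refine Finset.sum_congr rfl fun u _ => Finset.sum_congr rfl fun v _ => ?_
    congr 1
    ring
  rw [h1]
  have h2 : ‖∑ u ∈ B, ∑ v ∈ C, ψ (a * u * v)‖ ≤ ∑ u ∈ B, ‖∑ v ∈ C, ψ (a * u * v)‖ :=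
    norm_sum_le _ _
  have h3 : (∑ u ∈ B, ‖∑ v ∈ C, ψ (a * u * v)‖) ^ 2
      ≤ (B.card : ℝ) * ∑ u ∈ B, ‖∑ v ∈ C, ψ (a * u * v)‖ ^ 2 := by
    simpa using sq_sum_le_card_mul_sum_sq (s := B) (f := fun u => ‖∑ v ∈ C, ψ (a * u * v)‖)
  have h4 : ∑ u ∈ B, ‖∑ v ∈ C, ψ (a * u * v)‖ ^ 2
      ≤ ∑ u : F, ‖∑ v ∈ C, ψ (a * u * v)‖ ^ 2 := by
    refine Finset.sum_le_sum_of_subset_of_nonneg (Finset.subset_univ B) ?_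
    intro i _ _
    positivity
  have h5 : ∑ u : F, ‖∑ v ∈ C, ψ (a * u * v)‖ ^ 2 = (Fintype.card F : ℝ) * C.card :=
    parseval hψ ha C
  have hnn : (0 : ℝ) ≤ ∑ u ∈ B, ‖∑ v ∈ C, ψ (a * u * v)‖ :=
    Finset.sum_nonneg fun i _ => norm_nonneg _
  have h6 : (∑ u ∈ B, ‖∑ v ∈ C, ψ (a * u * v)‖) ^ 2
      ≤ (Fintype.card F : ℝ) * B.card * C.card := by
    calc (∑ u ∈ B, ‖∑ v ∈ C, ψ (a * u * v)‖) ^ 2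
        ≤ (B.card : ℝ) * ((Fintype.card F : ℝ) * C.card) := by
          rw [← h5] at *
          exact h3.trans (by
            have := mul_le_mul_of_nonneg_left h4 (by positivity : (0:ℝ) ≤ (B.card : ℝ))
            linarith)
      _ = (Fintype.card F : ℝ) * B.card * C.card := by ring
  refine h2.trans ?_
  exact (Real.le_sqrt hnn (by positivity)).mpr h6

lemma count_bound {ψ : AddChar F ℂ} (hψ : ψ.IsPrimitive) (A' P S T : Finset F) :
    ((((A' ×ˢ P) ×ˢ (S ×ˢ T)).filter
        (fun x => x.1.1 * x.1.2 = x.2.1 + x.2.2)).card : ℝ)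
      ≤ (A'.card : ℝ) * P.card * S.card * T.card / (Fintype.card F : ℝ)
        + Real.sqrt ((Fintype.card F : ℝ) * A'.card * P.card * S.card * T.card) := by
  classical
  set G : F → ℂ := fun a => ∑ p ∈ A' ×ˢ P, ψ (a * (p.1 * p.2)) with hG
  set H : F → ℂ := fun a => ∑ s ∈ S, ψ (-1 * a * s) with hH
  set K : F → ℂ := fun a => ∑ t ∈ T, ψ (-1 * a * t) with hK
  set Nf : ℕ := (((A' ×ˢ P) ×ˢ (S ×ˢ T)).filter
      (fun x => x.1.1 * x.1.2 = x.2.1 + x.2.2)).card with hNf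
  have hQpos : (0 : ℝ) < (Fintype.card F : ℝ) := by
    exact_mod_cast Fintype.card_pos
  -- Step 1: expand the product of three sums
  have step1 : ∀ a : F, G a * H a * K a
      = ∑ x ∈ (A' ×ˢ P) ×ˢ (S ×ˢ T), ψ (a * (x.1.1 * x.1.2 - x.2.1 - x.2.2)) := by
    intro a
    have hr : ∑ x ∈ (A' ×ˢ P) ×ˢ (S ×ˢ T), ψ (a * (x.1.1 * x.1.2 - x.2.1 - x.2.2))
        = ∑ p ∈ A' ×ˢ P, ∑ s ∈ S, ∑ t ∈ T, ψ (a * (p.1 * p.2 - s - t)) := by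
      rw [Finset.sum_product]
      exact Finset.sum_congr rfl fun p _ => Finset.sum_product _ _ _
    rw [hr, hG, hH, hK]
    calc (∑ p ∈ A' ×ˢ P, ψ (a * (p.1 * p.2))) * (∑ s ∈ S, ψ (-1 * a * s))
          * (∑ t ∈ T, ψ (-1 * a * t))
        = (∑ p ∈ A' ×ˢ P, ∑ s ∈ S, ψ (a * (p.1 * p.2)) * ψ (-1 * a * s))
          * (∑ t ∈ T, ψ (-1 * a * t)) := by rw [Finset.sum_mul_sum]
      _ = ∑ p ∈ A' ×ˢ P, ∑ s ∈ S, ∑ t ∈ T,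
            ψ (a * (p.1 * p.2)) * ψ (-1 * a * s) * ψ (-1 * a * t) := by
          rw [Finset.sum_mul]
          refine Finset.sum_congr rfl fun p _ => ?_
          rw [Finset.sum_mul]
          exact Finset.sum_congr rfl fun s _ => Finset.mul_sum _ _ _
      _ = ∑ p ∈ A' ×ˢ P, ∑ s ∈ S, ∑ t ∈ T, ψ (a * (p.1 * p.2 - s - t)) := by
          refine Finset.sum_congr rfl fun p _ => Finset.sum_congr rfl fun s _ =>
            Finset.sum_congr rfl fun t _ => ?_
          rw [← AddChar.map_add_eq_mul, ← AddChar.map_add_eq_mul]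
          congr 1
          ring
  -- Step 2: key identity
  have key : ∑ a : F, G a * H a * K a = (Fintype.card F : ℂ) * Nf := by
    calc ∑ a : F, G a * H a * K a
        = ∑ a : F, ∑ x ∈ (A' ×ˢ P) ×ˢ (S ×ˢ T), ψ (a * (x.1.1 * x.1.2 - x.2.1 - x.2.2)) :=
          Finset.sum_congr rfl fun a _ => step1 a
      _ = ∑ x ∈ (A' ×ˢ P) ×ˢ (S ×ˢ T), ∑ a : F, ψ (a * (x.1.1 * x.1.2 - x.2.1 - x.2.2)) :=
          Finset.sum_comm
      _ = ∑ x ∈ (A' ×ˢ P) ×ˢ (S ×ˢ T),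
            if x.1.1 * x.1.2 = x.2.1 + x.2.2 then (Fintype.card F : ℂ) else 0 := by
          refine Finset.sum_congr rfl fun x _ => ?_
          rw [sum_char_mul hψ]
          congr 1
          rw [sub_sub, sub_eq_zero, eq_comm, eq_iff_iff]
      _ = (Fintype.card F : ℂ) * Nf := by
          rw [← Finset.sum_filter, Finset.sum_const, nsmul_eq_mul, mul_comm, hNf]
  -- values at 0
  have hG0 : G 0 = ((A'.card : ℂ) * P.card) := by
    rw [hG]
    simp [Finset.card_product]
  have hH0 : H 0 = (S.card : ℂ) := by rw [hH]; simp
  have hK0 : K 0 = (T.card : ℂ) := by rw [hK]; simp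
  set m : ℝ := (A'.card : ℝ) * P.card * S.card * T.card with hm
  have hsplit : ∑ a ∈ (Finset.univ : Finset F).erase 0, G a * H a * K a + G 0 * H 0 * K 0
      = ∑ a : F, G a * H a * K a := Finset.sum_erase_add _ _ (Finset.mem_univ 0)
  have herr : (((Fintype.card F : ℝ) * Nf - m : ℝ) : ℂ)
      = ∑ a ∈ (Finset.univ : Finset F).erase 0, G a * H a * K a := by
    rw [← hsplit] at key
    have : G 0 * H 0 * K 0 = (m : ℂ) := by
      rw [hG0, hH0, hK0, hm]; push_cast; ring
    rw [this] at key
    push_cast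
    rw [← key]
    ring
  -- bound on the error term
  set E1 : ℝ := Real.sqrt ((Fintype.card F : ℝ) * A'.card * P.card) with hE1
  have hHpar : ∑ a : F, ‖H a‖ ^ 2 = (Fintype.card F : ℝ) * S.card :=
    parseval hψ (neg_ne_zero.mpr one_ne_zero) S
  have hKpar : ∑ a : F, ‖K a‖ ^ 2 = (Fintype.card F : ℝ) * T.card :=
    parseval hψ (neg_ne_zero.mpr one_ne_zero) T
  have hCS : ∑ a : F, ‖H a‖ * ‖K a‖
      ≤ Real.sqrt ((Fintype.card F : ℝ) * S.card * ((Fintype.card F : ℝ) * T.card)) := by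
    have h1 : (∑ a : F, ‖H a‖ * ‖K a‖) ^ 2
        ≤ (∑ a : F, ‖H a‖ ^ 2) * ∑ a : F, ‖K a‖ ^ 2 :=
      Finset.sum_mul_sq_le_sq_mul_sq _ _ _
    rw [hHpar, hKpar] at h1
    exact (Real.le_sqrt (Finset.sum_nonneg fun a _ =>
      mul_nonneg (norm_nonneg _) (norm_nonneg _)) (by positivity)).mpr h1
  have herrbound : ‖∑ a ∈ (Finset.univ : Finset F).erase 0, G a * H a * K a‖
      ≤ E1 * Real.sqrt ((Fintype.card F : ℝ) * S.card * ((Fintype.card F : ℝ) * T.card)) := by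
    calc ‖∑ a ∈ (Finset.univ : Finset F).erase 0, G a * H a * K a‖
        ≤ ∑ a ∈ (Finset.univ : Finset F).erase 0, ‖G a * H a * K a‖ := norm_sum_le _ _
      _ ≤ ∑ a ∈ (Finset.univ : Finset F).erase 0, E1 * (‖H a‖ * ‖K a‖) := by
          refine Finset.sum_le_sum fun a ha => ?_
          have ha0 : a ≠ 0 := Finset.ne_of_mem_erase ha
          rw [norm_mul, norm_mul]
          have hGa : ‖G a‖ ≤ E1 := bilinear hψ ha0 A' P
          have := mul_le_mul_of_nonneg_right hGa
            (mul_nonneg (norm_nonneg (H a)) (norm_nonneg (K a)))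
          calc ‖G a‖ * ‖H a‖ * ‖K a‖ = ‖G a‖ * (‖H a‖ * ‖K a‖) := by ring
            _ ≤ E1 * (‖H a‖ * ‖K a‖) := this
      _ = E1 * ∑ a ∈ (Finset.univ : Finset F).erase 0, ‖H a‖ * ‖K a‖ := by
          rw [Finset.mul_sum]
      _ ≤ E1 * ∑ a : F, ‖H a‖ * ‖K a‖ := by
          refine mul_le_mul_of_nonneg_left ?_ (Real.sqrt_nonneg _)
          refine Finset.sum_le_sum_of_subset_of_nonneg
            (Finset.erase_subset _ _) fun a _ _ =>
            mul_nonneg (norm_nonneg _) (norm_nonneg _)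
      _ ≤ E1 * Real.sqrt ((Fintype.card F : ℝ) * S.card * ((Fintype.card F : ℝ) * T.card)) :=
          mul_le_mul_of_nonneg_left hCS (Real.sqrt_nonneg _)
  -- simplify the error product
  have hprod : E1 * Real.sqrt ((Fintype.card F : ℝ) * S.card * ((Fintype.card F : ℝ) * T.card))
      = (Fintype.card F : ℝ) * Real.sqrt ((Fintype.card F : ℝ)
          * A'.card * P.card * S.card * T.card) := by
    rw [hE1, ← Real.sqrt_mul (by positivity)]
    rw [show (Fintype.card F : ℝ) * A'.card * P.card
          * ((Fintype.card F : ℝ) * S.card * ((Fintype.card F : ℝ) * T.card))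
        = (Fintype.card F : ℝ) ^ 2
          * ((Fintype.card F : ℝ) * A'.card * P.card * S.card * T.card) by ring]
    rw [Real.sqrt_mul (by positivity), Real.sqrt_sq hQpos.le]
  -- conclude
  have hfinal : (Fintype.card F : ℝ) * Nf - m
      ≤ (Fintype.card F : ℝ) * Real.sqrt ((Fintype.card F : ℝ)
          * A'.card * P.card * S.card * T.card) := by
    have h1 : |(Fintype.card F : ℝ) * Nf - m|
        = ‖∑ a ∈ (Finset.univ : Finset F).erase 0, G a * H a * K a‖ := by
      rw [← herr, Complex.norm_real, Real.norm_eq_abs]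
    have h2 := herrbound
    rw [← h1, hprod] at h2
    exact (le_abs_self _).trans h2
  rw [← mul_le_mul_iff_right₀ hQpos]
  have hrw : (Fintype.card F : ℝ)
      * ((A'.card : ℝ) * P.card * S.card * T.card / (Fintype.card F : ℝ)
        + Real.sqrt ((Fintype.card F : ℝ) * A'.card * P.card * S.card * T.card))
      = m + (Fintype.card F : ℝ)
        * Real.sqrt ((Fintype.card F : ℝ) * A'.card * P.card * S.card * T.card) := by
    rw [hm]
    field_simp
  rw [hrw]
  linarith

set_option maxHeartbeats 1600000 in
lemma garaev (C : ℝ) (hC : 0 < C) (A : Finset F) (hA : 2 ≤ A.card)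
    (hmin : min (((A ×ˢ A).image (fun p => p.1 + p.2)).card : ℝ)
        (((A ×ˢ A).image (fun p => p.1 * p.2)).card : ℝ) ≤ C * A.card) :
    (Fintype.card F : ℝ) / (4 * C)
        ≤ max (((A ×ˢ A).image (fun p => p.1 + p.2)).card : ℝ)
            (((A ×ˢ A).image (fun p => p.1 * p.2)).card : ℝ)
      ∨ (A.card : ℝ) ^ 3 / (16 * C * (Fintype.card F : ℝ))
        ≤ max (((A ×ˢ A).image (fun p => p.1 + p.2)).card : ℝ)
            (((A ×ˢ A).image (fun p => p.1 * p.2)).card : ℝ) := by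
  classical
  set S : Finset F := (A ×ˢ A).image (fun p => p.1 + p.2) with hS
  set P : Finset F := (A ×ˢ A).image (fun p => p.1 * p.2) with hP
  set A' : Finset F := (A.erase 0).image (fun x => x⁻¹) with hA'
  set T : Finset F := A.image (fun x => -x) with hT
  set M : ℝ := max (S.card : ℝ) (P.card : ℝ) with hM
  set α : ℝ := (A.card : ℝ) with hα
  set Q : ℝ := (Fintype.card F : ℝ) with hQ
  clear_value S P A' T M α Q
  have hψ : (AddChar.FiniteField.primitiveChar_to_Complex F).IsPrimitive :=
    AddChar.FiniteField.primitiveChar_to_Complex_isPrimitive F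
  have hQpos : (0 : ℝ) < Q := by
    rw [hQ]; exact_mod_cast Fintype.card_pos
  have hα2 : (2 : ℝ) ≤ α := by rw [hα]; exact_mod_cast hA
  have hαpos : (0 : ℝ) < α := by linarith
  have hM0 : (0 : ℝ) ≤ M := by
    rw [hM]
    exact le_trans (Nat.cast_nonneg _) (le_max_left _ _)
  -- lower bound on the number of solutions via the injection
  set Nset := (((A' ×ˢ P) ×ˢ (S ×ˢ T)).filter
      (fun x => x.1.1 * x.1.2 = x.2.1 + x.2.2)) with hNset
  clear_value Nset
  have hlow : ((A.erase 0) ×ˢ (A ×ˢ A)).card ≤ Nset.card := by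
    apply Finset.card_le_card_of_injOn
      (fun x => ((x.1⁻¹, x.1 * x.2.1), (x.2.1 + x.2.2, -x.2.2)))
    · intro x hx
      rw [Finset.mem_coe, Finset.mem_product, Finset.mem_product] at hx
      have hx1 := hx.1
      have hx2 := hx.2.1
      have hx3 := hx.2.2
      have hx10 : x.1 ≠ 0 := Finset.ne_of_mem_erase hx1
      have hx1A : x.1 ∈ A := Finset.mem_of_mem_erase hx1
      rw [hNset, Finset.mem_coe, Finset.mem_filter]
      constructor
      · rw [Finset.mem_product, Finset.mem_product, Finset.mem_product]
        refine ⟨⟨?_, ?_⟩, ?_, ?_⟩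
        · show x.1⁻¹ ∈ A'
          rw [hA']
          exact Finset.mem_image_of_mem _ hx1
        · show x.1 * x.2.1 ∈ P
          rw [hP]
          exact Finset.mem_image.mpr ⟨(x.1, x.2.1),
            Finset.mem_product.mpr ⟨hx1A, hx2⟩, rfl⟩
        · show x.2.1 + x.2.2 ∈ S
          rw [hS]
          exact Finset.mem_image.mpr ⟨(x.2.1, x.2.2),
            Finset.mem_product.mpr ⟨hx2, hx3⟩, rfl⟩
        · show -x.2.2 ∈ T
          rw [hT]
          exact Finset.mem_image_of_mem _ hx3
      · show x.1⁻¹ * (x.1 * x.2.1) = (x.2.1 + x.2.2) + -x.2.2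
        rw [inv_mul_cancel_left₀ hx10, add_neg_cancel_right]
    · intro x hx y hy hxy
      rw [Finset.mem_coe, Finset.mem_product] at hx hy
      have hx10 : x.1 ≠ 0 := Finset.ne_of_mem_erase hx.1
      simp only [Prod.mk.injEq] at hxy
      obtain ⟨⟨h1, h2⟩, h3, h4⟩ := hxy
      have e1 : x.1 = y.1 := inv_injective h1
      have e3 : x.2.2 = y.2.2 := neg_injective h4
      have e2 : x.2.1 = y.2.1 := by
        rw [e1] at h2
        exact mul_left_cancel₀ (e1 ▸ hx10) h2
      exact Prod.ext e1 (Prod.ext e2 e3)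
  have hlowR : (α - 1) * (α * α) ≤ (Nset.card : ℝ) := by
    have h1 : ((A.erase 0) ×ˢ (A ×ˢ A)).card
        = (A.erase 0).card * (A.card * A.card) := by
      rw [Finset.card_product, Finset.card_product]
    have h2 : A.card - 1 ≤ (A.erase 0).card := Finset.pred_card_le_card_erase
    have h3 : (A.card - 1) * (A.card * A.card) ≤ Nset.card := by
      calc (A.card - 1) * (A.card * A.card)
          ≤ (A.erase 0).card * (A.card * A.card) :=
            Nat.mul_le_mul_right _ h2
        _ = ((A.erase 0) ×ˢ (A ×ˢ A)).card := h1.symm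
        _ ≤ Nset.card := hlow
    have h4 : ((A.card - 1) * (A.card * A.card) : ℕ) = ((α - 1) * (α * α) : ℝ) := by
      rw [hα]
      have : (1:ℕ) ≤ A.card := le_trans (by norm_num) hA
      push_cast [Nat.cast_sub this]
      ring
    calc ((α - 1) * (α * α) : ℝ) = ((A.card - 1) * (A.card * A.card) : ℕ) := h4.symm
      _ ≤ (Nset.card : ℝ) := by exact_mod_cast h3
  -- upper bound from count_bound
  have hupp : (Nset.card : ℝ)
      ≤ (A'.card : ℝ) * P.card * S.card * T.card / Q
        + Real.sqrt (Q * A'.card * P.card * S.card * T.card) := by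
    rw [hNset, hQ]
    exact count_bound hψ A' P S T
  have hA'le : (A'.card : ℝ) ≤ α := by
    rw [hα, hA']
    exact_mod_cast le_trans Finset.card_image_le (Finset.card_erase_le)
  have hTle : (T.card : ℝ) ≤ α := by
    rw [hα, hT]
    exact_mod_cast Finset.card_image_le
  have hPS : (P.card : ℝ) * S.card ≤ C * α * M := by
    have h1 : (P.card : ℝ) * S.card
        = min (S.card : ℝ) (P.card : ℝ) * max (S.card : ℝ) (P.card : ℝ) := by
      rw [min_mul_max, mul_comm]
    rw [h1, ← hM]
    exact mul_le_mul_of_nonneg_right hmin hM0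
  have hX : (A'.card : ℝ) * P.card * S.card * T.card ≤ C * α ^ 3 * M := by
    have h1 : (A'.card : ℝ) * P.card * S.card * T.card
        ≤ α * ((P.card : ℝ) * S.card) * α := by
      have hP0 : (0:ℝ) ≤ (P.card : ℝ) := Nat.cast_nonneg _
      have hS0 : (0:ℝ) ≤ (S.card : ℝ) := Nat.cast_nonneg _
      have hA'0 : (0:ℝ) ≤ (A'.card : ℝ) := Nat.cast_nonneg _
      have hT0 : (0:ℝ) ≤ (T.card : ℝ) := Nat.cast_nonneg _
      have h2 : (A'.card : ℝ) * T.card ≤ α * α := mul_le_mul hA'le hTle hT0 hαpos.le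
      nlinarith [mul_le_mul_of_nonneg_left h2 (mul_nonneg hP0 hS0)]
    calc (A'.card : ℝ) * P.card * S.card * T.card
        ≤ α * ((P.card : ℝ) * S.card) * α := h1
      _ ≤ α * (C * α * M) * α := by
          refine mul_le_mul_of_nonneg_right (mul_le_mul_of_nonneg_left hPS hαpos.le) hαpos.le
      _ = C * α ^ 3 * M := by ring
  have hmain : (α - 1) * (α * α)
      ≤ C * α ^ 3 * M / Q + Real.sqrt (Q * (C * α ^ 3 * M)) := by
    have hXQ : Q * A'.card * P.card * S.card * T.card ≤ Q * (C * α ^ 3 * M) := by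
      have : Q * A'.card * P.card * S.card * T.card
          = Q * ((A'.card : ℝ) * P.card * S.card * T.card) := by ring
      rw [this]
      exact mul_le_mul_of_nonneg_left hX hQpos.le
    calc (α - 1) * (α * α) ≤ (Nset.card : ℝ) := hlowR
      _ ≤ (A'.card : ℝ) * P.card * S.card * T.card / Q
          + Real.sqrt (Q * A'.card * P.card * S.card * T.card) := hupp
      _ ≤ C * α ^ 3 * M / Q + Real.sqrt (Q * (C * α ^ 3 * M)) :=
          add_le_add ((div_le_div_iff_of_pos_right hQpos).mpr hX) (Real.sqrt_le_sqrt hXQ)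
  -- branch on which term dominates
  by_cases hcase : α ^ 3 / 4 ≤ C * α ^ 3 * M / Q
  · left
    have h4 : α ^ 3 * Q ≤ 4 * (C * α ^ 3 * M) := by
      have := (le_div_iff₀ hQpos).mp hcase
      linarith
    rw [div_le_iff₀ (mul_pos (by norm_num : (0:ℝ) < 4) hC)]
    have h5 : α ^ 3 * Q ≤ α ^ 3 * (M * (4 * C)) := by nlinarith [h4]
    exact le_of_mul_le_mul_left h5 (pow_pos hαpos 3)
  · right
    push_neg at hcase
    have h5 : α ^ 3 / 4 ≤ Real.sqrt (Q * (C * α ^ 3 * M)) := by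
      have hcube : α ^ 3 / 2 ≤ (α - 1) * (α * α) := by
        nlinarith [mul_nonneg (by linarith : (0:ℝ) ≤ α - 2) (sq_nonneg α)]
      linarith [hmain, hcase.le]
    have hy : (0:ℝ) ≤ Q * (C * α ^ 3 * M) :=
      mul_nonneg hQpos.le (mul_nonneg (mul_nonneg hC.le (pow_nonneg hαpos.le 3)) hM0)
    have h6 : (α ^ 3 / 4) ^ 2 ≤ Q * (C * α ^ 3 * M) := by
      have h6' := pow_le_pow_left₀
        (div_nonneg (pow_nonneg hαpos.le 3) (by norm_num : (0:ℝ) ≤ (4:ℝ))) h5 2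
      rwa [Real.sq_sqrt hy] at h6'
    rw [div_le_iff₀ (mul_pos (mul_pos (by norm_num : (0:ℝ) < 16) hC) hQpos)]
    have h7 : α ^ 3 * α ^ 3 ≤ α ^ 3 * (M * (16 * C * Q)) := by nlinarith [h6]
    exact le_of_mul_le_mul_left h7 (pow_pos hαpos 3)

end GaraevAux

set_option maxHeartbeats 1600000 in
theorem stmt14 (C : ℝ) (hC : 0 < C) :
    ∃ c : ℝ, 0 < c ∧
      ∀ (F : Type) [Field F] [Fintype F] [DecidableEq F],
        Odd (Fintype.card F) →
        ∀ (A : Finset F),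
          (min ((((A ×ˢ A).image (fun p => p.1 + p.2)).card : ℝ))
              ((((A ×ˢ A).image (fun p => p.1 * p.2)).card : ℝ))
            ≤ C * A.card) →
          (((A.card : ℝ) ≥ (Fintype.card F : ℝ) ^ ((2 : ℝ) / 3) →
            max ((((A ×ˢ A).image (fun p => p.1 + p.2)).card : ℝ))
                ((((A ×ˢ A).image (fun p => p.1 * p.2)).card : ℝ))
              ≥ c * Fintype.card F) ∧
          ((A.card : ℝ) ≤ (Fintype.card F : ℝ) ^ ((2 : ℝ) / 3) →
            max ((((A ×ˢ A).image (fun p => p.1 + p.2)).card : ℝ))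
                ((((A ×ˢ A).image (fun p => p.1 * p.2)).card : ℝ))
              ≥ c * (A.card : ℝ) ^ 3 / Fintype.card F)) := by
  refine ⟨min 1 (1 / (16 * C)), lt_min one_pos (by positivity), ?_⟩
  intro F _ _ _ _hodd A hmin
  set c : ℝ := min 1 (1 / (16 * C)) with hcdef
  have hc1 : c ≤ 1 := min_le_left _ _
  have hc16 : c ≤ 1 / (16 * C) := min_le_right _ _
  have hc0 : 0 < c := lt_min one_pos (by positivity)
  clear_value c
  set Q : ℝ := (Fintype.card F : ℝ) with hQdef
  set M : ℝ := max ((((A ×ˢ A).image (fun p => p.1 + p.2)).card : ℝ))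
      ((((A ×ˢ A).image (fun p => p.1 * p.2)).card : ℝ)) with hMdef
  have hQpos : (0:ℝ) < Q := by rw [hQdef]; exact_mod_cast Fintype.card_pos
  have hQ1 : (1:ℝ) < Q := by rw [hQdef]; exact_mod_cast Fintype.one_lt_card
  have hM0 : (0:ℝ) ≤ M := by
    rw [hMdef]; exact le_trans (Nat.cast_nonneg _) (le_max_left _ _)
  have hα0 : (0:ℝ) ≤ (A.card : ℝ) := Nat.cast_nonneg _
  have hgar : 2 ≤ A.card →
      Q / (4 * C) ≤ M ∨ (A.card : ℝ) ^ 3 / (16 * C * Q) ≤ M := by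
    intro h2
    rw [hMdef, hQdef]
    exact GaraevAux.garaev C hC A h2 hmin
  have hpow : ∀ x : ℝ, 0 ≤ x → (x ^ ((2:ℝ)/3)) ^ (3:ℕ) = x ^ (2:ℕ) := by
    intro x hx
    rw [← Real.rpow_natCast (x ^ ((2:ℝ)/3)) 3, ← Real.rpow_mul hx,
      ← Real.rpow_natCast x 2]
    norm_num
  constructor
  · -- large A regime
    intro hge
    by_cases hA2 : 2 ≤ A.card
    · rcases hgar hA2 with h | h
      · have h1 : c * Q ≤ Q / (4 * C) := by
          have h2 : c ≤ 1 / (4 * C) := le_trans hc16 (by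
            rw [div_le_div_iff₀ (by positivity) (by positivity)]
            nlinarith)
          calc c * Q ≤ (1 / (4 * C)) * Q := mul_le_mul_of_nonneg_right h2 hQpos.le
            _ = Q / (4 * C) := by ring
        linarith
      · have hα3 : Q ^ 2 ≤ (A.card : ℝ) ^ 3 := by
          have h1 : (Q ^ ((2:ℝ)/3)) ^ (3:ℕ) ≤ (A.card : ℝ) ^ (3:ℕ) :=
            pow_le_pow_left₀ (Real.rpow_nonneg hQpos.le _) hge 3
          rwa [hpow Q hQpos.le] at h1
        have h3 : Q / (16 * C) ≤ (A.card : ℝ) ^ 3 / (16 * C * Q) := by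
          rw [div_le_div_iff₀ (by positivity) (by positivity)]
          nlinarith
        have h4 : c * Q ≤ Q / (16 * C) := by
          calc c * Q ≤ (1 / (16 * C)) * Q := mul_le_mul_of_nonneg_right hc16 hQpos.le
            _ = Q / (16 * C) := by ring
        linarith
    · exfalso
      push_neg at hA2
      have h1 : (A.card : ℝ) ≤ 1 := by
        have : A.card ≤ 1 := Nat.lt_succ_iff.mp hA2
        exact_mod_cast this
      have h2 : (1:ℝ) < Q ^ ((2:ℝ)/3) :=
        (Real.one_lt_rpow_iff_of_pos hQpos).mpr (Or.inl ⟨hQ1, by norm_num⟩)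
      linarith
  · -- small A regime
    intro hle
    have hα3 : (A.card : ℝ) ^ 3 ≤ Q ^ 2 := by
      have h1 : (A.card : ℝ) ^ (3:ℕ) ≤ (Q ^ ((2:ℝ)/3)) ^ (3:ℕ) :=
        pow_le_pow_left₀ hα0 hle 3
      rwa [hpow Q hQpos.le] at h1
    by_cases hA2 : 2 ≤ A.card
    · rcases hgar hA2 with h | h
      · have h1 : c * (A.card : ℝ) ^ 3 / Q ≤ Q / (4 * C) := by
          rw [div_le_div_iff₀ hQpos (by positivity)]
          have h2 : c * (A.card : ℝ) ^ 3 ≤ (1 / (16 * C)) * Q ^ 2 :=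
            mul_le_mul hc16 hα3 (by positivity) (by positivity)
          have h3 : (1 / (16 * C)) * Q ^ 2 * (4 * C) ≤ Q * Q := by
            rw [show (1 / (16 * C)) * Q ^ 2 * (4 * C) = (Q * Q) * (4 * C / (16 * C)) by ring]
            have : 4 * C / (16 * C) ≤ 1 := by
              rw [div_le_one (by positivity)]; linarith
            nlinarith [mul_pos hQpos hQpos]
          calc c * (A.card : ℝ) ^ 3 * (4 * C)
              ≤ (1 / (16 * C)) * Q ^ 2 * (4 * C) :=
                mul_le_mul_of_nonneg_right h2 (by positivity)
            _ ≤ Q * Q := h3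
        linarith
      · have h1 : c * (A.card : ℝ) ^ 3 / Q ≤ (A.card : ℝ) ^ 3 / (16 * C * Q) := by
          rw [div_le_div_iff₀ hQpos (by positivity)]
          have h2 : c * (16 * C) ≤ 1 := by
            calc c * (16 * C) ≤ (1 / (16 * C)) * (16 * C) :=
                mul_le_mul_of_nonneg_right hc16 (by positivity)
              _ = 1 := by field_simp
          nlinarith [mul_le_mul_of_nonneg_right h2
            (mul_nonneg (pow_nonneg hα0 3) hQpos.le)]
        linarith
    · push_neg at hA2
      by_cases h0 : A.card = 0
      · have : c * (A.card : ℝ) ^ 3 / Q = 0 := by rw [h0]; simp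
        rw [ge_iff_le, this]
        exact hM0
      · have hA1 : A.card = 1 := by omega
        have hAne : A.Nonempty := Finset.card_pos.mp (by omega)
        have hSne : ((A ×ˢ A).image (fun p => p.1 + p.2)).Nonempty :=
          (hAne.product hAne).image _
        have hS1 : (1:ℝ) ≤ (((A ×ˢ A).image (fun p => p.1 + p.2)).card : ℝ) := by
          exact_mod_cast Finset.card_pos.mpr hSne
        have hM1 : (1:ℝ) ≤ M := by
          rw [hMdef]
          exact le_trans hS1 (le_max_left _ _)
        have h1 : c * (A.card : ℝ) ^ 3 / Q ≤ 1 := by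
          rw [hA1]
          push_cast
          rw [one_pow, mul_one, div_le_one hQpos]
          linarith
        linarith
end

section
/- Let χ be a nontrivial additive character of F_{q^n}, n ≥ 2. Then |∑_{c : N(c) = 1} χ(c)| = |(1/(q-1)) ∑_{d ∈ F_{q^n}*} χ(d^{q-1})| < q^{n/2}, where N is the norm map from F_{q^n} to F_q. -/
open Finset

lemma card_pow_eq_one_le_field {K : Type} [Field K] [Fintype K] [DecidableEq K]
    {k : ℕ} (hk : 0 < k) :
    (univ.filter fun x : K => x ^ k = 1).card ≤ k := by
  have h2 : (univ.filter fun u : Kˣ => u ^ k = 1).card ≤ k := IsCyclic.card_pow_eq_one_le hk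
  have hsub : (univ.filter fun x : K => x ^ k = 1)
      ⊆ (univ.filter fun u : Kˣ => u ^ k = 1).image (fun u : Kˣ => (u : K)) := by
    intro x hx
    simp only [mem_filter, mem_univ, true_and] at hx
    have hx0 : x ≠ 0 := by
      rintro rfl
      rw [zero_pow hk.ne'] at hx
      exact one_ne_zero hx.symm
    refine Finset.mem_image.mpr ⟨Units.mk0 x hx0, ?_, rfl⟩
    simp only [mem_filter, mem_univ, true_and]
    exact Units.ext (by rw [Units.val_pow_eq_pow_val]; exact hx)
  exact le_trans (le_trans (Finset.card_le_card hsub) Finset.card_image_le) h2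

lemma norm_eq_pow_aux (F K : Type) [Field F] [Field K] [Fintype F] [Fintype K]
    [DecidableEq F] [DecidableEq K] [Algebra F K]
    (n : ℕ) (hcard : Fintype.card K = Fintype.card F ^ n) (c : K) :
    algebraMap F K (Algebra.norm F c) = c ^ (∑ i ∈ range n, Fintype.card F ^ i) := by
  classical
  set q := Fintype.card F with hq
  have hq2 : 2 ≤ q := Fintype.one_lt_card
  have hp : (ringChar F).Prime := CharP.char_is_prime F _
  haveI : Fact (ringChar F).Prime := ⟨hp⟩
  haveI : CharP K (ringChar F) :=
    charP_of_injective_algebraMap (algebraMap F K).injective _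
  obtain ⟨k, -, hFcard⟩ := FiniteField.card F (ringChar F)
  have hmapadd : ∀ x y : K, (x + y) ^ q = x ^ q + y ^ q := by
    intro x y; rw [hq, hFcard]; exact add_pow_char_pow x y _ _
  let frobAlg : K →ₐ[F] K :=
    { toFun := fun x => x ^ q
      map_one' := one_pow _
      map_mul' := fun x y => mul_pow x y q
      map_zero' := zero_pow (by omega)
      map_add' := hmapadd
      commutes' := fun a => by
        show (algebraMap F K a) ^ q = algebraMap F K a
        rw [← map_pow, hq, FiniteField.pow_card] }
  have hinj : Function.Injective frobAlg := frobAlg.toRingHom.injective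
  let φ : K ≃ₐ[F] K := AlgEquiv.ofBijective frobAlg ((Finite.injective_iff_bijective).mp hinj)
  have hφ : ∀ x : K, φ x = x ^ q := fun x => rfl
  have hφpow : ∀ (i : ℕ) (x : K), (φ ^ i) x = x ^ q ^ i := by
    intro i
    induction i with
    | zero => intro x; simp
    | succ i ih =>
      intro x
      rw [pow_succ', AlgEquiv.mul_apply, hφ, ih, ← pow_mul, ← pow_succ]
  have hfr : Module.finrank F K = n := by
    have h1 : Fintype.card K = q ^ Module.finrank F K := Module.card_eq_pow_finrank
    exact Nat.pow_right_injective hq2 (h1.symm.trans hcard)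
  obtain ⟨g, hg⟩ := IsCyclic.exists_generator (α := Kˣ)
  have horder : orderOf g = Fintype.card K - 1 := by
    rw [orderOf_eq_card_of_forall_mem_zpowers hg, Nat.card_eq_fintype_card, Fintype.card_units]
  have key : ∀ i j : ℕ, i ≤ j → j < n → φ ^ i = φ ^ j → i = j := by
    intro i j hij hjn hφij
    have h1 : (g : K) ^ q ^ i = (g : K) ^ q ^ j := by
      rw [← hφpow i, ← hφpow j, hφij]
    have h2 : g ^ q ^ i = g ^ q ^ j :=
      Units.ext (by rw [Units.val_pow_eq_pow_val, Units.val_pow_eq_pow_val]; exact h1)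
    have h3 : q ^ i ≡ q ^ j [MOD Fintype.card K - 1] := by
      rw [← horder]; exact (pow_eq_pow_iff_modEq).mp h2
    have h4 : (Fintype.card K - 1) ∣ q ^ j - q ^ i :=
      (Nat.modEq_iff_dvd' (Nat.pow_le_pow_right (by omega) hij)).mp h3
    have h5 : q ^ j < Fintype.card K := by
      rw [hcard]; exact Nat.pow_lt_pow_right hq2 hjn
    have h6 : q ^ i ≤ q ^ j := Nat.pow_le_pow_right (by omega) hij
    have h7 : 1 ≤ q ^ i := Nat.one_le_pow _ _ (by omega)
    have h8 : q ^ j - q ^ i = 0 := by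
      rcases Nat.eq_zero_or_pos (q ^ j - q ^ i) with h | h
      · exact h
      · have h9 := Nat.le_of_dvd h h4
        beta_reduce at *
        omega
    exact Nat.pow_right_injective hq2 (show q ^ i = q ^ j by omega)
  have hn1 : 1 ≤ n := by
    by_contra h
    have : n = 0 := by omega
    subst this
    have h0 : Fintype.card K = 1 := by simpa using hcard
    have := Fintype.one_lt_card (α := K)
    omega
  have hebij : Function.Bijective (fun i : Fin n => φ ^ (i : ℕ)) := by
    rw [Fintype.bijective_iff_injective_and_card]
    constructor
    · intro i j hij
      rcases le_total (i : ℕ) (j : ℕ) with h | h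
      · exact Fin.ext (key _ _ h j.isLt hij)
      · exact (Fin.ext (key _ _ h i.isLt hij.symm)).symm
    · rw [← Nat.card_eq_fintype_card (α := Gal(K/F)), IsGalois.card_aut_eq_finrank, hfr, Fintype.card_fin]
  calc algebraMap F K (Algebra.norm F c) = ∏ σ : K ≃ₐ[F] K, σ c :=
        Algebra.norm_eq_prod_automorphisms F c
    _ = ∏ i : Fin n, (φ ^ (i : ℕ)) c :=
        (Fintype.prod_bijective _ hebij _ _ (fun i => rfl)).symm
    _ = ∏ i : Fin n, c ^ q ^ (i : ℕ) := by simp_rw [hφpow]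
    _ = c ^ ∑ i : Fin n, q ^ (i : ℕ) := Finset.prod_pow_eq_pow_sum _ _ _
    _ = c ^ ∑ i ∈ range n, q ^ i := by rw [Fin.sum_univ_eq_sum_range]

theorem stmt16 (F K : Type) [Field F] [Field K] [Fintype F] [Fintype K]
    [DecidableEq F] [DecidableEq K] [Algebra F K]
    (n : ℕ) (hn : 2 ≤ n)
    (hcard : Fintype.card K = Fintype.card F ^ n)
    (χ : AddChar K ℂ) (hχ : χ ≠ 1) :
    ‖∑ c ∈ Finset.univ.filter (fun c : K => Algebra.norm F c = 1), χ c‖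
        = ‖(1 / ((Fintype.card F : ℂ) - 1))
            * ∑ d ∈ Finset.univ.filter (fun d : K => d ≠ 0),
                χ (d ^ (Fintype.card F - 1))‖ ∧
    ‖∑ c ∈ Finset.univ.filter (fun c : K => Algebra.norm F c = 1), χ c‖
        < Real.sqrt (Fintype.card K) := by
  classical
  set q := Fintype.card F with hqdef
  set N := Fintype.card K with hNdef
  set m := ∑ i ∈ range n, q ^ i with hmdef
  have hq2 : 2 ≤ q := Fintype.one_lt_card
  have hm1 : 0 < m := Finset.sum_pos (fun i _ => pow_pos (by omega) i)
    (nonempty_range_iff.mpr (by omega))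
  have hgeom : ∀ t : ℕ, (q - 1) * (∑ i ∈ range t, q ^ i) = q ^ t - 1 := by
    intro t
    induction t with
    | zero => simp
    | succ t ih =>
      rw [Finset.sum_range_succ, Nat.mul_add, ih, pow_succ, Nat.sub_one_mul,
        mul_comm (q ^ t) q]
      have h1 : 1 ≤ q ^ t := Nat.one_le_pow _ _ (by omega)
      have h2 : q ^ t ≤ q * q ^ t := Nat.le_mul_of_pos_left _ (by omega)
      omega
  have hN2 : 2 ≤ N := Fintype.one_lt_card
  have hqm : (q - 1) * m = N - 1 := by rw [hgeom n, ← hcard]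
  -- norm = m-th power
  have hnormiff : ∀ c : K, (Algebra.norm F c = 1) ↔ c ^ m = 1 := by
    intro c
    constructor
    · intro h
      have := norm_eq_pow_aux F K n hcard c
      rw [h, map_one] at this
      exact this.symm
    · intro h
      have h2 := norm_eq_pow_aux F K n hcard c
      rw [h] at h2
      have : algebraMap F K (Algebra.norm F c) = algebraMap F K 1 := by rw [map_one, h2]
      exact (algebraMap F K).injective this
  set Sf := univ.filter (fun c : K => c ^ m = 1) with hSfdef
  have hSrw : univ.filter (fun c : K => Algebra.norm F c = 1) = Sf :=
    Finset.filter_congr (fun c _ => by rw [hnormiff])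
  set U := univ.filter (fun d : K => d ≠ 0) with hUdef
  have hUerase : U = univ.erase (0 : K) := by
    ext x; simp [hUdef, Finset.mem_erase, and_comm]
  have hUcard : U.card = N - 1 := by
    rw [hUerase, Finset.card_erase_of_mem (mem_univ _), Finset.card_univ]
  have hSfne0 : ∀ c ∈ Sf, c ≠ 0 := by
    intro c hc
    simp only [hSfdef, mem_filter, mem_univ, true_and] at hc
    rintro rfl
    rw [zero_pow hm1.ne'] at hc
    exact one_ne_zero hc.symm
  have hSfU : Sf ⊆ U := by
    intro c hc
    simp only [hUdef, mem_filter, mem_univ, true_and]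
    exact hSfne0 c hc
  have hmaps : ∀ d ∈ U, d ^ (q - 1) ∈ Sf := by
    intro d hd
    simp only [hUdef, mem_filter, mem_univ, true_and] at hd
    simp only [hSfdef, mem_filter, mem_univ, true_and]
    rw [← pow_mul, hqm]
    exact FiniteField.pow_card_sub_one_eq_one d hd
  have hSm : Sf.card ≤ m := card_pow_eq_one_le_field hm1
  have hfib_le : ∀ c : K, (U.filter fun d => d ^ (q - 1) = c).card ≤ q - 1 := by
    intro c
    rcases Finset.eq_empty_or_nonempty (U.filter fun d => d ^ (q - 1) = c) with h | h
    · rw [h]; simp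
    · obtain ⟨d₁, hd₁⟩ := h
      simp only [mem_filter] at hd₁
      obtain ⟨hd₁U, hd₁c⟩ := hd₁
      simp only [hUdef, mem_filter, mem_univ, true_and] at hd₁U
      refine le_trans (Finset.card_le_card_of_injOn (fun d => d₁⁻¹ * d) ?_ ?_)
        (card_pow_eq_one_le_field (K := K) (by omega))
      · intro d hd
        simp only [Finset.mem_coe, mem_filter, mem_univ, true_and] at hd ⊢
        obtain ⟨hdU, hdc⟩ := hd
        rw [mul_pow, inv_pow, hd₁c, hdc, inv_mul_cancel₀]
        rw [← hd₁c]
        exact pow_ne_zero _ hd₁U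
      · intro a _ b _ hab
        exact mul_left_cancel₀ (inv_ne_zero hd₁U) hab
  have hcard_fib : U.card = ∑ c ∈ Sf, (U.filter fun d => d ^ (q - 1) = c).card :=
    Finset.card_eq_sum_card_fiberwise hmaps
  have hSfcard : Sf.card = m := by
    refine le_antisymm hSm ?_
    have h1 : N - 1 ≤ Sf.card * (q - 1) := by
      rw [← hUcard, hcard_fib]
      calc ∑ c ∈ Sf, (U.filter fun d => d ^ (q - 1) = c).card
          ≤ ∑ _c ∈ Sf, (q - 1) := Finset.sum_le_sum (fun c _ => hfib_le c)
        _ = Sf.card * (q - 1) := by rw [Finset.sum_const, smul_eq_mul]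
    have := hqm
    have hq1 : 0 < q - 1 := by omega
    nlinarith [hSm, h1, this]
  have hfib_eq : ∀ c ∈ Sf, (U.filter fun d => d ^ (q - 1) = c).card = q - 1 := by
    intro c hc
    by_contra hne
    have hlt : (U.filter fun d => d ^ (q - 1) = c).card < q - 1 :=
      lt_of_le_of_ne (hfib_le c) hne
    have h1 : ∑ c' ∈ Sf, (U.filter fun d => d ^ (q - 1) = c').card
        < ∑ _c' ∈ Sf, (q - 1) :=
      Finset.sum_lt_sum (fun c' _ => hfib_le c') ⟨c, hc, hlt⟩
    rw [Finset.sum_const, smul_eq_mul, hSfcard, mul_comm, hqm, ← hcard_fib, hUcard] at h1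
    omega
  -- The two sums are equal
  set T := ∑ c ∈ Sf, χ c with hTdef
  have hsum_eq : ∑ d ∈ U, χ (d ^ (q - 1)) = ((q : ℂ) - 1) * T := by
    rw [← Finset.sum_fiberwise_of_maps_to hmaps (fun d => χ (d ^ (q - 1)))]
    have : ∀ c ∈ Sf, ∑ d ∈ U.filter (fun d => d ^ (q - 1) = c), χ (d ^ (q - 1))
        = ((q : ℂ) - 1) * χ c := by
      intro c hc
      rw [Finset.sum_congr rfl (fun d hd => by
        simp only [mem_filter] at hd
        rw [hd.2])]
      rw [Finset.sum_const, hfib_eq c hc, nsmul_eq_mul]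
      congr 1
      have : ((q - 1 : ℕ) : ℂ) = (q : ℂ) - 1 := by
        push_cast [Nat.cast_sub (by omega : 1 ≤ q)]
        ring
      exact this
    rw [Finset.sum_congr rfl this, ← Finset.mul_sum]
  have hq1C : ((q : ℂ) - 1) ≠ 0 := by
    have h : (q : ℂ) ≠ 1 := by exact_mod_cast (by omega : (q : ℕ) ≠ 1)
    exact sub_ne_zero.mpr h
  have heq : (∑ c ∈ univ.filter (fun c : K => Algebra.norm F c = 1), χ c)
      = (1 / ((q : ℂ) - 1)) * ∑ d ∈ U, χ (d ^ (q - 1)) := by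
    rw [hSrw, hsum_eq, ← hTdef]
    field_simp
  refine ⟨by rw [heq], ?_⟩
  -- Part 2: the Weil-type bound
  rw [hSrw, ← hTdef]
  set Tf : K → ℂ := fun a => ∑ c ∈ Sf, χ (a * c) with hTfdef
  have hTa : ∀ a ∈ Sf, Tf a = T := by
    intro a ha
    have ha0 : a ≠ 0 := hSfne0 a ha
    simp only [hSfdef, mem_filter, mem_univ, true_and] at ha
    refine Finset.sum_nbij' (fun c => a * c) (fun c => a⁻¹ * c) ?_ ?_ ?_ ?_ ?_
    · intro c hc
      simp only [hSfdef, mem_filter, mem_univ, true_and] at hc ⊢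
      rw [mul_pow, ha, hc, one_mul]
    · intro c hc
      simp only [hSfdef, mem_filter, mem_univ, true_and] at hc ⊢
      rw [mul_pow, inv_pow, ha, hc, inv_one, one_mul]
    · intro c _; field_simp
    · intro c _; field_simp
    · intro c _; rfl
  have hinner : ∀ x : K, x ≠ 0 → ∑ a ∈ U, χ (a * x) = -1 := by
    intro x hx
    have h0 : ∑ a : K, χ (x * a) = 0 := by
      have hprim : AddChar.mulShift χ x ≠ 1 := AddChar.IsPrimitive.of_ne_one hχ hx
      have := AddChar.sum_eq_zero_of_ne_one hprim
      simpa [AddChar.mulShift_apply] using this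
    have h1 : ∑ a : K, χ (a * x) = 0 := by
      rw [← h0]
      exact Finset.sum_congr rfl (fun a _ => by rw [mul_comm])
    have h2 : ∑ a ∈ U, χ (a * x) + χ (0 * x) = ∑ a : K, χ (a * x) := by
      rw [hUerase]
      exact Finset.sum_erase_add univ _ (mem_univ 0)
    rw [h1] at h2
    simp only [zero_mul, AddChar.map_zero_eq_one] at h2
    linear_combination h2
  have hconj : ∀ a : K, (starRingEnd ℂ) (Tf a) = ∑ c ∈ Sf, χ (-(a * c)) := by
    intro a
    rw [hTfdef]
    rw [map_sum]
    exact Finset.sum_congr rfl (fun c _ => (AddChar.map_neg_eq_conj χ _).symm)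
  have hC : ∑ a ∈ U, (Tf a * (starRingEnd ℂ) (Tf a))
      = (m : ℂ) * ((N : ℂ) - (m : ℂ)) := by
    have hstep : ∀ a : K, Tf a * (starRingEnd ℂ) (Tf a)
        = ∑ c ∈ Sf, ∑ c' ∈ Sf, χ (a * (c - c')) := by
      intro a
      rw [hconj a, hTfdef, Finset.sum_mul_sum]
      refine Finset.sum_congr rfl fun c _ => Finset.sum_congr rfl fun c' _ => ?_
      rw [← AddChar.map_add_eq_mul]
      congr 1
      ring
    rw [Finset.sum_congr rfl (fun a _ => hstep a), Finset.sum_comm]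
    have hmain : ∀ c ∈ Sf, ∑ a ∈ U, ∑ c' ∈ Sf, χ (a * (c - c'))
        = ((N : ℂ) - (m : ℂ)) := by
      intro c hc
      rw [Finset.sum_comm]
      have hval : ∀ c' ∈ Sf, ∑ a ∈ U, χ (a * (c - c'))
          = (-1 : ℂ) + (if c' = c then (N : ℂ) else 0) := by
        intro c' _
        by_cases h : c' = c
        · subst h
          simp only [sub_self, mul_zero, AddChar.map_zero_eq_one, if_true]
          rw [Finset.sum_const, hUcard, nsmul_eq_mul]
          have hcast : ((N - 1 : ℕ) : ℂ) = (N : ℂ) - 1 := by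
            push_cast [Nat.cast_sub (by omega : 1 ≤ N)]; ring
          rw [hcast]; ring
        · rw [hinner (c - c') (sub_ne_zero.mpr (Ne.symm h)), if_neg h]
          ring
      rw [Finset.sum_congr rfl hval, Finset.sum_add_distrib, Finset.sum_const, hSfcard,
        Finset.sum_ite_eq' Sf c (fun _ => (N : ℂ)), if_pos hc, nsmul_eq_mul]
      ring
    rw [Finset.sum_congr rfl hmain, Finset.sum_const, hSfcard, nsmul_eq_mul]
  have hCreal : ∑ a ∈ U, Complex.normSq (Tf a) = (m : ℝ) * ((N : ℝ) - m) := by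
    have h2 : ((∑ a ∈ U, Complex.normSq (Tf a) : ℝ) : ℂ)
        = (((m : ℝ) * ((N : ℝ) - m)) : ℂ) := by
      push_cast
      rw [← hC]
      exact Finset.sum_congr rfl fun a _ => (Complex.mul_conj _).symm
    exact_mod_cast h2
  have hlow : (m : ℝ) * Complex.normSq T ≤ ∑ a ∈ U, Complex.normSq (Tf a) := by
    have h1 : ∑ a ∈ Sf, Complex.normSq (Tf a) = (m : ℝ) * Complex.normSq T := by
      rw [Finset.sum_congr rfl (fun a ha => by rw [hTa a ha]), Finset.sum_const, hSfcard,
        nsmul_eq_mul]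
    rw [← h1]
    exact Finset.sum_le_sum_of_subset_of_nonneg hSfU (fun a _ _ => Complex.normSq_nonneg _)
  have hm0 : (0:ℝ) < (m : ℝ) := by exact_mod_cast hm1
  have hsq : Complex.normSq T ≤ (N : ℝ) - m := by
    have h2 : (m : ℝ) * Complex.normSq T ≤ (m : ℝ) * ((N : ℝ) - m) := hlow.trans_eq hCreal
    exact (mul_le_mul_iff_right₀ hm0).mp h2
  rw [Complex.norm_def]
  apply Real.sqrt_lt_sqrt (Complex.normSq_nonneg T)
  have hm1' : (1:ℝ) ≤ (m : ℝ) := by exact_mod_cast hm1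
  linarith
end
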